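/- arXiv:2502.10751 — 8 statements merged into one kernel-verified Lean document; each statement's English description precedes it below -/
import Mathlib

section
/- Let c : ℕ → ℂ be a sequence and let r ≥ 2 be an integer. If A_{s,r}(c) = 0 for every s ≥ 0 and A_{0,r−1}(c) = 0, then A_{s,r−1}(c) = 0 for every s ≥ 0. -/
/-- The Hankel matrix `H_{s,m}(c)`: the `(m+1) × (m+1)` complex matrix whose `(i,j)` entry
is `c (s + i + j)`. Its determinant is `A_{s,m}(c)`. -/
noncomputable def hankelDet (c : ℕ → ℂ) (s m : ℕ) : ℂ :=
  (Matrix.of fun i j : Fin (m + 1) => c (s + (i : ℕ) + (j : ℕ))).det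

section Aux

open Matrix Fin

variable {R : Type*} [CommRing R]

/-- determinant of a matrix whose middle columns are standard basis vectors. -/
lemma detL1 : ∀ (n : ℕ) (P : Matrix (Fin (n+2)) (Fin (n+2)) R),
    (∀ j : Fin (n+2), j ≠ 0 → j ≠ Fin.last (n+1) → ∀ i, P i j = if i = j then 1 else 0) →
    P.det = P 0 0 * P (Fin.last (n+1)) (Fin.last (n+1))
      - P 0 (Fin.last (n+1)) * P (Fin.last (n+1)) 0 := by
  intro n
  induction n with
  | zero =>
    intro P _
    rw [det_fin_two]
    norm_num [Fin.last]
  | succ n ih =>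
    intro P hP
    have h10 : (1 : Fin (n+3)) ≠ 0 := by simp [Fin.ext_iff]
    have h1l : (1 : Fin (n+3)) ≠ Fin.last (n+2) := by
      simp [Fin.ext_iff, Fin.last]
    have hcol := hP 1 h10 h1l
    have hexp := det_succ_column P 1
    rw [Finset.sum_eq_single (1 : Fin (n+3))] at hexp
    · rw [hcol 1, if_pos rfl] at hexp
      have hsgn : ((-1 : R)) ^ ((1 : Fin (n+3)) + (1 : Fin (n+3)) : ℕ) = 1 := by
        norm_num
      set f := (1 : Fin (n+3)).succAbove with hf
      have hf0 : f 0 = 0 := Fin.one_succAbove_zero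
      have hfl : f (Fin.last (n+1)) = Fin.last (n+2) := by
        simp [hf, Fin.succAbove, Fin.lt_def, Fin.last]
      have hfinj : Function.Injective f := Fin.succAbove_right_injective
      have hQ : ∀ j : Fin (n+2), j ≠ 0 → j ≠ Fin.last (n+1) →
          ∀ i, (P.submatrix f f) i j = if i = j then 1 else 0 := by
        intro j hj0 hjl i
        have hne0 : f j ≠ 0 := fun h => hj0 (hfinj (h.trans hf0.symm))
        have hnel : f j ≠ Fin.last (n+2) := fun h => hjl (hfinj (h.trans hfl.symm))
        rw [submatrix_apply, hP (f j) hne0 hnel (f i)]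
        by_cases h : i = j
        · subst h; simp
        · rw [if_neg (fun hh => h (hfinj hh)), if_neg h]
      have hQdet := ih (P.submatrix f f) hQ
      rw [submatrix_apply, submatrix_apply, submatrix_apply, submatrix_apply,
        hf0, hfl] at hQdet
      rw [hexp, hsgn, one_mul, one_mul, hQdet]
    · intro i _ hi
      rw [hcol i, if_neg hi, mul_zero, zero_mul]
    · intro h; exact absurd (Finset.mem_univ _) h

/-- determinant of a matrix whose first and last columns are `d` times basis vectors. -/
lemma detL2 (n : ℕ) (B : Matrix (Fin (n+2)) (Fin (n+2)) R) (d : R)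
    (h0 : ∀ i, B i 0 = if i = 0 then d else 0)
    (hl : ∀ i, B i (Fin.last (n+1)) = if i = Fin.last (n+1) then d else 0) :
    B.det = d * (d * (B.submatrix (fun i : Fin n => i.castSucc.succ)
      (fun i : Fin n => i.castSucc.succ)).det) := by
  have hexp := det_succ_column_zero B
  rw [Finset.sum_eq_single (0 : Fin (n+2))] at hexp
  · rw [h0 0, if_pos rfl] at hexp
    set B1 := B.submatrix (Fin.succ : Fin (n+1) → Fin (n+2)) Fin.succ with hB1
    have hsl : (Fin.last n).succ = Fin.last (n+1) := Fin.succ_last n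
    have hcol : ∀ i, B1 i (Fin.last n) = if i = Fin.last n then d else 0 := by
      intro i
      rw [hB1, submatrix_apply, hsl, hl]
      by_cases h : i = Fin.last n
      · subst h; rw [if_pos rfl, if_pos (by rw [hsl])]
      · rw [if_neg, if_neg h]
        exact fun hh => h (Fin.succ_injective _ (hh.trans hsl.symm))
    have hexp2 := det_succ_column B1 (Fin.last n)
    rw [Finset.sum_eq_single (Fin.last n)] at hexp2
    · rw [hcol (Fin.last n), if_pos rfl] at hexp2
      have hsgn : ((-1 : R)) ^ ((Fin.last n : ℕ) + (Fin.last n : ℕ)) = 1 :=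
        Even.neg_one_pow ⟨n, rfl⟩
      rw [hsgn, one_mul] at hexp2
      have hsub : B1.submatrix (Fin.last n).succAbove (Fin.last n).succAbove
          = B.submatrix (fun i : Fin n => i.castSucc.succ)
            (fun i : Fin n => i.castSucc.succ) := by
        rw [Fin.succAbove_last, hB1, submatrix_submatrix]
        rfl
      rw [hexp, Fin.succAbove_zero, ← hB1, hexp2, hsub]
      norm_num
    · intro i _ hi
      rw [hcol i, if_neg hi, mul_zero, zero_mul]
    · intro h; exact absurd (Finset.mem_univ _) h
  · intro i _ hi
    rw [h0 i, if_neg hi, mul_zero, zero_mul]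
  · intro h; exact absurd (Finset.mem_univ _) h

lemma keymul (n : ℕ) (A : Matrix (Fin (n+2)) (Fin (n+2)) R) :
    A.det * (A.adjugate 0 0 * A.adjugate (Fin.last (n+1)) (Fin.last (n+1))
      - A.adjugate 0 (Fin.last (n+1)) * A.adjugate (Fin.last (n+1)) 0)
    = A.det * (A.det * (A.submatrix (fun i : Fin n => i.castSucc.succ)
        (fun i : Fin n => i.castSucc.succ)).det) := by
  classical
  set N : Matrix (Fin (n+2)) (Fin (n+2)) R := Matrix.of (fun i j =>
    if j = 0 then A.adjugate i 0 else if j = Fin.last (n+1) then A.adjugate i (Fin.last (n+1))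
    else if i = j then 1 else 0) with hN
  have hl0 : (Fin.last (n+1)) ≠ (0 : Fin (n+2)) := by simp [Fin.ext_iff]
  have hdetN : N.det = A.adjugate 0 0 * A.adjugate (Fin.last (n+1)) (Fin.last (n+1))
      - A.adjugate 0 (Fin.last (n+1)) * A.adjugate (Fin.last (n+1)) 0 := by
    have h := detL1 n N (fun j hj0 hjl i => by simp [hN, hj0, hjl])
    rw [h]
    simp [hN, hl0]
  have hAN0 : ∀ i, (A * N) i 0 = if i = 0 then A.det else 0 := by
    intro i
    have h : (A * N) i 0 = (A * A.adjugate) i 0 := by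
      simp [Matrix.mul_apply, hN]
    rw [h, Matrix.mul_adjugate]
    simp [Matrix.one_apply]
  have hANl : ∀ i, (A * N) i (Fin.last (n+1)) = if i = Fin.last (n+1) then A.det else 0 := by
    intro i
    have h : (A * N) i (Fin.last (n+1)) = (A * A.adjugate) i (Fin.last (n+1)) := by
      simp [Matrix.mul_apply, hN, hl0]
    rw [h, Matrix.mul_adjugate]
    simp [Matrix.one_apply]
  have hANmid : ∀ j : Fin (n+2), j ≠ 0 → j ≠ Fin.last (n+1) → ∀ i, (A * N) i j = A i j := by
    intro j hj0 hjl i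
    rw [Matrix.mul_apply]
    simp [hN, hj0, hjl, mul_ite]
  have h2 := detL2 n (A * N) A.det hAN0 hANl
  have hsub : (A * N).submatrix (fun i : Fin n => i.castSucc.succ)
      (fun i : Fin n => i.castSucc.succ)
      = A.submatrix (fun i : Fin n => i.castSucc.succ) (fun i : Fin n => i.castSucc.succ) := by
    ext i j
    have hj0 : (j.castSucc.succ : Fin (n+2)) ≠ 0 := Fin.succ_ne_zero _
    have hjl : (j.castSucc.succ : Fin (n+2)) ≠ Fin.last (n+1) := fun h =>
      (Fin.castSucc_lt_last j).ne (Fin.succ_injective _ (h.trans (Fin.succ_last n).symm))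
    simp [submatrix_apply, hANmid _ hj0 hjl]
  rw [← hdetN, ← Matrix.det_mul, h2, hsub]

lemma DJ (n : ℕ) (A : Matrix (Fin (n+2)) (Fin (n+2)) ℂ) :
    A.adjugate 0 0 * A.adjugate (Fin.last (n+1)) (Fin.last (n+1))
      - A.adjugate 0 (Fin.last (n+1)) * A.adjugate (Fin.last (n+1)) 0
    = A.det * (A.submatrix (fun i : Fin n => i.castSucc.succ)
        (fun i : Fin n => i.castSucc.succ)).det := by
  set g : Matrix (Fin (n+2)) (Fin (n+2)) (Polynomial ℂ) :=
    A.map Polynomial.C + (Polynomial.X : Polynomial ℂ) • 1 with hg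
  have hreg : IsLeftRegular g.det := by
    refine (Polynomial.Monic.isRegular ?_).left
    simp only [hg, Polynomial.Monic.def, ← Polynomial.leadingCoeff_det_X_one_add_C A, add_comm]
  have hcancel := hreg (keymul n g)
  set f := Polynomial.evalRingHom (0 : ℂ) with hfdef
  have hmap : f.mapMatrix g = A := by
    ext i j
    simp [hg, hfdef, Matrix.one_apply, apply_ite (Polynomial.eval (0:ℂ))]
  have := congrArg f hcancel
  simp only [map_sub, _root_.map_mul] at this
  have hadj : ∀ i j, f (g.adjugate i j) = A.adjugate i j := by
    intro i j
    have h := congrFun (congrFun (congrArg Matrix.of ((RingHom.map_adjugate f g).trans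
      (by rw [hmap]))) i) j
    exact h
  have hdet : f g.det = A.det := by rw [RingHom.map_det, hmap]
  have hsub : f (g.submatrix (fun i : Fin n => i.castSucc.succ)
      (fun i : Fin n => i.castSucc.succ)).det
      = (A.submatrix (fun i : Fin n => i.castSucc.succ)
        (fun i : Fin n => i.castSucc.succ)).det := by
    rw [RingHom.map_det]
    congr 1
    ext i j
    rw [← hmap]
    rfl
  rw [hadj, hadj, hadj, hadj, hdet, hsub] at this
  exact this


lemma hankel_condensation (c : ℕ → ℂ) (s m : ℕ) :
    hankelDet c s (m+1) * hankelDet c (s+2) (m+1) - hankelDet c (s+1) (m+1) ^ 2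
    = hankelDet c s (m+2) * hankelDet c (s+2) m := by
  set A : Matrix (Fin (m+3)) (Fin (m+3)) ℂ :=
    Matrix.of (fun i j : Fin (m+3) => c (s + (i:ℕ) + (j:ℕ))) with hA
  have hDJ := DJ (m+1) A
  have h00 : A.adjugate 0 0 = hankelDet c (s+2) (m+1) := by
    rw [adjugate_fin_succ_eq_det_submatrix]
    simp only [Fin.val_zero, add_zero, pow_zero, one_mul, Fin.succAbove_zero]
    unfold hankelDet
    congr 1
    ext i j
    simp only [submatrix_apply, hA, of_apply, Fin.val_succ]
    congr 1
    omega
  have hll : A.adjugate (Fin.last (m+2)) (Fin.last (m+2)) = hankelDet c s (m+1) := by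
    rw [adjugate_fin_succ_eq_det_submatrix]
    rw [Fin.succAbove_last]
    have : ((-1 : ℂ)) ^ ((Fin.last (m+2) : ℕ) + (Fin.last (m+2) : ℕ)) = 1 :=
      Even.neg_one_pow ⟨m+2, rfl⟩
    rw [this, one_mul]
    unfold hankelDet
    congr 1
  have h0l : A.adjugate 0 (Fin.last (m+2))
      = (-1 : ℂ) ^ (m+2) * hankelDet c (s+1) (m+1) := by
    rw [adjugate_fin_succ_eq_det_submatrix]
    rw [Fin.succAbove_last, Fin.succAbove_zero]
    simp only [Fin.val_zero, Fin.val_last, add_zero]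
    congr 1
    unfold hankelDet
    congr 1
    ext i j
    simp only [submatrix_apply, hA, of_apply, Fin.coe_castSucc, Fin.val_succ]
    congr 1
    omega
  have hl0 : A.adjugate (Fin.last (m+2)) 0
      = (-1 : ℂ) ^ (m+2) * hankelDet c (s+1) (m+1) := by
    rw [adjugate_fin_succ_eq_det_submatrix]
    rw [Fin.succAbove_last, Fin.succAbove_zero]
    simp only [Fin.val_zero, Fin.val_last, zero_add]
    congr 1
    unfold hankelDet
    congr 1
    ext i j
    simp only [submatrix_apply, hA, of_apply, Fin.coe_castSucc, Fin.val_succ]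
    congr 1
    omega
  have hdet : A.det = hankelDet c s (m+2) := rfl
  have hint : (A.submatrix (fun i : Fin (m+1) => i.castSucc.succ)
      (fun i : Fin (m+1) => i.castSucc.succ)).det = hankelDet c (s+2) m := by
    unfold hankelDet
    congr 1
    ext i j
    simp only [submatrix_apply, hA, of_apply, Fin.val_succ, Fin.coe_castSucc]
    congr 1
    omega
  rw [h00, hll, h0l, hl0, hdet, hint] at hDJ
  have hsgn : ((-1 : ℂ) ^ (m+2)) * ((-1 : ℂ) ^ (m+2)) = 1 := by
    rw [← pow_add]
    exact Even.neg_one_pow ⟨m+2, by ring⟩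
  linear_combination hDJ + (hankelDet c (s+1) (m+1))^2 * hsgn

end Aux

/-- If `A_{s,r}(c) = 0` for every `s ≥ 0` and `A_{0,r−1}(c) = 0`, then
`A_{s,r−1}(c) = 0` for every `s ≥ 0` (here `r ≥ 2`). -/
theorem hankel_det_step_down (c : ℕ → ℂ) (r : ℕ) (hr : 2 ≤ r)
    (h1 : ∀ s : ℕ, hankelDet c s r = 0) (h2 : hankelDet c 0 (r - 1) = 0) :
    ∀ s : ℕ, hankelDet c s (r - 1) = 0 := by
  obtain ⟨m, rfl⟩ : ∃ m, r = m + 2 := ⟨r - 2, by omega⟩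
  have hr1 : m + 2 - 1 = m + 1 := rfl
  rw [hr1] at h2 ⊢
  intro s
  induction s with
  | zero => exact h2
  | succ s ih =>
    have rel := hankel_condensation c s m
    rw [h1 s, ih, zero_mul] at rel
    have hsq : hankelDet c (s+1) (m+1) ^ 2 = 0 := by linear_combination -rel
    exact pow_eq_zero_iff two_ne_zero |>.mp hsq
end

section
/- Let c : ℕ → ℂ be a sequence and r ≥ 1 an integer. Suppose that A_{s,r}(c) = 0 for every s ≥ 0 and that A_{0,r−1}(c) ≠ 0. Then there exist complex numbers b_0, …, b_r with b_r ≠ 0 such that ∑_{j=0}^{r} b_j·c_{s+j} = 0 for every s ≥ 0. -/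
namespace HankelProof

open Matrix


lemma ker_to {c : ℕ → ℂ} {s n : ℕ} (h : hankelDet c s n = 0) :
    ∃ w : Fin (n + 1) → ℂ, w ≠ 0 ∧
      ∀ i : Fin (n + 1), ∑ j : Fin (n + 1), w j * c (s + (i : ℕ) + (j : ℕ)) = 0 := by
  obtain ⟨w, hw0, hw⟩ := (Matrix.exists_mulVec_eq_zero_iff).2 h
  refine ⟨w, hw0, fun i => ?_⟩
  have h2 := congrFun hw i
  simp only [Matrix.mulVec, dotProduct, Matrix.of_apply, Pi.zero_apply] at h2
  calc ∑ j : Fin (n+1), w j * c (s + (i:ℕ) + (j:ℕ))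
      = ∑ j : Fin (n+1), c (s + (i:ℕ) + (j:ℕ)) * w j :=
        Finset.sum_congr rfl fun j _ => mul_comm _ _
    _ = 0 := h2

lemma ker_from {c : ℕ → ℂ} {s n : ℕ} {w : Fin (n + 1) → ℂ} (hw0 : w ≠ 0)
    (hw : ∀ i : Fin (n + 1), ∑ j : Fin (n + 1), w j * c (s + (i : ℕ) + (j : ℕ)) = 0) :
    hankelDet c s n = 0 := by
  apply (Matrix.exists_mulVec_eq_zero_iff).1
  refine ⟨w, hw0, funext fun i => ?_⟩
  simp only [Matrix.mulVec, dotProduct, Matrix.of_apply, Pi.zero_apply]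
  calc ∑ j : Fin (n+1), c (s + (i:ℕ) + (j:ℕ)) * w j
      = ∑ j : Fin (n+1), w j * c (s + (i:ℕ) + (j:ℕ)) :=
        Finset.sum_congr rfl fun j _ => mul_comm _ _
    _ = 0 := hw i

/-- Construct the recurrence coefficients from an invertible Hankel matrix. -/
lemma construct {c : ℕ → ℂ} {σ m : ℕ} (h : hankelDet c σ m ≠ 0) :
    ∃ a : Fin (m + 1) → ℂ,
      ∀ i : Fin (m + 1), c (σ + (i : ℕ) + (m + 1)) =
        ∑ j : Fin (m + 1), a j * c (σ + (i : ℕ) + (j : ℕ)) := by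
  have hdet : IsUnit (Matrix.of fun i j : Fin (m + 1) => c (σ + (i : ℕ) + (j : ℕ))).det :=
    isUnit_iff_ne_zero.mpr h
  set M : Matrix (Fin (m + 1)) (Fin (m + 1)) ℂ :=
    Matrix.of fun i j : Fin (m + 1) => c (σ + (i : ℕ) + (j : ℕ)) with hMdef
  set v : Fin (m + 1) → ℂ := fun i => c (σ + (i : ℕ) + (m + 1)) with hvdef
  refine ⟨M⁻¹ *ᵥ v, fun i => ?_⟩
  have h1 : M *ᵥ (M⁻¹ *ᵥ v) = v := by
    rw [Matrix.mulVec_mulVec, Matrix.mul_nonsing_inv M hdet, Matrix.one_mulVec]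
  have h2 := congrFun h1 i
  simp only [Matrix.mulVec, dotProduct, hMdef, Matrix.of_apply, hvdef] at h2
  rw [← h2]
  exact Finset.sum_congr rfl fun j _ => mul_comm _ _

/-- The extension step: if the defect vanishes on a window of length `m+1` and the
bordered Hankel determinant vanishes while the core is nonsingular, the defect vanishes
at the next point. -/
lemma step {c : ℕ → ℂ} {m u0 : ℕ} {a : Fin (m + 1) → ℂ}
    (h0 : hankelDet c u0 (m + 1) = 0) (h1 : hankelDet c u0 m ≠ 0)
    (hd : ∀ i : Fin (m + 1), c (u0 + (i : ℕ) + (m + 1)) =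
      ∑ j : Fin (m + 1), a j * c (u0 + (i : ℕ) + (j : ℕ))) :
    c (u0 + (m + 1) + (m + 1)) = ∑ j : Fin (m + 1), a j * c (u0 + (m + 1) + (j : ℕ)) := by
  obtain ⟨w, hw0, hw⟩ := ker_to h0
  have hwlast : w (Fin.last (m + 1)) ≠ 0 := by
    intro hend
    have hx : (fun j : Fin (m + 1) => w j.castSucc) ≠ 0 := by
      intro hx
      apply hw0
      funext j
      refine Fin.lastCases hend (fun j' => ?_) j
      exact congrFun hx j'
    refine h1 (ker_from hx fun i => ?_)
    have h2 := hw i.castSucc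
    rw [Fin.sum_univ_castSucc] at h2
    simpa [hend, Fin.coe_castSucc, Fin.val_last] using h2
  have hy : ∀ j : Fin (m + 1), w j.castSucc = -(w (Fin.last (m + 1)) * a j) := by
    have hker : ∀ i : Fin (m + 1),
        ∑ j : Fin (m + 1), (w j.castSucc + w (Fin.last (m + 1)) * a j) *
          c (u0 + (i : ℕ) + (j : ℕ)) = 0 := by
      intro i
      have h2 := hw i.castSucc
      rw [Fin.sum_univ_castSucc] at h2
      simp only [Fin.coe_castSucc, Fin.val_last] at h2
      rw [hd i, Finset.mul_sum] at h2
      calc ∑ j : Fin (m+1), (w j.castSucc + w (Fin.last (m+1)) * a j) * c (u0 + (i:ℕ) + (j:ℕ))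
          = ∑ j : Fin (m+1), (w j.castSucc * c (u0 + (i:ℕ) + (j:ℕ)) +
              w (Fin.last (m+1)) * (a j * c (u0 + (i:ℕ) + (j:ℕ)))) :=
            Finset.sum_congr rfl fun j _ => by ring
        _ = (∑ j : Fin (m+1), w j.castSucc * c (u0 + (i:ℕ) + (j:ℕ))) +
              ∑ j : Fin (m+1), w (Fin.last (m+1)) * (a j * c (u0 + (i:ℕ) + (j:ℕ))) :=
            Finset.sum_add_distrib
        _ = 0 := h2
    intro j
    have hy0 : (fun j : Fin (m + 1) => w j.castSucc + w (Fin.last (m + 1)) * a j) = 0 := by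
      by_contra hne
      exact h1 (ker_from hne hker)
    have := congrFun hy0 j
    simp only [Pi.zero_apply] at this
    linear_combination this
  have h3 := hw (Fin.last (m + 1))
  rw [Fin.sum_univ_castSucc] at h3
  simp only [Fin.coe_castSucc, Fin.val_last] at h3
  have h4 : ∑ j : Fin (m + 1), w j.castSucc * c (u0 + (m + 1) + (j : ℕ))
      = -(w (Fin.last (m + 1)) * ∑ j : Fin (m + 1), a j * c (u0 + (m + 1) + (j : ℕ))) := by
    rw [Finset.mul_sum, ← Finset.sum_neg_distrib]
    exact Finset.sum_congr rfl fun j _ => by rw [hy j]; ring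
  rw [h4] at h3
  have h5 : w (Fin.last (m + 1)) *
      (c (u0 + (m + 1) + (m + 1)) - ∑ j : Fin (m + 1), a j * c (u0 + (m + 1) + (j : ℕ))) = 0 := by
    linear_combination h3
  rcases mul_eq_zero.mp h5 with h6 | h6
  · exact absurd h6 hwlast
  · linear_combination h6

/-- Cascade: once an order-`m+1` leading minor degenerates (while the bordered
order-`m+2` minor also vanishes), the next shifted order-`m+1` minor vanishes too. -/
lemma cascade {c : ℕ → ℂ} {m s : ℕ}
    (h0 : hankelDet c s (m + 1) = 0) (h1 : hankelDet c s m = 0) :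
    hankelDet c (s + 1) m = 0 := by
  obtain ⟨w, hw0, hw⟩ := ker_to h0
  obtain ⟨u, hu0, hu⟩ := ker_to h1
  by_cases hwm : w (Fin.last (m + 1)) = 0
  · -- the truncation of w is a kernel vector for the shifted matrix
    have hx0 : (fun j : Fin (m + 1) => w j.castSucc) ≠ 0 := by
      intro hx
      apply hw0
      funext j
      refine Fin.lastCases hwm (fun j' => congrFun hx j') j
    refine ker_from hx0 fun i => ?_
    have h2 := hw i.succ
    rw [Fin.sum_univ_castSucc] at h2
    simp only [Fin.coe_castSucc, Fin.val_last, Fin.val_succ, hwm, zero_mul, add_zero] at h2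
    calc ∑ j : Fin (m+1), w j.castSucc * c (s + 1 + (i:ℕ) + (j:ℕ))
        = ∑ j : Fin (m+1), w j.castSucc * c (s + ((i:ℕ) + 1) + (j:ℕ)) :=
          Finset.sum_congr rfl fun j _ => by rw [show s + 1 + (i:ℕ) = s + ((i:ℕ)+1) by omega]
      _ = 0 := h2
  · -- double counting shows the boundary value vanishes, making u a kernel vector
    have hsval : ∑ j : Fin (m + 1), u j * c (s + (m + 1) + (j : ℕ)) = 0 := by
      have hS1 : ∑ i : Fin (m + 2), w i * (∑ j : Fin (m + 1), u j * c (s + (i:ℕ) + (j:ℕ)))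
          = w (Fin.last (m + 1)) * ∑ j : Fin (m + 1), u j * c (s + (m + 1) + (j:ℕ)) := by
        rw [Fin.sum_univ_castSucc]
        simp only [Fin.coe_castSucc, Fin.val_last]
        rw [Finset.sum_eq_zero (fun i' _ => by rw [hu i', mul_zero]), zero_add]
      have hS2 : ∑ i : Fin (m + 2), w i * (∑ j : Fin (m + 1), u j * c (s + (i:ℕ) + (j:ℕ)))
          = 0 := by
        calc ∑ i : Fin (m+2), w i * (∑ j : Fin (m+1), u j * c (s + (i:ℕ) + (j:ℕ)))
            = ∑ i : Fin (m+2), ∑ j : Fin (m+1), u j * (w i * c (s + (j:ℕ) + (i:ℕ))) := by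
              refine Finset.sum_congr rfl fun i _ => ?_
              rw [Finset.mul_sum]
              refine Finset.sum_congr rfl fun j _ => ?_
              rw [show s + (i:ℕ) + (j:ℕ) = s + (j:ℕ) + (i:ℕ) by omega]; ring
          _ = ∑ j : Fin (m+1), ∑ i : Fin (m+2), u j * (w i * c (s + (j:ℕ) + (i:ℕ))) :=
              Finset.sum_comm
          _ = ∑ j : Fin (m+1), u j * ∑ i : Fin (m+2), w i * c (s + (j:ℕ) + (i:ℕ)) := by
              refine Finset.sum_congr rfl fun j _ => ?_
              rw [Finset.mul_sum]
          _ = 0 := by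
              refine Finset.sum_eq_zero fun j _ => ?_
              have h3 := hw (Fin.castLE (by omega) j)
              simp only [Fin.coe_castLE] at h3
              rw [h3, mul_zero]
      rw [hS1] at hS2
      exact (mul_eq_zero.mp hS2).resolve_left hwm
    refine ker_from hu0 fun i => ?_
    refine Fin.lastCases ?_ (fun i' => ?_) i
    · calc ∑ j : Fin (m+1), u j * c (s + 1 + ((Fin.last m : Fin (m+1)):ℕ) + (j:ℕ))
          = ∑ j : Fin (m+1), u j * c (s + (m + 1) + (j:ℕ)) := by
            refine Finset.sum_congr rfl fun j _ => ?_
            rw [show s + 1 + ((Fin.last m : Fin (m+1)):ℕ) = s + (m+1) by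
              simp [Fin.val_last]; omega]
      _ = 0 := hsval
    · have h2 := hu i'.succ
      simp only [Fin.val_succ] at h2
      calc ∑ j : Fin (m+1), u j * c (s + 1 + ((i'.castSucc : Fin (m+1)):ℕ) + (j:ℕ))
          = ∑ j : Fin (m+1), u j * c (s + ((i':ℕ) + 1) + (j:ℕ)) := by
            refine Finset.sum_congr rfl fun j _ => ?_
            rw [show s + 1 + ((i'.castSucc : Fin (m+1)):ℕ) = s + ((i':ℕ)+1) by
              simp [Fin.coe_castSucc]; omega]
        _ = 0 := h2

/-- Extend the recurrence from the initial window as long as the core minors stay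
nonsingular. -/
lemma extend {c : ℕ → ℂ} {m σ T : ℕ} {a : Fin (m + 1) → ℂ}
    (h : ∀ s, σ ≤ s → hankelDet c s (m + 1) = 0)
    (hne : ∀ t, σ ≤ t → t < T → hankelDet c t m ≠ 0)
    (base : ∀ i : Fin (m + 1), c (σ + (i : ℕ) + (m + 1)) =
      ∑ j : Fin (m + 1), a j * c (σ + (i : ℕ) + (j : ℕ))) :
    ∀ u, σ ≤ u → u ≤ T + m → c (u + (m + 1)) = ∑ j : Fin (m + 1), a j * c (u + (j : ℕ)) := by
  intro u
  induction u using Nat.strong_induction_on with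
  | _ u IH =>
    intro hσu huT
    rcases le_or_gt u (σ + m) with hle | hgt
    · have hb : c (σ + (u - σ) + (m + 1)) =
          ∑ j : Fin (m + 1), a j * c (σ + (u - σ) + (j : ℕ)) := base ⟨u - σ, by omega⟩
      rw [show σ + (u - σ) = u by omega] at hb
      exact hb
    · have hstep := step (h (u - (m + 1)) (by omega))
        (hne (u - (m + 1)) (by omega) (by omega))
        (fun i => by
          have hi := i.isLt
          have := IH (u - (m + 1) + (i : ℕ)) (by omega) (by omega) (by omega)
          rwa [show u - (m + 1) + (i : ℕ) = u - (m + 1) + (i : ℕ) from rfl] at this)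
      rwa [show u - (m + 1) + (m + 1) = u by omega] at hstep

/-- Turn a full recurrence into the required coefficient vector. -/
lemma assemble {c : ℕ → ℂ} {m σ : ℕ} {a : Fin (m + 1) → ℂ}
    (hfin : ∀ u, σ ≤ u → c (u + (m + 1)) = ∑ j : Fin (m + 1), a j * c (u + (j : ℕ))) :
    ∃ b : Fin (m + 2) → ℂ, b (Fin.last (m + 1)) ≠ 0 ∧
      ∀ s, σ ≤ s → ∑ j : Fin (m + 2), b j * c (s + (j : ℕ)) = 0 := by
  refine ⟨Fin.snoc a (-1), by simp, fun s hs => ?_⟩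
  rw [Fin.sum_univ_castSucc]
  simp only [Fin.snoc_castSucc, Fin.snoc_last, Fin.coe_castSucc, Fin.val_last]
  rw [hfin s hs]
  ring

/-- The main induction: if all order-`m+1` contiguous Hankel minors vanish from `σ` on,
there is an order-`m` linear recurrence with nonzero top coefficient valid from `σ` on. -/
lemma key (c : ℕ → ℂ) : ∀ m σ : ℕ, (∀ s, σ ≤ s → hankelDet c s m = 0) →
    ∃ b : Fin (m + 1) → ℂ, b (Fin.last m) ≠ 0 ∧
      ∀ s, σ ≤ s → ∑ j : Fin (m + 1), b j * c (s + (j : ℕ)) = 0 := by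
  intro m
  induction m with
  | zero =>
    intro σ h
    refine ⟨fun _ => 1, one_ne_zero, fun s hs => ?_⟩
    have h0 := h s hs
    unfold hankelDet at h0
    rw [Matrix.det_fin_one] at h0
    simpa using h0
  | succ m ih =>
    intro σ h
    by_cases hP : ∃ t, σ ≤ t ∧ hankelDet c t m = 0
    · classical
      set t := Nat.find hP with htdef
      obtain ⟨htσ, htdet⟩ := Nat.find_spec hP
      have hmin : ∀ t', σ ≤ t' → t' < t → hankelDet c t' m ≠ 0 := by
        intro t' h1 h2 h3
        exact Nat.find_min hP h2 ⟨h1, h3⟩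
      have hcas : ∀ s, t ≤ s → hankelDet c s m = 0 := by
        intro s hs
        induction s, hs using Nat.le_induction with
        | base => exact htdet
        | succ n hn ihn => exact cascade (h n (le_trans htσ hn)) ihn
      obtain ⟨b', hb'last, hb'⟩ := ih t hcas
      rcases eq_or_lt_of_le htσ with heq | hlt
      · -- t = σ : shift the shorter recurrence by one
        refine ⟨Fin.cons 0 b', ?_, fun s hs => ?_⟩
        · rw [← Fin.succ_last, Fin.cons_succ]; exact hb'last
        · rw [Fin.sum_univ_succ]
          simp only [Fin.cons_zero, Fin.cons_succ, Fin.val_succ, Fin.val_zero, zero_mul, zero_add]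
          calc ∑ j : Fin (m+1), b' j * c (s + ((j:ℕ) + 1))
              = ∑ j : Fin (m+1), b' j * c (s + 1 + (j:ℕ)) :=
                Finset.sum_congr rfl fun j _ => by rw [show s + ((j:ℕ)+1) = s + 1 + (j:ℕ) by omega]
            _ = 0 := hb' (s + 1) (by omega)
      · -- σ < t : build the long recurrence on [σ, t+m] and patch with the short one
        obtain ⟨a, base⟩ := construct (hmin σ le_rfl hlt)
        have hext := extend h hmin base
        have final : ∀ u, σ ≤ u → c (u + (m + 1)) =
            ∑ j : Fin (m + 1), a j * c (u + (j : ℕ)) := by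
          intro u
          induction u using Nat.strong_induction_on with
          | _ u IH =>
            intro hσu
            rcases le_or_gt u (t + m) with hle | hgt
            · exact hext u hσu hle
            · -- u > t + m : use the short recurrence applied to the defect sequence
              have hgrec : ∑ j' : Fin (m + 1), b' j' *
                  (c ((u - m + (j' : ℕ)) + (m + 1)) -
                    ∑ j : Fin (m + 1), a j * c ((u - m + (j' : ℕ)) + (j : ℕ))) = 0 := by
                have hsplit : ∀ j' : Fin (m + 1), b' j' *
                    (c ((u - m + (j' : ℕ)) + (m + 1)) -
                      ∑ j : Fin (m + 1), a j * c ((u - m + (j' : ℕ)) + (j : ℕ)))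
                    = b' j' * c ((u - m + (m + 1)) + (j' : ℕ)) -
                      ∑ j : Fin (m + 1), a j * (b' j' * c ((u - m + (j : ℕ)) + (j' : ℕ))) := by
                  intro j'
                  rw [mul_sub, Finset.mul_sum]
                  congr 1
                  · rw [show (u - m + (j':ℕ)) + (m+1) = (u - m + (m+1)) + (j':ℕ) by omega]
                  · refine Finset.sum_congr rfl fun j _ => ?_
                    rw [show (u - m + (j':ℕ)) + (j:ℕ) = (u - m + (j:ℕ)) + (j':ℕ) by omega]
                    ring
                calc ∑ j' : Fin (m+1), b' j' *
                    (c ((u - m + (j':ℕ)) + (m + 1)) -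
                      ∑ j : Fin (m+1), a j * c ((u - m + (j':ℕ)) + (j:ℕ)))
                    = ∑ j' : Fin (m+1), (b' j' * c ((u - m + (m+1)) + (j':ℕ)) -
                        ∑ j : Fin (m+1), a j * (b' j' * c ((u - m + (j:ℕ)) + (j':ℕ)))) :=
                      Finset.sum_congr rfl fun j' _ => hsplit j'
                  _ = (∑ j' : Fin (m+1), b' j' * c ((u - m + (m+1)) + (j':ℕ))) -
                        ∑ j' : Fin (m+1), ∑ j : Fin (m+1),
                          a j * (b' j' * c ((u - m + (j:ℕ)) + (j':ℕ))) :=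
                      Finset.sum_sub_distrib _ _
                  _ = 0 - ∑ j : Fin (m+1), a j *
                        ∑ j' : Fin (m+1), b' j' * c ((u - m + (j:ℕ)) + (j':ℕ)) := by
                      rw [hb' (u - m + (m + 1)) (by omega), Finset.sum_comm]
                      congr 1
                      exact Finset.sum_congr rfl fun j _ => by rw [Finset.mul_sum]
                  _ = 0 := by
                      rw [Finset.sum_eq_zero fun j _ => ?_]
                      · ring
                      · rw [hb' (u - m + (j : ℕ)) (by omega), mul_zero]
              rw [Fin.sum_univ_castSucc] at hgrec
              have hzero : ∀ j' : Fin m,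
                  c ((u - m + ((j'.castSucc : Fin (m+1)) : ℕ)) + (m + 1)) -
                    ∑ j : Fin (m+1), a j * c ((u - m + ((j'.castSucc : Fin (m+1)) : ℕ)) + (j:ℕ))
                    = 0 := by
                intro j'
                have hj' := j'.isLt
                have := IH (u - m + ((j'.castSucc : Fin (m+1)) : ℕ))
                  (by simp only [Fin.coe_castSucc]; omega)
                  (by simp only [Fin.coe_castSucc]; omega)
                rw [this]; ring
              rw [Finset.sum_eq_zero (fun j' _ => by rw [hzero j', mul_zero]), zero_add] at hgrec
              simp only [Fin.val_last] at hgrec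
              rw [show u - m + m = u by omega] at hgrec
              rcases mul_eq_zero.mp hgrec with h6 | h6
              · exact absurd h6 hb'last
              · linear_combination h6
        exact assemble final
    · push_neg at hP
      obtain ⟨a, base⟩ := construct (hP σ le_rfl)
      exact assemble fun u hu =>
        extend (T := u + 1) h (fun t' ht' _ => hP t' ht') base u hu (by omega)


end HankelProof

/-- If `A_{s,r}(c) = 0` for every `s` and `A_{0,r−1}(c) ≠ 0` (with `r ≥ 1`), then there are
complex numbers `b 0, …, b r` with `b r ≠ 0` such that `∑_{j=0}^{r} b j · c (s+j) = 0`
for every `s`. -/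
theorem hankel_linear_recurrence (c : ℕ → ℂ) (r : ℕ) (hr : 1 ≤ r)
    (h1 : ∀ s : ℕ, hankelDet c s r = 0) (h2 : hankelDet c 0 (r - 1) ≠ 0) :
    ∃ b : Fin (r + 1) → ℂ, b (Fin.last r) ≠ 0 ∧
      ∀ s : ℕ, ∑ j : Fin (r + 1), b j * c (s + (j : ℕ)) = 0 := by
  obtain ⟨b, hb1, hb2⟩ := HankelProof.key c r 0 (fun s _ => h1 s)
  exact ⟨b, hb1, fun s => hb2 s (Nat.zero_le s)⟩
end

section
/- Let c : ℕ → ℂ be a sequence and k ≥ 1 an integer such that A_{s,k}(c) = 0 for every s ≥ 0. Then there exist polynomials P, Q ∈ ℂ[X] with Q ≠ 0, deg Q ≤ k, and (P = 0 or deg P ≤ k − 1), such that Q·F_c = P in the ring of formal power series ℂ[[X]]. -/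
open Finset

/-- Trivial left kernel of `H_{s,m}` (scalar formulation). -/
def HZ (c : ℕ → ℂ) (m s : ℕ) : Prop :=
  ∀ u : ℕ → ℂ, (∀ j ≤ m, ∑ i ∈ range (m+1), u i * c (s+i+j) = 0) → ∀ i ≤ m, u i = 0

lemma hz_iff (c : ℕ → ℂ) (m s : ℕ) : hankelDet c s m ≠ 0 ↔ HZ c m s := by
  have hiff := Matrix.exists_vecMul_eq_zero_iff
      (M := Matrix.of fun i j : Fin (m + 1) => c (s + (i : ℕ) + (j : ℕ)))
  constructor
  · intro hne u hu i him
    by_contra hui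
    apply hne
    rw [hankelDet, ← hiff]
    refine ⟨fun i => u i, ?_, ?_⟩
    · intro h0
      exact hui (by simpa using congrFun h0 ⟨i, by omega⟩)
    · funext j
      have h1 := hu j (by omega : (j:ℕ) ≤ m)
      rw [← Fin.sum_univ_eq_sum_range (fun i => u i * c (s + i + j)) (m+1)] at h1
      simpa [Matrix.vecMul, dotProduct] using h1
  · intro hz hdet
    rw [hankelDet] at hdet
    rw [← hiff] at hdet
    obtain ⟨v, hv0, hv⟩ := hdet
    apply hv0
    funext i
    have := hz (fun i => if h : i < m + 1 then v ⟨i, h⟩ else 0) ?_ i (by omega)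
    · simpa [show (i:ℕ) ≤ m by omega] using this
    · intro j hj
      have h2 := congrFun hv ⟨j, by omega⟩
      rw [← Fin.sum_univ_eq_sum_range
        (fun i => (if h : i < m+1 then v ⟨i,h⟩ else 0) * c (s + i + j)) (m+1)]
      simpa [Matrix.vecMul, dotProduct, Fin.is_le] using h2

lemma exists_rel (c : ℕ → ℂ) (m s : ℕ) (h : hankelDet c s m = 0) :
    ∃ v : ℕ → ℂ, (∃ i ≤ m, v i ≠ 0) ∧
      ∀ j ≤ m, ∑ i ∈ range (m+1), v i * c (s+i+j) = 0 := by
  have : ¬ HZ c m s := by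
    intro hz
    exact ((hz_iff c m s).mpr hz) h
  unfold HZ at this
  push_neg at this
  obtain ⟨u, hu, i, him, hui⟩ := this
  exact ⟨u, ⟨i, him, hui⟩, hu⟩

lemma prop_step (c : ℕ → ℂ) (m s : ℕ) (hbig : hankelDet c s (m+1) = 0)
    (hmid : hankelDet c (s+1) m ≠ 0) :
    hankelDet c s m ≠ 0 ∧ hankelDet c (s+2) m ≠ 0 := by
  have zmid : HZ c m (s+1) := (hz_iff _ _ _).mp hmid
  obtain ⟨v, ⟨i0, hi0m, hi0⟩, rel⟩ := exists_rel c (m+1) s hbig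
  have hv0 : v 0 ≠ 0 := by
    intro h0
    have hz := zmid (fun i => v (i+1)) ?_
    · rcases Nat.eq_zero_or_pos i0 with h | h
      · exact hi0 (h ▸ h0)
      · exact hi0 (by have := hz (i0-1) (by omega); simpa [Nat.sub_add_cancel h] using this)
    · intro j hj
      have r := rel j (by omega)
      rw [Finset.sum_range_succ'] at r
      rw [h0, zero_mul, add_zero] at r
      calc ∑ i ∈ range (m+1), v (i+1) * c (s+1+i+j)
          = ∑ i ∈ range (m+1), v (i+1) * c (s+(i+1)+j) :=
            Finset.sum_congr rfl fun i _ => by rw [show s+1+i+j = s+(i+1)+j by omega]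
        _ = 0 := r
  have hvtop : v (m+1) ≠ 0 := by
    intro htop
    have hz := zmid v ?_
    · rcases Nat.lt_or_ge i0 (m+1) with h | h
      · exact hi0 (hz i0 (by omega))
      · have he : i0 = m+1 := by omega
        rw [he] at hi0
        exact hi0 htop
    · intro j hj
      have r := rel (j+1) (by omega)
      rw [Finset.sum_range_succ] at r
      rw [htop, zero_mul, add_zero] at r
      calc ∑ i ∈ range (m+1), v i * c (s+1+i+j)
          = ∑ i ∈ range (m+1), v i * c (s+i+(j+1)) :=
            Finset.sum_congr rfl fun i _ => by rw [show s+1+i+j = s+i+(j+1) by omega]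
        _ = 0 := r
  constructor
  · rw [hz_iff]
    intro u hu
    set b : ℕ → ℂ := fun i => (if i < m then u (i+1) else 0) - u 0 * (v 0)⁻¹ * v (i+1) with hb
    have hbz : ∀ i ≤ m, b i = 0 := by
      apply zmid
      intro j hj
      have hS1 : ∑ i ∈ range (m+1), (if i < m then u (i+1) else 0) * c (s+1+i+j)
          = -(u 0 * c (s+j)) := by
        have hu' := hu j hj
        rw [Finset.sum_range_succ'] at hu'
        rw [Finset.sum_range_succ, if_neg (lt_irrefl m), zero_mul, add_zero]
        calc ∑ i ∈ range m, (if i < m then u (i+1) else 0) * c (s+1+i+j)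
            = ∑ i ∈ range m, u (i+1) * c (s+(i+1)+j) := Finset.sum_congr rfl fun i hi => by
              rw [if_pos (Finset.mem_range.mp hi), show s+1+i+j = s+(i+1)+j by omega]
          _ = -(u 0 * c (s+j)) := by
              rw [show s+0+j = s+j by omega] at hu'; linear_combination hu'
      have hS2 : ∑ i ∈ range (m+1), v (i+1) * c (s+1+i+j) = -(v 0 * c (s+j)) := by
        have r := rel j (by omega)
        rw [Finset.sum_range_succ'] at r
        calc ∑ i ∈ range (m+1), v (i+1) * c (s+1+i+j)
            = ∑ i ∈ range (m+1), v (i+1) * c (s+(i+1)+j) :=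
              Finset.sum_congr rfl fun i _ => by rw [show s+1+i+j = s+(i+1)+j by omega]
          _ = -(v 0 * c (s+j)) := by
              rw [show s+0+j = s+j by omega] at r; linear_combination r
      have expand : ∑ i ∈ range (m+1), b i * c (s+1+i+j)
          = (∑ i ∈ range (m+1), (if i < m then u (i+1) else 0) * c (s+1+i+j))
            - u 0 * (v 0)⁻¹ * ∑ i ∈ range (m+1), v (i+1) * c (s+1+i+j) := by
        rw [Finset.mul_sum, ← Finset.sum_sub_distrib]
        exact Finset.sum_congr rfl fun i _ => by simp only [hb]; ring
      rw [expand, hS1, hS2]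
      field_simp
      ring
    have hu0 : u 0 = 0 := by
      have h1 := hbz m le_rfl
      have h2 : u 0 * (v 0)⁻¹ * v (m+1) = 0 := by
        simpa [hb] using h1
      rcases mul_eq_zero.mp h2 with h3 | h3
      · rcases mul_eq_zero.mp h3 with h4 | h4
        · exact h4
        · exact absurd h4 (inv_ne_zero hv0)
      · exact absurd h3 hvtop
    intro i him
    rcases Nat.eq_zero_or_pos i with rfl | hpos
    · exact hu0
    · have h1 := hbz (i-1) (by omega)
      have h2 : (if i-1 < m then u i else 0) - u 0 * (v 0)⁻¹ * v i = 0 := by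
        simpa [hb, show i-1+1 = i by omega] using h1
      rw [if_pos (by omega), hu0] at h2
      simpa using h2
  · rw [hz_iff]
    intro u hu
    set b : ℕ → ℂ := fun i => (if i = 0 then 0 else u (i-1)) - u m * (v (m+1))⁻¹ * v i with hb
    have hbz : ∀ i ≤ m, b i = 0 := by
      apply zmid
      intro j hj
      have hS1 : ∑ i ∈ range (m+1), (if i = 0 then 0 else u (i-1)) * c (s+1+i+j)
          = -(u m * c (s+2+m+j)) := by
        have hu' := hu j hj
        rw [Finset.sum_range_succ] at hu'
        rw [Finset.sum_range_succ']
        simp only [Nat.add_sub_cancel, Nat.succ_ne_zero, if_false, eq_self_iff_true,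
          if_true, zero_mul, add_zero]
        calc ∑ i ∈ range m, u i * c (s+1+(i+1)+j)
            = ∑ i ∈ range m, u i * c (s+2+i+j) := Finset.sum_congr rfl fun i _ => by
              rw [show s+1+(i+1)+j = s+2+i+j by omega]
          _ = -(u m * c (s+2+m+j)) := by linear_combination hu'
      have hS2 : ∑ i ∈ range (m+1), v i * c (s+1+i+j) = -(v (m+1) * c (s+2+m+j)) := by
        have r := rel (j+1) (by omega)
        rw [Finset.sum_range_succ] at r
        calc ∑ i ∈ range (m+1), v i * c (s+1+i+j)
            = ∑ i ∈ range (m+1), v i * c (s+i+(j+1)) := Finset.sum_congr rfl fun i _ => by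
              rw [show s+1+i+j = s+i+(j+1) by omega]
          _ = -(v (m+1) * c (s+2+m+j)) := by
              rw [show s+(m+1)+(j+1) = s+2+m+j by omega] at r; linear_combination r
      have expand : ∑ i ∈ range (m+1), b i * c (s+1+i+j)
          = (∑ i ∈ range (m+1), (if i = 0 then 0 else u (i-1)) * c (s+1+i+j))
            - u m * (v (m+1))⁻¹ * ∑ i ∈ range (m+1), v i * c (s+1+i+j) := by
        rw [Finset.mul_sum, ← Finset.sum_sub_distrib]
        exact Finset.sum_congr rfl fun i _ => by simp only [hb]; ring
      rw [expand, hS1, hS2]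
      field_simp
      ring
    have hum : u m = 0 := by
      have h1 := hbz 0 (Nat.zero_le m)
      have h2 : u m * (v (m+1))⁻¹ * v 0 = 0 := by simpa [hb] using h1
      rcases mul_eq_zero.mp h2 with h3 | h3
      · rcases mul_eq_zero.mp h3 with h4 | h4
        · exact h4
        · exact absurd h4 (inv_ne_zero hvtop)
      · exact absurd h3 hv0
    intro i him
    rcases Nat.lt_or_ge i m with hlt | hge
    · have h1 := hbz (i+1) (by omega)
      have h2 : u i - u m * (v (m+1))⁻¹ * v (i+1) = 0 := by
        simpa [hb] using h1
      rw [hum] at h2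
      simpa using h2
    · have he : i = m := by omega
      rw [he]; exact hum

lemma case_b (c : ℕ → ℂ) (m : ℕ) (hbig : ∀ s, hankelDet c s (m+1) = 0)
    (hd : ∀ s, hankelDet c s m ≠ 0) :
    ∃ q : ℕ → ℂ, (∃ i ≤ m+1, q i ≠ 0) ∧
      ∀ s, ∑ j ∈ range (m+2), q j * c (s+j) = 0 := by
  set M : Matrix (Fin (m+2)) (Fin (m+2)) ℂ :=
    Matrix.of (fun i j : Fin (m+2) => if (i:ℕ) ≤ m then c (i + j) else 0) with hM
  have hdet : M.det = 0 := by
    apply Matrix.det_eq_zero_of_row_eq_zero ⟨m+1, by omega⟩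
    intro j
    simp [hM]
  obtain ⟨qv, hqv0, hqv⟩ := Matrix.exists_mulVec_eq_zero_iff.mpr hdet
  set q : ℕ → ℂ := fun j => if h : j < m+2 then qv ⟨j, h⟩ else 0 with hq
  refine ⟨q, ?_, ?_⟩
  · by_contra hall
    push_neg at hall
    apply hqv0
    funext j
    have h1 := hall (j : ℕ) (by omega)
    rw [hq] at h1
    simp only at h1
    rw [dif_pos j.isLt] at h1
    simpa using h1
  · intro s
    induction s using Nat.strong_induction_on with
    | _ s ih =>
    rcases Nat.lt_or_ge s (m+1) with hs | hs
    · rw [← Fin.sum_univ_eq_sum_range (fun j => q j * c (s+j)) (m+2)]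
      have h0 := congrFun hqv ⟨s, by omega⟩
      simp only [Matrix.mulVec, dotProduct, hM, Matrix.of_apply, Pi.zero_apply] at h0
      calc ∑ j : Fin (m+2), q (j : ℕ) * c (s + (j : ℕ))
          = ∑ j : Fin (m+2), (if s ≤ m then c (s + (j : ℕ)) else 0) * qv j := by
            refine Finset.sum_congr rfl fun j _ => ?_
            rw [hq]
            simp only
            rw [dif_pos j.isLt, if_pos (by omega : s ≤ m)]
            simp [mul_comm]
        _ = 0 := h0
    · set t := s - (m+1) with ht
      obtain ⟨v, ⟨i0, hi0m, hi0⟩, rel⟩ := exists_rel c (m+1) t (hbig t)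
      have hts : t + (m+1) = s := by omega
      have hvtop : v (m+1) ≠ 0 := by
        intro htop
        have hz := (hz_iff c m t).mp (hd t) v ?_
        · rcases Nat.lt_or_ge i0 (m+1) with h | h
          · exact hi0 (hz i0 (by omega))
          · have he : i0 = m+1 := by omega
            rw [he] at hi0; exact hi0 htop
        · intro j hj
          have r := rel j (by omega)
          rw [Finset.sum_range_succ, htop, zero_mul, add_zero] at r
          exact r
      have hexp : ∀ j ≤ m+1, c (s+j)
          = -(v (m+1))⁻¹ * ∑ i ∈ range (m+1), v i * c (t+i+j) := by
        intro j hj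
        have r := rel j hj
        rw [Finset.sum_range_succ] at r
        rw [show t+(m+1)+j = s+j by omega] at r
        field_simp
        linear_combination r
      calc ∑ j ∈ range (m+2), q j * c (s+j)
          = ∑ j ∈ range (m+2), q j *
              (-(v (m+1))⁻¹ * ∑ i ∈ range (m+1), v i * c (t+i+j)) := by
            refine Finset.sum_congr rfl fun j hjr => ?_
            rw [hexp j (by have := Finset.mem_range.mp hjr; omega)]
        _ = -(v (m+1))⁻¹ * ∑ i ∈ range (m+1),
              v i * ∑ j ∈ range (m+2), q j * c (t+i+j) := by
            simp only [Finset.mul_sum]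
            rw [Finset.sum_comm]
            exact Finset.sum_congr rfl fun i _ => Finset.sum_congr rfl fun j _ => by ring
        _ = 0 := by
            have hz : ∀ i ∈ range (m+1),
                v i * ∑ j ∈ range (m+2), q j * c (t+i+j) = 0 := fun i hi => by
              rw [ih (t+i) (by have := Finset.mem_range.mp hi; omega)]
              ring
            rw [Finset.sum_congr rfl hz]
            simp

lemma hankel_shift (c : ℕ → ℂ) (s m : ℕ) :
    hankelDet (fun t => c (t+1)) s m = hankelDet c (s+1) m := by
  rw [hankelDet, hankelDet]
  apply congrArg Matrix.det
  ext i j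
  simp only [Matrix.of_apply]
  congr 1
  omega

lemma key (k : ℕ) : ∀ c : ℕ → ℂ, (∀ s, hankelDet c s k = 0) →
    ∃ q : ℕ → ℂ, (∃ i ≤ k, q i ≠ 0) ∧ ∀ s, ∑ j ∈ range (k+1), q j * c (s+j) = 0 := by
  induction k with
  | zero =>
    intro c h
    refine ⟨fun _ => 1, ⟨0, le_refl 0, one_ne_zero⟩, fun s => ?_⟩
    have h0 := h s
    rw [hankelDet, Matrix.det_fin_one] at h0
    simp only [Matrix.of_apply] at h0
    simp only [Finset.sum_range_one, one_mul, Nat.add_zero]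
    simpa using h0
  | succ m ihk =>
    intro c h
    by_cases hc : ∀ s, hankelDet c (s+1) m = 0
    · obtain ⟨q', ⟨i0, hi0m, hi0⟩, hq'⟩ := ihk (fun t => c (t+1))
        (fun s => by rw [hankel_shift]; exact hc s)
      refine ⟨fun j => if j = 0 then 0 else q' (j-1),
        ⟨i0+1, by omega, by simpa using hi0⟩, fun s => ?_⟩
      rw [Finset.sum_range_succ']
      simp only [Nat.add_sub_cancel, Nat.succ_ne_zero, if_false, eq_self_iff_true,
        if_true, zero_mul, add_zero]
      calc ∑ j ∈ range (m+1), q' j * c (s+(j+1))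
          = ∑ j ∈ range (m+1), q' j * c ((s+j)+1) :=
            Finset.sum_congr rfl fun j _ => by rw [show s+(j+1) = (s+j)+1 by omega]
        _ = 0 := hq' s
    · push_neg at hc
      obtain ⟨t, hts⟩ := hc
      have fwd : ∀ n, hankelDet c (t+1+n) m ≠ 0 := by
        intro n
        induction n with
        | zero => simpa using hts
        | succ n ihn =>
          have h2 := (prop_step c m (t+n) (h (t+n))
            (by rw [show t+n+1 = t+1+n by omega]; exact ihn)).2
          rw [show t+n+2 = t+1+(n+1) by omega] at h2
          exact h2
      have bwd : ∀ n s, s + n = t+1 → hankelDet c s m ≠ 0 := by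
        intro n
        induction n with
        | zero => intro s hs; rw [show s = t+1 by omega]; simpa using fwd 0
        | succ n ihn =>
          intro s hs
          exact (prop_step c m s (h s) (ihn (s+1) (by omega))).1
      have hall : ∀ s, hankelDet c s m ≠ 0 := by
        intro s
        rcases Nat.lt_or_ge s (t+1) with hlt | hge
        · exact bwd (t+1-s) s (by omega)
        · have h2 := fwd (s-(t+1))
          rw [show t+1+(s-(t+1)) = s by omega] at h2
          exact h2
      exact case_b c m h hall

/-- Kronecker's criterion, formal version: if all `(k+1)×(k+1)` Hankel determinants
`A_{s,k}(c)` vanish (`k ≥ 1`), then `F_c = ∑ c_s X^s` is a rational power series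
`P/Q` with `deg Q ≤ k` and `deg P ≤ k − 1`. -/
theorem rational_of_hankel_vanishing (c : ℕ → ℂ) (k : ℕ) (hk : 1 ≤ k)
    (h : ∀ s : ℕ, hankelDet c s k = 0) :
    ∃ P Q : Polynomial ℂ, Q ≠ 0 ∧ Q.natDegree ≤ k ∧ (P = 0 ∨ P.natDegree ≤ k - 1) ∧
      (Q : PowerSeries ℂ) * PowerSeries.mk c = (P : PowerSeries ℂ) := by
  obtain ⟨q, ⟨i0, hi0k, hi0⟩, hq⟩ := key k c h
  set Q : Polynomial ℂ := ∑ j ∈ range (k+1), Polynomial.monomial (k-j) (q j) with hQ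
  have hQc : ∀ n, Q.coeff n = if n ≤ k then q (k-n) else 0 := by
    intro n
    rw [hQ, Polynomial.finset_sum_coeff]
    simp only [Polynomial.coeff_monomial]
    by_cases hn : n ≤ k
    · rw [if_pos hn, Finset.sum_eq_single (k-n)]
      · rw [if_pos (by omega)]
      · intro j hj hne
        rw [if_neg (by have := Finset.mem_range.mp hj; omega)]
      · intro habs
        exact absurd (Finset.mem_range.mpr (by omega)) habs
    · rw [if_neg hn]
      refine Finset.sum_eq_zero fun j hj => ?_
      rw [if_neg (by have := Finset.mem_range.mp hj; omega)]
  have hQne : Q ≠ 0 := by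
    intro h0
    apply hi0
    have := hQc (k - i0)
    rw [h0] at this
    simp only [Polynomial.coeff_zero] at this
    rw [if_pos (by omega), show k-(k-i0) = i0 by omega] at this
    exact this.symm
  have hQd : Q.natDegree ≤ k :=
    Polynomial.natDegree_le_iff_coeff_eq_zero.mpr fun N hN => by
      rw [hQc, if_neg (by omega)]
  have hhigh : ∀ n, k ≤ n →
      (PowerSeries.coeff n) ((Q : PowerSeries ℂ) * PowerSeries.mk c) = 0 := by
    intro n hn
    rw [PowerSeries.coeff_mul, Finset.Nat.sum_antidiagonal_eq_sum_range_succ_mk]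
    simp only [Polynomial.coeff_coe, PowerSeries.coeff_mk]
    rw [← Finset.sum_subset (Finset.range_subset_range.mpr (by omega : k+1 ≤ n+1))
      (fun x _ hx => by
        have hxk : ¬ x < k+1 := fun hlt => hx (Finset.mem_range.mpr hlt)
        rw [hQc, if_neg (by omega), zero_mul])]
    calc ∑ i ∈ range (k+1), Q.coeff i * c (n-i)
        = ∑ i ∈ range (k+1), q (k-i) * c ((n-k)+(k-i)) := by
          refine Finset.sum_congr rfl fun i hi => ?_
          have hik := Finset.mem_range.mp hi
          rw [hQc, if_pos (by omega), show (n-k)+(k-i) = n-i by omega]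
      _ = ∑ i ∈ range (k+1), q i * c ((n-k)+i) := by
          have hr := Finset.sum_range_reflect (fun i => q i * c ((n-k)+i)) (k+1)
          simpa using hr
      _ = 0 := hq (n-k)
  set P : Polynomial ℂ := ∑ n ∈ range k, Polynomial.monomial n
      ((PowerSeries.coeff n) ((Q : PowerSeries ℂ) * PowerSeries.mk c)) with hP
  have hPc : ∀ n, P.coeff n = if n < k then
      (PowerSeries.coeff n) ((Q : PowerSeries ℂ) * PowerSeries.mk c) else 0 := by
    intro n
    rw [hP, Polynomial.finset_sum_coeff]
    simp only [Polynomial.coeff_monomial]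
    by_cases hn : n < k
    · rw [if_pos hn, Finset.sum_eq_single n]
      · rw [if_pos rfl]
      · intro j hj hne
        rw [if_neg hne]
      · intro habs
        exact absurd (Finset.mem_range.mpr hn) habs
    · rw [if_neg hn]
      refine Finset.sum_eq_zero fun j hj => ?_
      rw [if_neg (by have := Finset.mem_range.mp hj; omega)]
  refine ⟨P, Q, hQne, hQd, Or.inr ?_, ?_⟩
  · exact Polynomial.natDegree_le_iff_coeff_eq_zero.mpr fun N hN => by
      rw [hPc, if_neg (by omega)]
  · ext n
    rw [Polynomial.coeff_coe, hPc]
    by_cases hn : n < k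
    · rw [if_pos hn]
    · rw [if_neg hn]
      exact hhigh n (by omega)
end

section
/- Let D ⊆ ℂ^m and G ⊆ ℂ^n be domains, let A ⊆ D be a nonempty open set, and let B ⊆ G be a closed ball. Set X := (A × G) ∪ (D × B). Let f : ℂ^m × ℂ^n → ℂ be a function such that: (a) for every a ∈ A, the function w ↦ f(a,w) is holomorphic on G; (b) for every b ∈ B there is a polynomial P_b ∈ ℂ[z_1,…,z_m] (possibly zero) with f(z,b) = P_b(z) for all z ∈ D. Then there exist an integer k ≥ 0 and holomorphic functions c_α : G → ℂ, one for each multi-index α ∈ ℕ^m with |α| ≤ k, such that f(z,w) = ∑_{|α| ≤ k} c_α(w)·z^α for every (z,w) ∈ X. -/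
open Set Metric Topology Filter MvPolynomial Finset

section Helpers

variable {m : ℕ}

lemma mvEval_differentiable (P : MvPolynomial (Fin m) ℂ) :
    Differentiable ℂ (fun z : Fin m → ℂ => MvPolynomial.eval z P) := by
  induction P using MvPolynomial.induction_on with
  | C a => simpa using differentiable_const a
  | add p q hp hq => simpa using hp.fun_add hq
  | mul_X p i hp =>
      simp only [map_mul, MvPolynomial.eval_X]
      exact hp.mul (differentiable_pi.1 differentiable_id i)

lemma sum_monomials_differentiable {k : ℕ} (c : (Fin m → Fin (k+1)) → ℂ) :
    Differentiable ℂ (fun z : Fin m → ℂ =>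
      ∑ α ∈ Finset.univ.filter (fun α : Fin m → Fin (k + 1) => ∑ i, (α i : ℕ) ≤ k),
        c α * ∏ i, z i ^ (α i : ℕ)) := by
  have h : (fun z : Fin m → ℂ =>
      ∑ α ∈ Finset.univ.filter (fun α : Fin m → Fin (k + 1) => ∑ i, (α i : ℕ) ≤ k),
        c α * ∏ i, z i ^ (α i : ℕ)) = fun z => MvPolynomial.eval z
          (∑ α ∈ Finset.univ.filter (fun α : Fin m → Fin (k + 1) => ∑ i, (α i : ℕ) ≤ k),
            MvPolynomial.C (c α) * ∏ i, MvPolynomial.X i ^ (α i : ℕ)) := by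
    funext z
    rw [map_sum]
    refine Finset.sum_congr rfl fun α _ => ?_
    rw [map_mul, MvPolynomial.eval_C, map_prod]
    simp
  rw [h]
  exact mvEval_differentiable _

lemma myIdentity {E : Type*} [NormedAddCommGroup E] [NormedSpace ℂ E]
    {f g : E → ℂ} {U V : Set E} (hUc : IsPreconnected U)
    (hf : DifferentiableOn ℂ f U) (hg : DifferentiableOn ℂ g U) (hU : IsOpen U)
    (hV : IsOpen V) (hVne : V.Nonempty) (hVU : V ⊆ U) (heq : Set.EqOn f g V) :
    Set.EqOn f g U := by
  set S : Set E := {x | ∀ᶠ y in 𝓝 x, f y = g y} with hS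
  have hSo : IsOpen S := isOpen_setOf_eventually_nhds
  have hVS : V ⊆ S := fun v hv => Filter.eventually_of_mem (hV.mem_nhds hv) (fun y hy => heq hy)
  have key : closure S ∩ U ⊆ S := by
    rintro w ⟨hwS, hwU⟩
    obtain ⟨r, hr, hrU⟩ := Metric.isOpen_iff.1 hU w hwU
    obtain ⟨s₀, hs₀S, hs₀d⟩ : ∃ s₀ ∈ S, dist s₀ w < r / 2 := by
      have h2 := Metric.mem_closure_iff.1 hwS (r/2) (by linarith)
      obtain ⟨s₀, h1, h2⟩ := h2
      exact ⟨s₀, h1, by rwa [dist_comm]⟩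
    have hball : ball s₀ (r/2) ⊆ U := fun x hx => hrU (by
      have h3 : dist x w ≤ dist x s₀ + dist s₀ w := dist_triangle _ _ _
      have hx' := mem_ball.1 hx
      exact mem_ball.2 (by linarith))
    have heqball : ∀ x ∈ ball s₀ (r/2), f x = g x := by
      intro x hx
      rcases eq_or_ne x s₀ with h | h
      · subst h; exact hs₀S.self_of_nhds
      · have hc : x - s₀ ≠ 0 := sub_ne_zero.2 h
        have hcn : (0:ℝ) < ‖x - s₀‖ := norm_pos_iff.2 hc
        set R : ℝ := r / (2 * ‖x - s₀‖) with hR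
        have hR1 : 1 < R := by
          rw [hR, lt_div_iff₀ (by positivity)]
          have h4 := mem_ball.1 hx
          rw [dist_eq_norm] at h4
          linarith
        set φ : ℂ → E := fun t => s₀ + t • (x - s₀) with hφ
        have hφd : Differentiable ℂ φ :=
          (differentiable_const _).add (differentiable_id.smul_const _)
        have hmaps : ∀ t ∈ ball (0:ℂ) R, φ t ∈ ball s₀ (r/2) := by
          intro t ht
          have h5 : ‖t‖ < R := by simpa [dist_eq_norm] using ht
          simp only [hφ, mem_ball, dist_eq_norm, add_sub_cancel_left]
          rw [norm_smul]
          calc ‖t‖ * ‖x - s₀‖ < R * ‖x - s₀‖ := mul_lt_mul_of_pos_right h5 hcn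
            _ = r / 2 := by rw [hR]; field_simp
        have hfφ : DifferentiableOn ℂ (f ∘ φ) (ball (0:ℂ) R) :=
          hf.comp (hφd.differentiableOn) (fun t ht => hball (hmaps t ht))
        have hgφ : DifferentiableOn ℂ (g ∘ φ) (ball (0:ℂ) R) :=
          hg.comp (hφd.differentiableOn) (fun t ht => hball (hmaps t ht))
        have hfa : AnalyticOnNhd ℂ (f ∘ φ) (ball (0:ℂ) R) := hfφ.analyticOnNhd isOpen_ball
        have hga : AnalyticOnNhd ℂ (g ∘ φ) (ball (0:ℂ) R) := hgφ.analyticOnNhd isOpen_ball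
        have hφ0 : φ 0 = s₀ := by simp [hφ]
        have hev : (f ∘ φ) =ᶠ[𝓝 (0:ℂ)] (g ∘ φ) := by
          have h6 : ∀ᶠ y in 𝓝 (φ 0), f y = g y := by rw [hφ0]; exact hs₀S
          exact (hφd.continuous.continuousAt).eventually h6
        have h1m : (1:ℂ) ∈ ball (0:ℂ) R := by
          simp only [mem_ball, dist_zero_right, norm_one]; exact hR1
        have h0m : (0:ℂ) ∈ ball (0:ℂ) R := mem_ball_self (by linarith)
        have h7 := AnalyticOnNhd.eqOn_of_preconnected_of_eventuallyEq hfa hga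
          (convex_ball _ _).isPreconnected h0m hev h1m
        simpa [hφ] using h7
    have h8 : w ∈ ball s₀ (r/2) := by rw [mem_ball, dist_comm]; exact hs₀d
    exact Filter.eventually_of_mem ((isOpen_ball).mem_nhds h8) heqball
  obtain ⟨v, hv⟩ := hVne
  have h9 : U ⊆ S := hUc.subset_of_closure_inter_subset hSo ⟨v, hVU hv, hVS hv⟩ key
  exact fun x hx => (h9 hx).self_of_nhds

noncomputable def vmap (k : ℕ) (a₀ : Fin m → ℂ) (ε : ℝ) (i : Fin m) : Fin (k+1) → ℂ :=
  fun j => a₀ i + (ε : ℂ) * (j : ℕ)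

noncomputable def Lmv (k : ℕ) (a₀ : Fin m → ℂ) (ε : ℝ) (γ : Fin m → Fin (k+1)) :
    MvPolynomial (Fin m) ℂ :=
  ∏ i, Polynomial.aeval (MvPolynomial.X i) (Lagrange.basis Finset.univ (vmap k a₀ ε i) (γ i))

noncomputable def nodeF (k : ℕ) (a₀ : Fin m → ℂ) (ε : ℝ) (γ : Fin m → Fin (k+1)) :
    Fin m → ℂ := fun i => vmap k a₀ ε i (γ i)

lemma eval_Lmv (k : ℕ) (a₀ : Fin m → ℂ) (ε : ℝ) (γ : Fin m → Fin (k+1)) (z : Fin m → ℂ) :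
    MvPolynomial.eval z (Lmv k a₀ ε γ) =
      ∏ i, (Lagrange.basis Finset.univ (vmap k a₀ ε i) (γ i)).eval (z i) := by
  rw [Lmv, map_prod]
  refine Finset.prod_congr rfl fun i _ => ?_
  have h1 : MvPolynomial.eval z (Polynomial.aeval (MvPolynomial.X i)
      (Lagrange.basis Finset.univ (vmap k a₀ ε i) (γ i))) =
      (MvPolynomial.aeval z : MvPolynomial (Fin m) ℂ →ₐ[ℂ] ℂ) (Polynomial.aeval (MvPolynomial.X i)
      (Lagrange.basis Finset.univ (vmap k a₀ ε i) (γ i))) := by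
    rw [← MvPolynomial.coe_aeval_eq_eval]; rfl
  rw [h1, ← Polynomial.aeval_algHom_apply, MvPolynomial.aeval_X,
    ← Polynomial.coe_aeval_eq_eval (z i)]

lemma vmap_inj (k : ℕ) (a₀ : Fin m → ℂ) {ε : ℝ} (hε : ε ≠ 0) (i : Fin m) :
    Function.Injective (vmap k a₀ ε i) := by
  intro j j' h
  simp only [vmap, add_right_inj] at h
  have hε' : (ε : ℂ) ≠ 0 := by exact_mod_cast hε
  have h2 := mul_left_cancel₀ hε' h
  have h3 : (j : ℕ) = (j' : ℕ) := by exact_mod_cast h2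
  exact Fin.ext h3

lemma pow_eq_lagrange_sum (k : ℕ) (a₀ : Fin m → ℂ) {ε : ℝ} (hε : ε ≠ 0) (i : Fin m)
    {b : ℕ} (hb : b ≤ k) (x : ℂ) :
    x ^ b = ∑ j : Fin (k+1), (vmap k a₀ ε i j) ^ b *
      (Lagrange.basis Finset.univ (vmap k a₀ ε i) j).eval x := by
  have hvs : Set.InjOn (vmap k a₀ ε i) ↑(Finset.univ : Finset (Fin (k+1))) :=
    (vmap_inj k a₀ hε i).injOn
  have hdeg : (Polynomial.X ^ b : Polynomial ℂ).degree <
      (#(Finset.univ : Finset (Fin (k+1))) : ℕ) := by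
    rw [Polynomial.degree_X_pow, Finset.card_univ, Fintype.card_fin]
    exact_mod_cast Nat.lt_succ_of_le hb
  have h := Lagrange.eq_interpolate hvs hdeg
  have h2 := congrArg (Polynomial.eval x) h
  rw [Lagrange.interpolate_apply] at h2
  simpa [Polynomial.eval_finset_sum] using h2

lemma monomial_tensor (k : ℕ) (a₀ : Fin m → ℂ) {ε : ℝ} (hε : ε ≠ 0)
    (d : Fin m → ℕ) (hd : ∀ i, d i ≤ k) (x : Fin m → ℂ) :
    ∏ i, x i ^ d i = ∑ γ : Fin m → Fin (k+1),
      (∏ i, (nodeF k a₀ ε γ i) ^ d i) * MvPolynomial.eval x (Lmv k a₀ ε γ) := by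
  have h : ∀ i : Fin m, x i ^ d i = ∑ j : Fin (k+1), (vmap k a₀ ε i j) ^ (d i) *
      (Lagrange.basis Finset.univ (vmap k a₀ ε i) j).eval (x i) :=
    fun i => pow_eq_lagrange_sum k a₀ hε i (hd i) (x i)
  calc ∏ i, x i ^ d i
      = ∏ i, ∑ j : Fin (k+1), (vmap k a₀ ε i j) ^ (d i) *
          (Lagrange.basis Finset.univ (vmap k a₀ ε i) j).eval (x i) :=
        Finset.prod_congr rfl fun i _ => h i
    _ = ∑ γ ∈ Fintype.piFinset (fun _ : Fin m => (Finset.univ : Finset (Fin (k+1)))),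
          ∏ i, (vmap k a₀ ε i (γ i)) ^ (d i) *
            (Lagrange.basis Finset.univ (vmap k a₀ ε i) (γ i)).eval (x i) :=
        Finset.prod_univ_sum _ _
    _ = ∑ γ : Fin m → Fin (k+1), (∏ i, (nodeF k a₀ ε γ i) ^ d i) *
          MvPolynomial.eval x (Lmv k a₀ ε γ) := by
        rw [Fintype.piFinset_univ]
        refine Finset.sum_congr rfl fun γ _ => ?_
        rw [eval_Lmv, ← Finset.prod_mul_distrib]
        rfl

lemma eval_eq_sum_nodes (k : ℕ) (a₀ : Fin m → ℂ) {ε : ℝ} (hε : ε ≠ 0)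
    (P : MvPolynomial (Fin m) ℂ) (hP : P.totalDegree ≤ k) (z : Fin m → ℂ) :
    MvPolynomial.eval z P = ∑ γ : Fin m → Fin (k+1),
      MvPolynomial.eval (nodeF k a₀ ε γ) P * MvPolynomial.eval z (Lmv k a₀ ε γ) := by
  have hdk : ∀ d ∈ P.support, ∀ i, d i ≤ k := by
    intro d hd i
    have h1 : d i ≤ d.sum fun _ e => e := by
      by_cases hi : i ∈ d.support
      · exact Finset.single_le_sum (fun j _ => Nat.zero_le _) hi
      · simp [Finsupp.notMem_support_iff.1 hi]
    exact h1.trans ((MvPolynomial.le_totalDegree hd).trans hP)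
  rw [MvPolynomial.eval_eq' z P]
  calc ∑ d ∈ P.support, MvPolynomial.coeff d P * ∏ i, z i ^ d i
      = ∑ d ∈ P.support, MvPolynomial.coeff d P * ∑ γ : Fin m → Fin (k+1),
          (∏ i, (nodeF k a₀ ε γ i) ^ d i) * MvPolynomial.eval z (Lmv k a₀ ε γ) := by
        refine Finset.sum_congr rfl fun d hd => ?_
        rw [← monomial_tensor k a₀ hε (fun i => d i) (hdk d hd) z]
    _ = ∑ γ : Fin m → Fin (k+1), (∑ d ∈ P.support,
          MvPolynomial.coeff d P * ∏ i, (nodeF k a₀ ε γ i) ^ d i) *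
          MvPolynomial.eval z (Lmv k a₀ ε γ) := by
        simp_rw [Finset.mul_sum, Finset.sum_mul]
        rw [Finset.sum_comm]
        simp_rw [mul_assoc]
    _ = _ := by
        refine Finset.sum_congr rfl fun γ _ => ?_
        rw [← MvPolynomial.eval_eq']

lemma coeff_eq_sum_nodes (k : ℕ) (a₀ : Fin m → ℂ) {ε : ℝ} (hε : ε ≠ 0)
    (P : MvPolynomial (Fin m) ℂ) (hP : P.totalDegree ≤ k) (d : Fin m →₀ ℕ) :
    MvPolynomial.coeff d P = ∑ γ : Fin m → Fin (k+1),
      MvPolynomial.eval (nodeF k a₀ ε γ) P * MvPolynomial.coeff d (Lmv k a₀ ε γ) := by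
  have hPeq : P = ∑ γ : Fin m → Fin (k+1),
      MvPolynomial.C (MvPolynomial.eval (nodeF k a₀ ε γ) P) * Lmv k a₀ ε γ := by
    apply MvPolynomial.funext
    intro x
    rw [map_sum, eval_eq_sum_nodes k a₀ hε P hP x]
    simp
  conv_lhs => rw [hPeq]
  rw [MvPolynomial.coeff_sum]
  simp [MvPolynomial.coeff_C_mul]

noncomputable def embα (k : ℕ) (α : Fin m → Fin (k+1)) : Fin m →₀ ℕ :=
  Finsupp.equivFunOnFinite.symm fun i => (α i : ℕ)

lemma embα_apply (k : ℕ) (α : Fin m → Fin (k+1)) (i : Fin m) : embα k α i = (α i : ℕ) := by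
  simp [embα]

lemma embα_inj (k : ℕ) : Function.Injective (embα (m := m) k) := by
  intro α α' h
  funext i
  have h1 := congrArg (fun d : Fin m →₀ ℕ => d i) h
  simp only [embα_apply] at h1
  exact Fin.ext h1

lemma eval_eq_filtered (k : ℕ) (a₀ : Fin m → ℂ) {ε : ℝ} (hε : ε ≠ 0)
    (P : MvPolynomial (Fin m) ℂ) (hP : P.totalDegree ≤ k) (z : Fin m → ℂ) :
    MvPolynomial.eval z P =
      ∑ α ∈ Finset.univ.filter (fun α : Fin m → Fin (k + 1) => ∑ i, (α i : ℕ) ≤ k),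
        (∑ γ : Fin m → Fin (k+1), MvPolynomial.eval (nodeF k a₀ ε γ) P *
          MvPolynomial.coeff (embα k α) (Lmv k a₀ ε γ)) * ∏ i, z i ^ (α i : ℕ) := by
  have hco : ∀ α, (∑ γ : Fin m → Fin (k+1), MvPolynomial.eval (nodeF k a₀ ε γ) P *
      MvPolynomial.coeff (embα k α) (Lmv k a₀ ε γ)) = MvPolynomial.coeff (embα k α) P :=
    fun α => (coeff_eq_sum_nodes k a₀ hε P hP (embα k α)).symm
  simp_rw [hco]
  have hsum : ∀ d ∈ P.support, (d.sum fun _ e => e) ≤ k :=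
    fun d hd => (MvPolynomial.le_totalDegree hd).trans hP
  have hd_le : ∀ d ∈ P.support, ∀ i, d i ≤ k := by
    intro d hd i
    refine le_trans ?_ (hsum d hd)
    by_cases hi : i ∈ d.support
    · exact Finset.single_le_sum (fun j _ => Nat.zero_le _) hi
    · simp [Finsupp.notMem_support_iff.1 hi]
  have himg : P.support ⊆ Finset.image (embα k)
      (Finset.univ.filter (fun α : Fin m → Fin (k + 1) => ∑ i, (α i : ℕ) ≤ k)) := by
    intro d hd
    refine Finset.mem_image.2 ⟨fun i => ⟨d i, Nat.lt_succ_of_le (hd_le d hd i)⟩, ?_, ?_⟩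
    · refine Finset.mem_filter.2 ⟨Finset.mem_univ _, ?_⟩
      have h1 : (∑ i, d i) = d.sum fun _ e => e := by
        rw [Finsupp.sum_fintype]; intro i; rfl
      simpa [h1] using hsum d hd
    · ext i; simp [embα_apply]
  rw [MvPolynomial.eval_eq' z P,
    Finset.sum_subset himg (by
      intro d _ hd
      rw [MvPolynomial.notMem_support_iff.1 hd, zero_mul]),
    Finset.sum_image (fun α _ α' _ h => embα_inj k h)]
  exact Finset.sum_congr rfl fun α _ => by
    rw [Finset.prod_congr rfl fun i (_ : i ∈ Finset.univ) => by rw [embα_apply k α i]]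

end Helpers


/-- **Theorem 1** (closed-ball case): let `D ⊆ ℂ^m`, `G ⊆ ℂ^n` be domains, `A ⊆ D` a
nonempty open set, `B ⊆ G` a closed (Euclidean) ball, and
`X := (A × G) ∪ (D × B)`. If `f(a,·)` is holomorphic on `G` for every `a ∈ A` and
`f(·,b)` is a polynomial on `D` for every `b ∈ B`, then on `X` the function `f` agrees
with a polynomial in `z` of some total degree `≤ k` whose coefficients are holomorphic
functions of `w` on `G`. -/
theorem partial_polynomial_extension (m n : ℕ)
    (D : Set (Fin m → ℂ)) (hDo : IsOpen D) (hDc : IsConnected D)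
    (G : Set (EuclideanSpace ℂ (Fin n))) (hGo : IsOpen G) (hGc : IsConnected G)
    (A : Set (Fin m → ℂ)) (hAo : IsOpen A) (hAne : A.Nonempty) (hAD : A ⊆ D)
    (w₀ : EuclideanSpace ℂ (Fin n)) (ρ : ℝ) (hρ : 0 < ρ)
    (B : Set (EuclideanSpace ℂ (Fin n))) (hB : B = Metric.closedBall w₀ ρ) (hBG : B ⊆ G)
    (f : (Fin m → ℂ) → EuclideanSpace ℂ (Fin n) → ℂ)
    (ha : ∀ a ∈ A, DifferentiableOn ℂ (f a) G)
    (hb : ∀ b ∈ B, ∃ P : MvPolynomial (Fin m) ℂ, ∀ z ∈ D, f z b = MvPolynomial.eval z P) :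
    ∃ k : ℕ, ∃ c : (Fin m → Fin (k + 1)) → EuclideanSpace ℂ (Fin n) → ℂ,
      (∀ α, DifferentiableOn ℂ (c α) G) ∧
      ∀ z w, (z, w) ∈ (A ×ˢ G) ∪ (D ×ˢ B) →
        f z w =
          ∑ α ∈ Finset.univ.filter (fun α : Fin m → Fin (k + 1) => ∑ i, (α i : ℕ) ≤ k),
            c α w * ∏ i, z i ^ (α i : ℕ) := by
  classical
  -- choose a polydisc in A
  obtain ⟨a₀, ha₀⟩ := hAne
  obtain ⟨r, hr, hrA⟩ := Metric.isOpen_iff.1 hAo a₀ ha₀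
  -- per-degree ε
  set εf : ℕ → ℝ := fun k => r / (k + 1) with hεf
  have hεpos : ∀ k, 0 < εf k := fun k => by positivity
  have hεne : ∀ k, εf k ≠ 0 := fun k => (hεpos k).ne'
  -- all nodes lie in A
  have hnode : ∀ k γ, nodeF k a₀ (εf k) γ ∈ A := by
    intro k γ
    apply hrA
    rw [mem_ball, dist_pi_lt_iff hr]
    intro i
    have h1 : dist (nodeF k a₀ (εf k) γ i) (a₀ i) = ‖(εf k : ℂ) * ((γ i : ℕ) : ℂ)‖ := by
      rw [dist_eq_norm]
      congr 1
      simp [nodeF, vmap]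
    rw [h1, norm_mul]
    have h2 : ‖((εf k : ℝ) : ℂ)‖ = εf k := by
      rw [Complex.norm_real, Real.norm_eq_abs, abs_of_pos (hεpos k)]
    have h3 : ‖(((γ i : ℕ) : ℂ))‖ = (γ i : ℕ) := by
      rw [Complex.norm_natCast]
    rw [h2, h3]
    have h4 : ((γ i : ℕ) : ℝ) ≤ k := by
      exact_mod_cast Nat.le_of_lt_succ (γ i).2
    calc εf k * ((γ i : ℕ) : ℝ) ≤ εf k * k := by
          exact mul_le_mul_of_nonneg_left h4 (hεpos k).le
      _ < r := by
          rw [hεf]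
          rw [div_mul_eq_mul_div, div_lt_iff₀ (by positivity)]
          nlinarith [hr]
  -- the candidate coefficient functions, for each degree k
  set cc : (k : ℕ) → (Fin m → Fin (k+1)) → EuclideanSpace ℂ (Fin n) → ℂ :=
    fun k α w => ∑ γ : Fin m → Fin (k+1), f (nodeF k a₀ (εf k) γ) w *
      MvPolynomial.coeff (embα k α) (Lmv k a₀ (εf k) γ) with hcc
  set gg : (k : ℕ) → EuclideanSpace ℂ (Fin n) → (Fin m → ℂ) → ℂ :=
    fun k w z => ∑ α ∈ Finset.univ.filter (fun α : Fin m → Fin (k + 1) => ∑ i, (α i : ℕ) ≤ k),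
      cc k α w * ∏ i, z i ^ (α i : ℕ) with hgg
  -- representation of polynomial slices
  have hrep : ∀ k, ∀ b, ∀ P : MvPolynomial (Fin m) ℂ, (∀ z ∈ D, f z b = MvPolynomial.eval z P) →
      P.totalDegree ≤ k → ∀ z, gg k b z = MvPolynomial.eval z P := by
    intro k b P hPb hPd z
    have h1 : ∀ α, cc k α b = ∑ γ : Fin m → Fin (k+1),
        MvPolynomial.eval (nodeF k a₀ (εf k) γ) P *
        MvPolynomial.coeff (embα k α) (Lmv k a₀ (εf k) γ) := by
      intro α
      refine Finset.sum_congr rfl fun γ _ => ?_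
      rw [hPb _ (hAD (hnode k γ))]
    simp only [hgg]
    simp only [h1]
    exact (eval_eq_filtered k a₀ (hεne k) P hPd z).symm
  -- differentiability of cc and gg
  have hccd : ∀ k α, DifferentiableOn ℂ (cc k α) G := by
    intro k α
    apply DifferentiableOn.fun_sum
    intro γ _
    exact (ha _ (hnode k γ)).mul_const _
  have hggd : ∀ k z, DifferentiableOn ℂ (fun w => gg k w z) G := by
    intro k z
    apply DifferentiableOn.fun_sum
    intro α _
    exact (hccd k α).mul_const _
  -- continuity of b ↦ f z b on B for z ∈ A
  have hBclosed : IsClosed B := hB ▸ Metric.isClosed_closedBall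
  haveI : CompleteSpace ↥B := hBclosed.completeSpace_coe
  haveI : Nonempty ↥B := ⟨⟨w₀, by rw [hB]; exact Metric.mem_closedBall_self hρ.le⟩⟩
  -- the closed pieces
  set S : ℕ → Set ↥B := fun k => {b : ↥B | ∀ z ∈ A, f z ↑b = gg k ↑b z} with hSdef
  have hcont : ∀ z ∈ A, Continuous fun b : ↥B => f z ↑b := by
    intro z hz
    exact (ha z hz).continuousOn.comp_continuous continuous_subtype_val (fun b => hBG b.2)
  have hScl : ∀ k, IsClosed (S k) := by
    intro k
    have h1 : S k = ⋂ (z : A), {b : ↥B | f ↑z ↑b = gg k ↑b ↑z} := by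
      ext b
      simp only [hSdef, Set.mem_setOf_eq, Set.mem_iInter, Subtype.forall]
    rw [h1]
    refine isClosed_iInter fun z => isClosed_eq (hcont z z.2) ?_
    apply continuous_finset_sum
    intro α _
    apply Continuous.mul _ continuous_const
    apply continuous_finset_sum
    intro γ _
    exact Continuous.mul ((ha _ (hnode k γ)).continuousOn.comp_continuous
      continuous_subtype_val (fun b => hBG b.2)) continuous_const
  have hcover : ⋃ k, S k = Set.univ := by
    ext b
    simp only [Set.mem_iUnion, Set.mem_univ, iff_true]
    obtain ⟨P, hP⟩ := hb ↑b b.2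
    refine ⟨P.totalDegree, fun z hz => ?_⟩
    rw [hP z (hAD hz), hrep P.totalDegree ↑b P hP le_rfl z]
  obtain ⟨K, hK⟩ := nonempty_interior_of_iUnion_of_closed hScl hcover
  obtain ⟨b₁, hb₁⟩ := hK
  obtain ⟨ε₁, hε₁, hball₁⟩ := Metric.isOpen_iff.1 isOpen_interior b₁ hb₁
  have hSK : ∀ b : ↥B, dist ↑b ↑b₁ < ε₁ → b ∈ S K := by
    intro b hd
    have : b ∈ Metric.ball b₁ ε₁ := by
      rw [Metric.mem_ball, Subtype.dist_eq]; exact hd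
    exact interior_subset (hball₁ this)
  -- construct a genuine open ball inside B mapping into S K
  set δ : ℝ := min (ε₁ / (2 * (ρ + 1))) (1/2) with hδdef
  have hδpos : 0 < δ := lt_min (by positivity) (by norm_num)
  have hδle : δ ≤ 1/2 := min_le_right _ _
  have hδρ : δ * ρ < ε₁ / 2 := by
    have h1 : δ ≤ ε₁ / (2 * (ρ + 1)) := min_le_left _ _
    have h2 : δ * ρ ≤ ε₁ / (2 * (ρ + 1)) * ρ := mul_le_mul_of_nonneg_right h1 hρ.le
    have h3 : ε₁ / (2 * (ρ + 1)) * ρ < ε₁ / 2 := by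
      rw [div_mul_eq_mul_div, div_lt_div_iff₀ (by positivity) (by norm_num)]
      nlinarith
    linarith
  have hb₁B : dist (↑b₁ : EuclideanSpace ℂ (Fin n)) w₀ ≤ ρ :=
    Metric.mem_closedBall.1 ((Set.ext_iff.1 hB ↑b₁).1 b₁.2)
  set b₂ : EuclideanSpace ℂ (Fin n) := w₀ + (1 - δ) • ((↑b₁ : EuclideanSpace ℂ (Fin n)) - w₀)
    with hb₂def
  set s : ℝ := δ * ρ / 2 with hsdef
  have hspos : 0 < s := by positivity
  have hd21 : dist b₂ ↑b₁ ≤ δ * ρ := by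
    have h1 : b₂ - ↑b₁ = (-δ) • ((↑b₁ : EuclideanSpace ℂ (Fin n)) - w₀) := by
      rw [hb₂def]; module
    rw [dist_eq_norm, h1, norm_smul]
    have h2 : ‖(-δ : ℝ)‖ = δ := by rw [norm_neg, Real.norm_eq_abs, abs_of_pos hδpos]
    rw [h2]
    exact mul_le_mul_of_nonneg_left (by rw [← dist_eq_norm]; exact hb₁B) hδpos.le
  have hd20 : dist b₂ w₀ ≤ (1 - δ) * ρ := by
    have h1 : b₂ - w₀ = (1 - δ) • ((↑b₁ : EuclideanSpace ℂ (Fin n)) - w₀) := by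
      rw [hb₂def]; module
    rw [dist_eq_norm, h1, norm_smul]
    have h2 : ‖(1 - δ : ℝ)‖ = 1 - δ := by
      rw [Real.norm_eq_abs, abs_of_pos (by linarith)]
    rw [h2]
    apply mul_le_mul_of_nonneg_left _ (by linarith)
    rw [← dist_eq_norm]; exact hb₁B
  have hVB : Metric.ball b₂ s ⊆ B := by
    intro x hx
    rw [hB, Metric.mem_closedBall]
    have h1 : dist x w₀ ≤ dist x b₂ + dist b₂ w₀ := dist_triangle _ _ _
    have h2 := Metric.mem_ball.1 hx
    have : s + (1 - δ) * ρ ≤ ρ := by rw [hsdef]; nlinarith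
    linarith
  have hVS : ∀ x ∈ Metric.ball b₂ s, ∀ z ∈ A, f z x = gg K x z := by
    intro x hx z hz
    have hxB : x ∈ B := hVB hx
    have h1 : dist x ↑b₁ ≤ dist x b₂ + dist b₂ ↑b₁ := dist_triangle _ _ _
    have h2 := Metric.mem_ball.1 hx
    have h3 : dist x ↑b₁ < ε₁ := by
      have : s + δ * ρ < ε₁ := by rw [hsdef]; nlinarith
      linarith
    exact hSK ⟨x, hxB⟩ h3 z hz
  have hVG : Metric.ball b₂ s ⊆ G := fun x hx => hBG (hVB hx)
  have hVne : (Metric.ball b₂ s).Nonempty := ⟨b₂, Metric.mem_ball_self hspos⟩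
  -- the key identity on A × G via the identity theorem in w
  have hAG : ∀ z ∈ A, ∀ w ∈ G, f z w = gg K w z := by
    intro z hz w hw
    exact myIdentity hGc.isPreconnected (ha z hz) (hggd K z) hGo
      Metric.isOpen_ball hVne hVG (fun x hx => hVS x hx z hz) hw
  refine ⟨K, cc K, hccd K, ?_⟩
  rintro z w (hmem | hmem)
  · rw [Set.mem_prod] at hmem
    exact hAG z hmem.1 w hmem.2
  · rw [Set.mem_prod] at hmem
    obtain ⟨hzD, hwB⟩ := hmem
    obtain ⟨P, hP⟩ := hb w hwB
    have hwG : w ∈ G := hBG hwB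
    -- identity theorem in z on ℂ^m (both sides polynomial functions of z)
    have hP_diff : Differentiable ℂ (fun z : Fin m → ℂ => MvPolynomial.eval z P) :=
      mvEval_differentiable P
    have hg_diff : Differentiable ℂ (fun z : Fin m → ℂ => gg K w z) :=
      sum_monomials_differentiable (fun α => cc K α w)
    have heqA : Set.EqOn (fun z : Fin m → ℂ => MvPolynomial.eval z P)
        (fun z : Fin m → ℂ => gg K w z) A := by
      intro z' hz'
      simp only
      rw [← hP z' (hAD hz'), hAG z' hz' w hwG]
    have heqU : Set.EqOn (fun z : Fin m → ℂ => MvPolynomial.eval z P)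
        (fun z : Fin m → ℂ => gg K w z) Set.univ :=
      myIdentity isPreconnected_univ hP_diff.differentiableOn hg_diff.differentiableOn
        isOpen_univ hAo ⟨a₀, ha₀⟩ (Set.subset_univ A) heqA
    rw [hP z hzD]
    exact heqU (Set.mem_univ z)
end

section
/- Let D ⊆ ℂ be a domain, let G ⊆ ℂ^n be a domain, let A ⊆ D be a nonempty open set, and let B ⊆ G be a closed ball. Set X := (A × G) ∪ (D × B). Let f : ℂ × ℂ^n → ℂ be a function such that: (a) for every a ∈ A, the function w ↦ f(a,w) is holomorphic on G; (b) for every b ∈ B, the function z ↦ f(z,b) is holomorphic on D; (c) for every b ∈ B there are polynomials P_b, Q_b ∈ ℂ[z] with Q_b ≠ 0 and f(z,b)·Q_b(z) = P_b(z) for all z ∈ D. Then there exist an integer r ≥ 0, holomorphic functions b_0, …, b_r : G → ℂ and a_0, …, a_{r−1} : G → ℂ, and a holomorphic function h : G → ℂ not identically zero, such that f(z,w)·(∑_{j=0}^{r} b_j(w) z^j) = ∑_{j=0}^{r−1} a_j(w) z^j for every (z,w) ∈ X, and such that for every w ∈ B with h(w) ≠ 0 the numbers b_0(w), …, b_r(w)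 are not all zero; in particular, for every such w the function z ↦ f(z,w) is rational. -/
open Set Metric Function Filter Finset



-- one-variable identity theorem
lemma oneVarId {D : Set ℂ} (hD : IsOpen D) (hDc : IsPreconnected D)
    {g : ℂ → ℂ} (hg : DifferentiableOn ℂ g D) {z₀ : ℂ} (hz₀ : z₀ ∈ D)
    (hev : g =ᶠ[nhds z₀] 0) : ∀ z ∈ D, g z = 0 :=
  fun z hz => (hg.analyticOnNhd hD).eqOn_zero_of_preconnected_of_eventuallyEq_zero hDc hz₀ hev hz

-- several-variable identity theorem via restriction to lines
lemma manyVarId {E : Type*} [NormedAddCommGroup E] [NormedSpace ℂ E] {G W : Set E}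
    (hG : IsOpen G) (hGc : IsPreconnected G) (hW : IsOpen W) (hWne : W.Nonempty) (hWG : W ⊆ G)
    {d : E → ℂ} (hd : DifferentiableOn ℂ d G) (h0 : ∀ w ∈ W, d w = 0) :
    ∀ w ∈ G, d w = 0 := by
  set Z : Set E := {w | d w = 0} with hZ
  set U : Set E := G ∩ interior Z with hU
  set V : Set E := G \ closure (interior Z) with hV
  have hUo : IsOpen U := hG.inter isOpen_interior
  have hVo : IsOpen V := hG.sdiff isClosed_closure
  have hdisj : Disjoint U V := by
    refine Set.disjoint_left.2 fun x hx hx' => ?_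
    exact hx'.2 (subset_closure hx.2)
  have hcover : G ⊆ U ∪ V := by
    intro w hw
    by_cases hwc : w ∈ closure (interior Z)
    · left
      obtain ⟨ε, hε, hball⟩ := Metric.isOpen_iff.1 hG w hw
      obtain ⟨z₀, hz₀i, hz₀b⟩ :
          ∃ z₀, z₀ ∈ interior Z ∧ z₀ ∈ ball w ε := by
        have := (Metric.mem_closure_iff.1 hwc) ε hε
        obtain ⟨z₀, hz₀, hdist⟩ := this
        exact ⟨z₀, hz₀, by rwa [Metric.mem_ball, dist_comm]⟩
      have hball_sub : ball w ε ⊆ Z := by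
        intro u hu
        set L : ℂ → E := fun t => z₀ + t • (u - z₀) with hL
        have hLc : Continuous L := continuous_const.add (continuous_id.smul continuous_const)
        set T : Set ℂ := L ⁻¹' (ball w ε) with hT
        have hTo : IsOpen T := isOpen_ball.preimage hLc
        have hTconv : Convex ℝ T := by
          intro x hx y hy a b ha hb hab
          have key : L (a • x + b • y) = a • L x + b • L y := by
            have : a • L x + b • L y
                = (a + b) • z₀ + ((a • x + b • y) • (u - z₀)) := by
              simp only [hL, smul_add, smul_assoc, add_smul]
              abel
            rw [this, hab, one_smul]
          simp only [hT, Set.mem_preimage] at hx hy ⊢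
          rw [key]
          exact (convex_ball w ε) hx hy ha hb hab
        have h0T : (0 : ℂ) ∈ T := by
          simp only [hT, Set.mem_preimage, hL, zero_smul, add_zero]
          exact hz₀b
        have h1T : (1 : ℂ) ∈ T := by
          simp only [hT, Set.mem_preimage, hL, one_smul]
          simpa using hu
        have hdiff : DifferentiableOn ℂ (d ∘ L) T := by
          apply hd.comp
          · intro t _
            exact ((differentiable_id.smul_const (u - z₀)).const_add z₀).differentiableAt.differentiableWithinAt
          · intro t ht
            exact hball ht
        have hev : (d ∘ L) =ᶠ[nhds (0 : ℂ)] 0 := by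
          have hmem : L ⁻¹' (interior Z) ∈ nhds (0 : ℂ) := by
            apply hLc.continuousAt.preimage_mem_nhds
            apply isOpen_interior.mem_nhds
            simpa [hL] using hz₀i
          filter_upwards [hmem] with t ht
          exact (interior_subset : interior Z ⊆ Z) ht
        have := oneVarId hTo hTconv.isPreconnected hdiff h0T hev 1 h1T
        simpa [hL, hZ] using this
      have : ball w ε ⊆ interior Z := interior_maximal hball_sub isOpen_ball
      exact ⟨hw, this (mem_ball_self hε)⟩
    · exact Or.inr ⟨hw, hwc⟩
  have hne : (G ∩ U).Nonempty := by
    obtain ⟨w, hw⟩ := hWne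
    have hwZ : W ⊆ Z := fun x hx => h0 x hx
    exact ⟨w, hWG hw, hWG hw, interior_maximal hwZ hW hw⟩
  have := hGc.subset_left_of_subset_union hUo hVo hdisj hcover hne
  exact fun w hw => (interior_subset : interior Z ⊆ Z) (this hw).2


lemma diffOn_finset_prod {E : Type*} [NormedAddCommGroup E] [NormedSpace ℂ E]
    {ι : Type*} (u : Finset ι) (f : ι → E → ℂ) {s : Set E}
    (h : ∀ i ∈ u, DifferentiableOn ℂ (f i) s) :
    DifferentiableOn ℂ (fun w => ∏ i ∈ u, f i w) s := by
  classical
  induction u using Finset.induction with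
  | empty => simpa using differentiableOn_const 1
  | insert a t hni ih =>
    simp only [Finset.prod_insert hni]
    exact (h a (Finset.mem_insert_self a t)).mul
      (ih fun i hi => h i (Finset.mem_insert_of_mem hi))

lemma diffOn_det {E : Type*} [NormedAddCommGroup E] [NormedSpace ℂ E]
    {m : ℕ} {s : Set E} (M : E → Matrix (Fin m) (Fin m) ℂ)
    (h : ∀ i j, DifferentiableOn ℂ (fun w => M w i j) s) :
    DifferentiableOn ℂ (fun w => (M w).det) s := by
  simp only [Matrix.det_apply']
  apply DifferentiableOn.fun_sum
  intro σ _
  have : DifferentiableOn ℂ (fun w => ∏ i, M w (σ i) i) s :=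
    diffOn_finset_prod _ _ fun i _ => h (σ i) i
  simpa using this.const_mul (Equiv.Perm.sign σ : ℂ)

lemma open_infinite {A : Set ℂ} (hA : IsOpen A) (hAne : A.Nonempty) : A.Infinite := by
  obtain ⟨a, ha⟩ := hAne
  obtain ⟨ε, hε, hball⟩ := Metric.isOpen_iff.1 hA a ha
  apply Set.infinite_of_injective_forall_mem
    (f := fun k : ℕ => a + ((ε / (k + 2) : ℝ) : ℂ))
  case hi =>
    intro k l hkl
    simp only [add_right_inj, Complex.ofReal_inj] at hkl
    have h2' : (0:ℝ) < ε := hε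
    field_simp at hkl
    exact_mod_cast (by linarith : (k:ℝ) = l)

  case hf =>
    intro k
    apply hball
    simp only [Metric.mem_ball, dist_eq_norm, add_sub_cancel_left]
    rw [Complex.norm_real, Real.norm_eq_abs, abs_of_pos (by positivity)]
    rw [div_lt_iff₀ (by positivity)]
    nlinarith [hε]

lemma poly_vanish {A : Set ℂ} (hA : IsOpen A) (hAne : A.Nonempty) {m : ℕ}
    (c : Fin m → ℂ) (h : ∀ z ∈ A, ∑ j : Fin m, c j * z ^ (j : ℕ) = 0) :
    ∀ j, c j = 0 := by
  classical
  set p : Polynomial ℂ := ∑ j : Fin m, Polynomial.C (c j) * Polynomial.X ^ (j : ℕ) with hp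
  have hev : ∀ z, p.eval z = ∑ j : Fin m, c j * z ^ (j : ℕ) := by
    intro z
    simp [hp, Polynomial.eval_finset_sum]
  have hp0 : p = 0 := by
    apply Polynomial.eq_zero_of_infinite_isRoot
    apply Set.Infinite.mono _ (open_infinite hA hAne)
    intro z hz
    simp only [Set.mem_setOf_eq, Polynomial.IsRoot, hev]
    exact h z hz
  intro j
  have := congrArg (fun q => Polynomial.coeff q (j : ℕ)) hp0
  simp only [hp, Polynomial.finset_sum_coeff, Polynomial.coeff_C_mul,
    Polynomial.coeff_X_pow, Polynomial.coeff_zero, mul_ite, mul_one, mul_zero] at this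
  rw [Finset.sum_eq_single j] at this
  · simpa using this
  · intro k _ hk
    simp only [ite_eq_right_iff]
    intro hkj
    exact absurd (Fin.ext hkj).symm hk
  · simp


/-- columns: `inl j ↦ f z w * z^j` (j ≤ r), `inr j ↦ z^j` (j < r). -/
def colF {W : Type*} (f : ℂ → W → ℂ) (r : ℕ) : (Fin (r+1) ⊕ Fin r) → ℂ → W → ℂ
  | Sum.inl j => fun z w => f z w * z ^ (j : ℕ)
  | Sum.inr j => fun z _ => z ^ (j : ℕ)

def detF {W : Type*} (f : ℂ → W → ℂ) (r m : ℕ) (p : Fin m → ℂ)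
    (c : Fin m → Fin (r+1) ⊕ Fin r) (w : W) : ℂ :=
  Matrix.det (Matrix.of fun i j => colF f (r := r) (c j) (p i) w)

/-- **Theorem 2**, one-variable case: let `D ⊆ ℂ`, `G ⊆ ℂ^n` be domains, `A ⊆ D` nonempty
open, `B ⊆ G` a closed (Euclidean) ball, and `X := (A × G) ∪ (D × B)`. If `f` is
separately holomorphic on `X` and for each `b ∈ B` the function `f(·,b)` is rational on
`D` (equal to `P_b/Q_b` with `Q_b ≠ 0`), then there are holomorphic coefficient functions
`b 0, …, b r` and `a 0, …, a (r−1)` on `G` and a holomorphic `h` not identically zero on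
`G` with `f(z,w)·∑ b j (w) z^j = ∑ a j (w) z^j` on `X`, and for every `w ∈ B` with
`h w ≠ 0` the `b j (w)` are not all zero; in particular `f(·,w)` is rational for such `w`. -/
theorem rational_cross_one_variable (n : ℕ)
    (D : Set ℂ) (hDo : IsOpen D) (hDc : IsConnected D)
    (G : Set (EuclideanSpace ℂ (Fin n))) (hGo : IsOpen G) (hGc : IsConnected G)
    (A : Set ℂ) (hAo : IsOpen A) (hAne : A.Nonempty) (hAD : A ⊆ D)
    (w₀ : EuclideanSpace ℂ (Fin n)) (ρ : ℝ) (hρ : 0 < ρ)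
    (B : Set (EuclideanSpace ℂ (Fin n))) (hB : B = Metric.closedBall w₀ ρ) (hBG : B ⊆ G)
    (f : ℂ → EuclideanSpace ℂ (Fin n) → ℂ)
    (ha : ∀ a ∈ A, DifferentiableOn ℂ (f a) G)
    (hb : ∀ b ∈ B, DifferentiableOn ℂ (fun z => f z b) D)
    (hrat : ∀ b ∈ B, ∃ P Q : Polynomial ℂ, Q ≠ 0 ∧
      ∀ z ∈ D, f z b * Q.eval z = P.eval z) :
    ∃ r : ℕ, ∃ b : Fin (r + 1) → EuclideanSpace ℂ (Fin n) → ℂ,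
      ∃ a : Fin r → EuclideanSpace ℂ (Fin n) → ℂ, ∃ h : EuclideanSpace ℂ (Fin n) → ℂ,
      (∀ j, DifferentiableOn ℂ (b j) G) ∧
      (∀ j, DifferentiableOn ℂ (a j) G) ∧
      DifferentiableOn ℂ h G ∧ (∃ w ∈ G, h w ≠ 0) ∧
      (∀ z w, (z, w) ∈ (A ×ˢ G) ∪ (D ×ˢ B) →
        f z w * (∑ j : Fin (r + 1), b j w * z ^ (j : ℕ)) =
          ∑ j : Fin r, a j w * z ^ (j : ℕ)) ∧
      (∀ w ∈ B, h w ≠ 0 →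
        (∃ j, b j w ≠ 0) ∧
        ∃ p q : Polynomial ℂ, q ≠ 0 ∧ ∀ z ∈ D, f z w * q.eval z = p.eval z) := by
  classical
  -- basic differentiability of columns and determinants
  have hcol_diff : ∀ (r : ℕ) (c : Fin (r+1) ⊕ Fin r) (z : ℂ), z ∈ A →
      DifferentiableOn ℂ (fun w => colF f r c z w) G := by
    rintro r (q | q) z hz
    · exact (ha z hz).mul_const _
    · exact differentiableOn_const _
  have hdet_diff : ∀ (r m : ℕ) (p : Fin m → ℂ), (∀ i, p i ∈ A) →
      ∀ c : Fin m → Fin (r+1) ⊕ Fin r, DifferentiableOn ℂ (detF f r m p c) G := by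
    intro r m p hp c
    exact diffOn_det _ fun i j => hcol_diff r (c j) (p i) (hp i)
  -- Baire category step
  have hBcl : IsClosed B := by rw [hB]; exact Metric.isClosed_closedBall
  haveI : Nonempty ↥B := ⟨⟨w₀, by rw [hB]; exact mem_closedBall_self hρ.le⟩⟩
  haveI : CompleteSpace ↥B := hBcl.completeSpace_coe
  set S : ℕ → Set ↥B := fun r =>
    {x | ∀ p : Fin (2*r+1) → ℂ, (∀ i, p i ∈ A) →
      ∀ c : Fin (2*r+1) → Fin (r+1) ⊕ Fin r, Function.Injective c →
        detF f r (2*r+1) p c ↑x = 0} with hS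
  have hdet_cont : ∀ (r m : ℕ) (p : Fin m → ℂ), (∀ i, p i ∈ A) →
      ∀ c : Fin m → Fin (r+1) ⊕ Fin r,
      Continuous fun x : ↥B => detF f r m p c ↑x := by
    intro r m p hp c
    show Continuous ((detF f r m p c) ∘ (Subtype.val : ↥B → EuclideanSpace ℂ (Fin n)))
    refine ContinuousOn.comp_continuous
      ((hdet_diff r m p hp c).continuousOn) continuous_subtype_val ?_
    exact fun x => hBG x.2
  have hSclosed : ∀ r, IsClosed (S r) := by
    intro r
    have : S r = ⋂ p : Fin (2*r+1) → ℂ, ⋂ _ : ∀ i, p i ∈ A,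
        ⋂ c : Fin (2*r+1) → Fin (r+1) ⊕ Fin r, ⋂ _ : Function.Injective c,
          {x : ↥B | detF f r (2*r+1) p c ↑x = 0} := by
      ext x; simp [hS, Set.mem_iInter]
    rw [this]
    refine isClosed_iInter fun p => isClosed_iInter fun hp =>
      isClosed_iInter fun c => isClosed_iInter fun hc => ?_
    exact isClosed_eq (hdet_cont r _ p hp c) continuous_const
  have hScover : ⋃ r, S r = Set.univ := by
    apply Set.eq_univ_of_forall
    intro x
    obtain ⟨P, Q, hQ, hPQ⟩ := hrat ↑x x.2
    rw [Set.mem_iUnion]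
    refine ⟨max Q.natDegree (P.natDegree + 1), ?_⟩
    set r' := max Q.natDegree (P.natDegree + 1) with hr'
    intro p hp c hc
    have hcard : Fintype.card (Fin (2*r'+1)) = Fintype.card (Fin (r'+1) ⊕ Fin r') := by
      simp only [Fintype.card_fin, Fintype.card_sum]
      omega
    have hbij : Function.Bijective c :=
      (Fintype.bijective_iff_injective_and_card c).2 ⟨hc, hcard⟩
    set v : Fin (2*r'+1) → ℂ := fun j =>
      Sum.elim (fun q : Fin (r'+1) => Q.coeff q) (fun q : Fin r' => -(P.coeff q)) (c j) with hv
    have hvne : v ≠ 0 := by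
      obtain ⟨j₀, hj₀⟩ := hbij.2
        (Sum.inl (⟨Q.natDegree, Nat.lt_succ_of_le (le_max_left _ _)⟩ : Fin (r'+1)))
      intro h0
      have hz0 : v j₀ = 0 := congrFun h0 j₀
      rw [hv] at hz0
      simp only [hj₀, Sum.elim_inl] at hz0
      exact hQ (Polynomial.leadingCoeff_eq_zero.1 hz0)
    have hmul : (Matrix.of fun i j => colF f r' (c j) (p i) ↑x).mulVec v = 0 := by
      funext i
      rw [Matrix.mulVec, dotProduct]
      have hre := Fintype.sum_bijective c hbij
        (fun j => colF f r' (c j) (p i) ↑x * v j)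
        (fun t => colF f r' t (p i) ↑x *
          Sum.elim (fun q : Fin (r'+1) => Q.coeff q) (fun q : Fin r' => -(P.coeff q)) t)
        (fun j => by simp [hv])
      simp only [Matrix.of_apply]
      rw [hre, Fintype.sum_sum_type]
      simp only [Sum.elim_inl, Sum.elim_inr, colF]
      have hQe : Q.eval (p i) = ∑ q : Fin (r'+1), Q.coeff (q:ℕ) * (p i)^(q:ℕ) := by
        rw [Polynomial.eval_eq_sum_range' (Nat.lt_succ_of_le (le_max_left _ _)) (p i)]
        rw [Fin.sum_univ_eq_sum_range (fun q => Q.coeff q * (p i)^q) (r'+1)]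
      have hPe : P.eval (p i) = ∑ q : Fin r', P.coeff (q:ℕ) * (p i)^(q:ℕ) := by
        rw [Polynomial.eval_eq_sum_range'
          (lt_of_lt_of_le (Nat.lt_succ_self _) (le_max_right _ _)) (p i)]
        rw [Fin.sum_univ_eq_sum_range (fun q => P.coeff q * (p i)^q) r']
      have hfq := hPQ (p i) (hAD (hp i))
      have hsum1 : ∑ q : Fin (r'+1), f (p i) ↑x * (p i)^(q:ℕ) * Q.coeff (q:ℕ)
          = f (p i) ↑x * Q.eval (p i) := by
        rw [hQe, Finset.mul_sum]
        apply Finset.sum_congr rfl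
        intros
        ring
      have hsum2 : ∑ q : Fin r', (p i)^(q:ℕ) * -(P.coeff (q:ℕ)) = -(P.eval (p i)) := by
        rw [hPe, ← Finset.sum_neg_distrib]
        apply Finset.sum_congr rfl
        intros
        ring
      rw [hsum1, hsum2, hfq]
      simp
    have hdz : (Matrix.of fun i j => colF f r' (c j) (p i) ↑x).det = 0 :=
      Matrix.exists_mulVec_eq_zero_iff.1 ⟨v, hvne, hmul⟩
    exact hdz
  obtain ⟨r, hrne⟩ := nonempty_interior_of_iUnion_of_closed hSclosed hScover
  obtain ⟨x, hx⟩ := hrne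
  obtain ⟨ε, hε, hball⟩ := Metric.mem_nhds_iff.1 (mem_interior_iff_mem_nhds.1 hx)
  -- find an open set W ⊆ B on which all determinants vanish
  obtain ⟨w₂, δ, hδ, hWB, hWzero⟩ :
      ∃ (w₂ : EuclideanSpace ℂ (Fin n)) (δ : ℝ), 0 < δ ∧ ball w₂ δ ⊆ B ∧
        ∀ u ∈ ball w₂ δ, ∀ p : Fin (2*r+1) → ℂ, (∀ i, p i ∈ A) →
          ∀ c : Fin (2*r+1) → Fin (r+1) ⊕ Fin r, Function.Injective c →
            detF f r (2*r+1) p c u = 0 := by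
    set w₁ : EuclideanSpace ℂ (Fin n) := ↑x with hw₁
    have hw₁B : w₁ ∈ B := x.2
    have hw₁d : dist w₁ w₀ ≤ ρ := by
      have := hw₁B
      rw [hB, mem_closedBall] at this
      exact this
    set t : ℝ := min ε ρ / (2*ρ) with ht
    have htpos : 0 < t := div_pos (lt_min hε hρ) (by linarith)
    have htρ : t * ρ = min ε ρ / 2 := by
      rw [ht]
      field_simp
    have hthalf : t ≤ 1/2 := by
      rw [ht]
      rw [div_le_div_iff₀ (by linarith) (by norm_num)]
      have := min_le_right ε ρ
      nlinarith
    set w₂ : EuclideanSpace ℂ (Fin n) := w₁ + t • (w₀ - w₁) with hw₂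
    have hsub1 : w₂ - w₀ = (1 - t) • (w₁ - w₀) := by
      rw [hw₂]
      module
    have hsub2 : w₂ - w₁ = t • (w₀ - w₁) := by
      rw [hw₂]
      module
    have hmin0 : 0 < min ε ρ := lt_min hε hρ
    have hn1 : ‖w₂ - w₀‖ ≤ ρ - min ε ρ / 2 := by
      rw [hsub1, norm_smul, Real.norm_eq_abs, abs_of_nonneg (by linarith)]
      have hd : ‖w₁ - w₀‖ ≤ ρ := by rw [← dist_eq_norm]; exact hw₁d
      nlinarith
    have hn2 : ‖w₂ - w₁‖ ≤ min ε ρ / 2 := by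
      rw [hsub2, norm_smul, Real.norm_eq_abs, abs_of_pos htpos]
      have hd : ‖w₀ - w₁‖ ≤ ρ := by rw [norm_sub_rev, ← dist_eq_norm]; exact hw₁d
      nlinarith
    have hmin : 0 < min ε ρ / 2 := by linarith
    have hBsub : ball w₂ (min ε ρ / 2) ⊆ B := by
      intro u hu
      rw [hB, mem_closedBall]
      have h1 : dist u w₂ < min ε ρ / 2 := hu
      have h2 : dist w₂ w₀ ≤ ρ - min ε ρ / 2 := by rw [dist_eq_norm]; exact hn1
      calc dist u w₀ ≤ dist u w₂ + dist w₂ w₀ := dist_triangle _ _ _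
        _ ≤ ρ := by linarith
    refine ⟨w₂, min ε ρ / 2, hmin, hBsub, ?_⟩
    intro u hu p hp c hc
    have hyb : (⟨u, hBsub hu⟩ : ↥B) ∈ ball x ε := by
      rw [mem_ball, Subtype.dist_eq]
      have h1 : dist u w₂ < min ε ρ / 2 := hu
      have h2 : dist w₂ w₁ ≤ min ε ρ / 2 := by rw [dist_eq_norm]; exact hn2
      calc dist u w₁ ≤ dist u w₂ + dist w₂ w₁ := dist_triangle _ _ _
        _ < min ε ρ / 2 + min ε ρ / 2 := by linarith
        _ ≤ ε := by
            have := min_le_left ε ρ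
            linarith
    exact hball hyb p hp c hc
  -- identity theorem: determinants vanish on all of G
  have hdet_all : ∀ p : Fin (2*r+1) → ℂ, (∀ i, p i ∈ A) →
      ∀ c : Fin (2*r+1) → Fin (r+1) ⊕ Fin r, Function.Injective c →
        ∀ w ∈ G, detF f r (2*r+1) p c w = 0 := by
    intro p hp c hc
    exact manyVarId hGo hGc.isPreconnected isOpen_ball ⟨w₂, mem_ball_self hδ⟩
      (hWB.trans hBG) (hdet_diff r _ p hp c) (fun u hu => hWzero u hu p hp c hc)
  -- maximal rank s
  set P : ℕ → Prop := fun m => ∃ p : Fin m → ℂ, (∀ i, p i ∈ A) ∧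
    ∃ c : Fin m → Fin (r+1) ⊕ Fin r, Function.Injective c ∧
      ∃ w ∈ G, detF f r m p c w ≠ 0 with hPdef
  have hP0 : P 0 := by
    obtain ⟨w, hw⟩ := hGc.nonempty
    exact ⟨finZeroElim, fun i => i.elim0, finZeroElim, fun i => i.elim0, w, hw,
      by simp [detF, Matrix.det_isEmpty]⟩
  have hPtop : ¬ P (2*r+1) := by
    rintro ⟨p, hp, c, hc, w, hwG, hne⟩
    exact hne (hdet_all p hp c hc w hwG)
  set s := Nat.findGreatest P (2*r+1) with hsdef
  have hPs : P s := Nat.findGreatest_spec (Nat.zero_le _) hP0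
  have hslt : s < 2*r+1 :=
    lt_of_le_of_ne (Nat.findGreatest_le _) (fun h => hPtop (h ▸ hPs))
  have hnot : ¬ P (s+1) := Nat.findGreatest_is_greatest (Nat.lt_succ_self s) hslt
  obtain ⟨p, hp, Sc, hScinj, wstar, hwstarG, hdstar⟩ := hPs
  -- a column not used
  obtain ⟨c₀, hc₀⟩ : ∃ c₀ : Fin (r+1) ⊕ Fin r, ∀ i, Sc i ≠ c₀ := by
    by_contra hcon
    push_neg at hcon
    have hsurj : Function.Surjective Sc := fun c => hcon c
    have := Fintype.card_le_of_surjective Sc hsurj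
    simp [Fintype.card_sum] at this
    omega
  set cols : Fin (s+1) → Fin (r+1) ⊕ Fin r := Fin.cons c₀ Sc with hcols
  have hcols_inj : Function.Injective cols :=
    Fin.cons_injective_of_injective (fun ⟨i, hi⟩ => hc₀ i hi) hScinj
  -- minors
  set m : Fin (s+1) → EuclideanSpace ℂ (Fin n) → ℂ := fun j w =>
    Matrix.det (Matrix.of fun i k : Fin s =>
      colF f r (cols (Fin.succAbove j k)) (p i) w) with hmdef
  have hm_diff : ∀ j, DifferentiableOn ℂ (m j) G := by
    intro j
    exact diffOn_det _ fun i k => hcol_diff r _ (p i) (hp i)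
  -- Laplace expansion
  have hexp : ∀ z w, detF f r (s+1) (Fin.cons z p) cols w =
      ∑ j : Fin (s+1), (-1)^(j:ℕ) * colF f r (cols j) z w * m j w := by
    intro z w
    rw [detF, Matrix.det_succ_row_zero]
    apply Finset.sum_congr rfl
    intro j _
    have hsub : (Matrix.of fun i jj : Fin (s+1) => colF f r (cols jj) ((Fin.cons z p : Fin (s+1) → ℂ) i) w).submatrix
        Fin.succ j.succAbove
        = Matrix.of fun i k : Fin s => colF f r (cols (Fin.succAbove j k)) (p i) w := by
      ext i k
      simp [Matrix.submatrix_apply, Fin.cons_succ]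
    rw [hsub]
    simp [hmdef, Fin.cons_zero]
  have hdet0 : ∀ z ∈ A, ∀ w ∈ G,
      ∑ j : Fin (s+1), (-1)^(j:ℕ) * colF f r (cols j) z w * m j w = 0 := by
    intro z hz w hw
    rw [← hexp]
    by_contra hne
    exact hnot ⟨Fin.cons z p, fun i => Fin.cases hz hp i, cols, hcols_inj, w, hw, hne⟩
  -- the coefficient functions
  set b : Fin (r+1) → EuclideanSpace ℂ (Fin n) → ℂ := fun q w => ∑ j : Fin (s+1),
    if cols j = Sum.inl q then (-1)^(j:ℕ) * m j w else 0 with hbdef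
  set a : Fin r → EuclideanSpace ℂ (Fin n) → ℂ := fun q w => ∑ j : Fin (s+1),
    if cols j = Sum.inr q then -((-1)^(j:ℕ) * m j w) else 0 with hadef
  have KEY : ∀ z w, f z w * (∑ q : Fin (r+1), b q w * z^(q:ℕ))
      - ∑ q : Fin r, a q w * z^(q:ℕ)
      = ∑ j : Fin (s+1), (-1)^(j:ℕ) * colF f r (cols j) z w * m j w := by
    intro z w
    have e1 : f z w * (∑ q : Fin (r+1), b q w * z^(q:ℕ))
        = ∑ j : Fin (s+1), ∑ q : Fin (r+1),
            (if cols j = Sum.inl q then (-1)^(j:ℕ) * m j w else 0) * (f z w * z^(q:ℕ)) := by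
      rw [Finset.mul_sum]
      have e1' : ∀ q : Fin (r+1), f z w * (b q w * z^(q:ℕ))
          = ∑ j : Fin (s+1),
            (if cols j = Sum.inl q then (-1)^(j:ℕ) * m j w else 0) * (f z w * z^(q:ℕ)) := by
        intro q
        simp only [hbdef]
        rw [Finset.sum_mul, Finset.mul_sum]
        apply Finset.sum_congr rfl
        intro j _
        ring
      rw [Finset.sum_congr rfl (fun q _ => e1' q), Finset.sum_comm]
    have e2 : ∑ q : Fin r, a q w * z^(q:ℕ)
        = ∑ j : Fin (s+1), ∑ q : Fin r,
            (if cols j = Sum.inr q then -((-1)^(j:ℕ) * m j w) else 0) * z^(q:ℕ) := by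
      have e2' : ∀ q : Fin r, a q w * z^(q:ℕ)
          = ∑ j : Fin (s+1),
            (if cols j = Sum.inr q then -((-1)^(j:ℕ) * m j w) else 0) * z^(q:ℕ) := by
        intro q
        simp only [hadef]
        rw [Finset.sum_mul]
      rw [Finset.sum_congr rfl (fun q _ => e2' q), Finset.sum_comm]
    rw [e1, e2, ← Finset.sum_sub_distrib]
    apply Finset.sum_congr rfl
    intro j _
    rcases hcj : cols j with q₀ | q₀
    · simp only [hcj, Sum.inl.injEq, Sum.inr.injEq, reduceCtorEq, if_false,
        Finset.sum_const_zero, sub_zero, colF]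
      simp only [ite_mul, zero_mul]
      rw [Finset.sum_ite_eq]
      simp
      ring
    · simp only [hcj, Sum.inl.injEq, Sum.inr.injEq, reduceCtorEq, if_false,
        Finset.sum_const_zero, zero_sub, colF]
      simp only [ite_mul, zero_mul]
      rw [Finset.sum_ite_eq]
      simp
      ring
  have hEqA : ∀ z ∈ A, ∀ w ∈ G,
      f z w * (∑ q : Fin (r+1), b q w * z^(q:ℕ)) = ∑ q : Fin r, a q w * z^(q:ℕ) := by
    intro z hz w hw
    have := KEY z w
    rw [hdet0 z hz w hw] at this
    exact sub_eq_zero.1 this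
  have hEqD : ∀ w ∈ B, ∀ z ∈ D,
      f z w * (∑ q : Fin (r+1), b q w * z^(q:ℕ)) = ∑ q : Fin r, a q w * z^(q:ℕ) := by
    intro w hwB z hzD
    have hg : DifferentiableOn ℂ (fun z => f z w * (∑ q : Fin (r+1), b q w * z^(q:ℕ))
        - ∑ q : Fin r, a q w * z^(q:ℕ)) D := by
      apply DifferentiableOn.sub
      · apply (hb w hwB).mul
        apply DifferentiableOn.fun_sum
        intro q _
        exact ((differentiable_pow _).const_mul _).differentiableOn
      · apply DifferentiableOn.fun_sum
        intro q _
        exact ((differentiable_pow _).const_mul _).differentiableOn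
    obtain ⟨a₀, ha₀⟩ := hAne
    have hev : (fun z => f z w * (∑ q : Fin (r+1), b q w * z^(q:ℕ))
        - ∑ q : Fin r, a q w * z^(q:ℕ)) =ᶠ[nhds a₀] 0 := by
      filter_upwards [hAo.mem_nhds ha₀] with z hz
      have := hEqA z hz w (hBG hwB)
      simp [sub_eq_zero.2 this]
    have := oneVarId hDo hDc.isPreconnected hg (hAD ha₀) hev z hzD
    exact sub_eq_zero.1 this
  -- diffferentiability of b, a
  have hb_diff : ∀ q, DifferentiableOn ℂ (b q) G := by
    intro q
    apply DifferentiableOn.fun_sum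
    intro j _
    by_cases hc : cols j = Sum.inl q
    · simp only [hc, if_true]
      exact (hm_diff j).const_mul _
    · simp only [hc, if_false]
      exact differentiableOn_const 0
  have ha_diff : ∀ q, DifferentiableOn ℂ (a q) G := by
    intro q
    apply DifferentiableOn.fun_sum
    intro j _
    by_cases hc : cols j = Sum.inr q
    · simp only [hc, if_true]
      exact ((hm_diff j).const_mul _).neg
    · simp only [hc, if_false]
      exact differentiableOn_const 0
  have hm0 : ∀ w, m 0 w = detF f r s p Sc w := by
    intro w
    apply congrArg Matrix.det
    ext i k
    simp [hmdef, hcols, Fin.succAbove_zero, Fin.cons_succ, detF]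
  refine ⟨r, b, a, m 0, hb_diff, ha_diff, hm_diff 0, ⟨wstar, hwstarG, by
    rw [hm0]; exact hdstar⟩, ?_, ?_⟩
  · rintro z w (⟨hz, hw⟩ | ⟨hz, hw⟩)
    · exact hEqA z hz w hw
    · exact hEqD w hw z hz
  · intro w hwB hhw
    refine ⟨?_, hrat w hwB⟩
    by_contra hall
    push_neg at hall
    have hAzero : ∀ z ∈ A, ∑ q : Fin r, a q w * z^(q:ℕ) = 0 := by
      intro z hz
      have := hEqA z hz w (hBG hwB)
      simp only [hall, zero_mul, Finset.sum_const_zero, mul_zero] at this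
      exact this.symm
    have haz : ∀ q, a q w = 0 := poly_vanish hAo hAne _ hAzero
    have hcols0 : cols 0 = c₀ := by simp [hcols]
    rcases hc₀v : c₀ with q₀ | q₀
    · have hbq : b q₀ w = m 0 w := by
        simp only [hbdef]
        rw [Finset.sum_eq_single (0 : Fin (s+1))]
        · simp [hcols0, hc₀v]
        · intro j _ hj
          rw [if_neg]
          intro hcj
          exact hj (hcols_inj (by rw [hcj, hcols0, hc₀v]))
        · simp
      exact hhw (by rw [← hbq]; exact hall q₀)
    · have haq : a q₀ w = -(m 0 w) := by
        simp only [hadef]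
        rw [Finset.sum_eq_single (0 : Fin (s+1))]
        · simp [hcols0, hc₀v]
        · intro j _ hj
          rw [if_neg]
          intro hcj
          exact hj (hcols_inj (by rw [hcj, hcols0, hc₀v]))
        · simp
      apply hhw
      have h2 := haz q₀
      rw [haq] at h2
      exact neg_eq_zero.1 h2
end

section
/- Let D ⊆ ℂ^m be a domain, let A ⊆ D be a nonempty open set, and let B ⊆ ℂ^n be a closed ball. Set X := (A × ℂ^n) ∪ (D × B). Let f : ℂ^m × ℂ^n → ℂ be a function such that: (a) for every a ∈ A, the function w ↦ f(a,w) is holomorphic on all of ℂ^n; (b) for every b ∈ B, the function z ↦ f(z,b) is holomorphic on D; (c) for every b ∈ B there are polynomials P_b, Q_b ∈ ℂ[z_1,…,z_m] with Q_b ≠ 0 and f(z,b)·Q_b(z) = P_b(z) for all z ∈ D. Then there exist an open connected set G' with B ⊆ G' ⊆ ℂ^n, a set F ⊆ G' that is closed in G' and has empty interior, an integer k ≥ 0, and holomorphic functions a_α, b_α : G' → ℂ for each multi-index α ∈ ℕ^m with |α| ≤ k, such that, setting P(z,w) := ∑_{|α|≤k} a_α(w) z^α and Q(z,w) := ∑_{|α|≤k}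 b_α(w) z^α, one has f(z,w)·Q(z,w) = P(z,w) for every (z,w) ∈ (A × G') ∪ (D × B), and for every w ∈ B∖F the function z ↦ Q(z,w) is not identically zero. -/
open Set Metric

variable {E : Type*} [NormedAddCommGroup E] [NormedSpace ℂ E]

/-- Identity theorem on a convex open set, via restriction to complex lines. -/
lemma eqOn_zero_of_convex {V W : Set E} (hV : IsOpen V) (hVc : Convex ℝ V)
    (hW : IsOpen W) (hWne : W.Nonempty) (hWV : W ⊆ V) {h : E → ℂ}
    (hd : DifferentiableOn ℂ h V) (hz : ∀ x ∈ W, h x = 0) :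
    ∀ x ∈ V, h x = 0 := by
  obtain ⟨u₀, hu₀⟩ := hWne
  intro w hw
  set L : ℂ → E := fun t => u₀ + t • (w - u₀) with hL
  have hLd : Differentiable ℂ L := by
    apply Differentiable.const_add
    exact (differentiable_id.smul_const (w - u₀))
  set T : Set ℂ := L ⁻¹' V with hT
  have hTo : IsOpen T := hV.preimage hLd.continuous
  have hTc : Convex ℝ T := by
    intro t₁ h₁ t₂ h₂ a b ha hb hab
    have : L (a • t₁ + b • t₂) = a • L t₁ + b • L t₂ := by
      have hab' : a • u₀ + b • u₀ = u₀ := by rw [← add_smul, hab, one_smul]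
      have key : ∀ v : E, u₀ + (a • t₁ + b • t₂) • v = a • (u₀ + t₁ • v) + b • (u₀ + t₂ • v) := by
        intro v
        rw [add_smul, smul_assoc, smul_assoc, smul_add, smul_add]
        conv_lhs => rw [← hab']
        abel
      simpa only [hL] using key (w - u₀)
    simp only [hT, Set.mem_preimage] at h₁ h₂ ⊢
    rw [this]
    exact hVc h₁ h₂ ha hb hab
  have h0T : (0 : ℂ) ∈ T := by
    simp only [hT, Set.mem_preimage, hL, zero_smul, add_zero]
    exact hWV hu₀
  have h1T : (1 : ℂ) ∈ T := by
    simp only [hT, Set.mem_preimage, hL, one_smul]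
    simpa using hw
  have hφd : DifferentiableOn ℂ (h ∘ L) T :=
    hd.comp hLd.differentiableOn (fun t ht => ht)
  have hφa : AnalyticOnNhd ℂ (h ∘ L) T := hφd.analyticOnNhd hTo
  have hev : (h ∘ L) =ᶠ[nhds (0 : ℂ)] 0 := by
    have : L ⁻¹' W ∈ nhds (0 : ℂ) := by
      apply (hW.preimage hLd.continuous).mem_nhds
      simp only [Set.mem_preimage, hL, zero_smul, add_zero]
      exact hu₀
    filter_upwards [this] with t ht
    exact hz _ ht
  have := hφa.eqOn_zero_of_preconnected_of_eventuallyEq_zero hTc.isPreconnected h0T hev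
  have h1 := this h1T
  simpa [hL] using h1

/-- Identity theorem on a connected open set. -/
lemma eqOn_zero_of_preconnected' {D A : Set E} (hD : IsOpen D) (hDc : IsPreconnected D)
    (hA : IsOpen A) (hAne : A.Nonempty) (hAD : A ⊆ D) {h : E → ℂ}
    (hd : DifferentiableOn ℂ h D) (hz : ∀ x ∈ A, h x = 0) :
    ∀ x ∈ D, h x = 0 := by
  set S : Set E := {x | ∀ᶠ y in nhds x, h y = 0} with hS
  have hSo : IsOpen S := isOpen_setOf_eventually_nhds
  set v : Set E := (closure S)ᶜ with hv
  have hvo : IsOpen v := isClosed_closure.isOpen_compl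
  have hcover : D ⊆ S ∪ v := by
    intro x hx
    by_cases hxc : x ∈ closure S
    · left
      obtain ⟨δ, hδ, hball⟩ := Metric.isOpen_iff.1 hD x hx
      obtain ⟨s, hsS, hsb⟩ := Metric.mem_closure_iff.1 hxc δ hδ
      rw [dist_comm] at hsb
      have hsball : s ∈ ball x δ := by simpa [mem_ball, dist_comm] using hsb
      obtain ⟨W', hW'o, hsW', hW'z⟩ : ∃ W', IsOpen W' ∧ s ∈ W' ∧ ∀ y ∈ W', h y = 0 := by
        have := hsS
        simp only [hS, Set.mem_setOf_eq] at this
        obtain ⟨U', hU'n, hU'⟩ := Filter.eventually_iff_exists_mem.1 this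
        exact ⟨interior U', isOpen_interior, mem_interior_iff_mem_nhds.2 hU'n,
          fun y hy => hU' y (interior_subset hy)⟩
      have hzball : ∀ y ∈ ball x δ, h y = 0 := by
        apply eqOn_zero_of_convex isOpen_ball (convex_ball x δ)
          (hW'o.inter isOpen_ball) ⟨s, hsW', hsball⟩ Set.inter_subset_right
          (hd.mono hball)
        exact fun y hy => hW'z y hy.1
      simp only [hS, Set.mem_setOf_eq]
      filter_upwards [isOpen_ball.mem_nhds (mem_ball_self hδ)] with y hy
      exact hzball y hy
    · right; exact hxc
  obtain ⟨a₀, ha₀⟩ := hAne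
  have ha₀S : a₀ ∈ S := by
    simp only [hS, Set.mem_setOf_eq]
    filter_upwards [hA.mem_nhds ha₀] with y hy using hz y hy
  have hvempty : D ∩ v = ∅ := by
    by_contra hne
    obtain ⟨p, hp⟩ := hDc S v hSo hvo hcover ⟨a₀, hAD ha₀, ha₀S⟩
      (Set.nonempty_iff_ne_empty.2 hne)
    exact hp.2.2 (subset_closure hp.2.1)
  intro x hx
  have : x ∈ S := by
    rcases hcover hx with h1 | h1
    · exact h1
    · exact absurd (Set.mem_inter hx h1) (by simp [hvempty])
  exact this.self_of_nhds

section helpers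

variable {E' : Type*} [NormedAddCommGroup E'] [NormedSpace ℂ E']

lemma differentiable_finset_prod {ι : Type*} (s : Finset ι) (F : ι → E' → ℂ)
    (h : ∀ i, Differentiable ℂ (F i)) :
    Differentiable ℂ (fun w => ∏ i ∈ s, F i w) := by
  classical
  induction s using Finset.induction with
  | empty => simpa using differentiable_const (1 : ℂ)
  | insert _ _ hnotmem ih =>
    simp only [Finset.prod_insert hnotmem]
    exact (h _).mul ih

lemma differentiable_det {k : ℕ} (M : E' → Matrix (Fin k) (Fin k) ℂ)
    (h : ∀ i j, Differentiable ℂ (fun w => M w i j)) :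
    Differentiable ℂ (fun w => (M w).det) := by
  simp only [Matrix.det_apply']
  apply Differentiable.fun_sum
  intro σ _
  exact Differentiable.const_mul
    (differentiable_finset_prod Finset.univ (fun i w => M w (σ i) i) (fun i => h _ _)) _

end helpers

section box

variable {m k : ℕ}

/-- box exponent to finsupp -/
noncomputable def boxFinsupp (α : Fin m → Fin (k + 1)) : Fin m →₀ ℕ :=
  Finsupp.equivFunOnFinite.symm (fun i => (α i : ℕ))

@[simp] lemma boxFinsupp_apply (α : Fin m → Fin (k + 1)) (i : Fin m) :
    boxFinsupp α i = (α i : ℕ) := rfl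

lemma boxFinsupp_injective : Function.Injective (boxFinsupp (m := m) (k := k)) := by
  intro α α' h
  funext i
  have := congrArg (fun d => d i) h
  simpa [Fin.ext_iff] using this

lemma eval_eq_box_sum (Q : MvPolynomial (Fin m) ℂ) (hdeg : Q.totalDegree ≤ k)
    (z : Fin m → ℂ) :
    MvPolynomial.eval z Q
      = ∑ α : Fin m → Fin (k + 1),
          MvPolynomial.coeff (boxFinsupp α) Q * ∏ i, z i ^ (α i : ℕ) := by
  classical
  rw [MvPolynomial.eval_eq']
  have hsub : Q.support ⊆ Finset.univ.image (boxFinsupp (m := m) (k := k)) := by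
    intro d hd
    have hsum : (∑ i, d i) ≤ k := by
      have h1 := MvPolynomial.le_totalDegree hd
      have h2 : (d.sum fun _ e => e) = ∑ i, d i := Finsupp.sum_fintype _ _ (fun i => rfl)
      omega
    have hlt : ∀ i, d i < k + 1 := by
      intro i
      have : d i ≤ ∑ j, d j := Finset.single_le_sum (fun j _ => Nat.zero_le _) (Finset.mem_univ i)
      omega
    refine Finset.mem_image.2 ⟨fun i => ⟨d i, hlt i⟩, Finset.mem_univ _, ?_⟩
    ext i
    simp
  rw [Finset.sum_subset hsub]
  · rw [Finset.sum_image (fun a _ b _ h => boxFinsupp_injective h)]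
    refine Finset.sum_congr rfl (fun α _ => ?_)
    simp
  · intro d _ hd
    rw [MvPolynomial.notMem_support_iff.1 hd, zero_mul]

lemma coeffs_eq_zero_of_sum_eq_zero (c : (Fin m → Fin (k + 1)) → ℂ)
    (h : ∀ z : Fin m → ℂ, ∑ α : Fin m → Fin (k + 1), c α * ∏ i, z i ^ (α i : ℕ) = 0) :
    ∀ α, c α = 0 := by
  classical
  set pol : MvPolynomial (Fin m) ℂ :=
    ∑ α : Fin m → Fin (k + 1), MvPolynomial.monomial (boxFinsupp α) (c α) with hpol
  have heval : ∀ z, MvPolynomial.eval z pol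
      = ∑ α : Fin m → Fin (k + 1), c α * ∏ i, z i ^ (α i : ℕ) := by
    intro z
    rw [hpol, map_sum]
    refine Finset.sum_congr rfl (fun α _ => ?_)
    rw [MvPolynomial.eval_monomial]
    congr 1
    rw [Finsupp.prod_fintype]
    · simp
    · intro i; exact pow_zero _
  have hpol0 : pol = 0 := by
    apply MvPolynomial.funext
    intro z
    rw [heval z, h z, map_zero]
  intro α
  have : MvPolynomial.coeff (boxFinsupp α) pol = c α := by
    rw [hpol, MvPolynomial.coeff_sum]
    rw [Finset.sum_eq_single α]
    · simp [MvPolynomial.coeff_monomial]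
    · intro β _ hβ
      rw [MvPolynomial.coeff_monomial, if_neg]
      exact fun hc => hβ (boxFinsupp_injective hc)
    · simp
  rw [hpol0] at this
  simpa using this.symm

end box

section emb

variable {m K : ℕ}

def embBox (α : Fin m → Fin (K + 1)) : Fin m → Fin (m * K + 1) := fun i =>
  ⟨(α i : ℕ), by
    have h1 := (α i).2
    have h2 : K ≤ m * K := Nat.le_mul_of_pos_left K i.pos
    omega⟩

@[simp] lemma embBox_apply (α : Fin m → Fin (K + 1)) (i : Fin m) :
    (embBox α i : ℕ) = (α i : ℕ) := rfl

lemma embBox_injective : Function.Injective (embBox (m := m) (K := K)) := by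
  intro α α' h
  funext i
  have := congrFun h i
  simp only [embBox, Fin.mk.injEq] at this
  exact Fin.ext this

lemma embBox_mem_filter (α : Fin m → Fin (K + 1)) :
    embBox α ∈ Finset.univ.filter
      (fun α' : Fin m → Fin (m * K + 1) => ∑ i, (α' i : ℕ) ≤ m * K) := by
  simp only [Finset.mem_filter, Finset.mem_univ, true_and, embBox_apply]
  calc ∑ i, (α i : ℕ) ≤ ∑ _i : Fin m, K :=
        Finset.sum_le_sum (fun i _ => Nat.lt_succ_iff.mp (α i).2)
    _ = m * K := by simp [Finset.sum_const, mul_comm]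

lemma sum_filter_ext (g : (Fin m → Fin (K + 1)) → ℂ) (z : Fin m → ℂ) :
    ∑ α' ∈ Finset.univ.filter
        (fun α' : Fin m → Fin (m * K + 1) => ∑ i, (α' i : ℕ) ≤ m * K),
      (∑ α : Fin m → Fin (K + 1), if embBox α = α' then g α else 0) * ∏ i, z i ^ (α' i : ℕ)
      = ∑ α : Fin m → Fin (K + 1), g α * ∏ i, z i ^ (α i : ℕ) := by
  classical
  simp_rw [Finset.sum_mul, ite_mul, zero_mul]
  rw [Finset.sum_comm]
  refine Finset.sum_congr rfl (fun α _ => ?_)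
  rw [Finset.sum_ite_eq, if_pos (embBox_mem_filter α)]
  simp only [embBox_apply]

end emb

section rowvec

variable {m n K : ℕ}

/-- The row vector of the linear system at sample point `z`, parameter `w`. -/
noncomputable def rowVec (f : (Fin m → ℂ) → EuclideanSpace ℂ (Fin n) → ℂ)
    (K : ℕ) (z : Fin m → ℂ) (w : EuclideanSpace ℂ (Fin n)) :
    ((Fin m → Fin (K + 1)) ⊕ (Fin m → Fin (K + 1))) → ℂ :=
  Sum.elim (fun α => ∏ i, z i ^ (α i : ℕ)) (fun α => -(f z w) * ∏ i, z i ^ (α i : ℕ))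

lemma rowVec_continuous (f : (Fin m → ℂ) → EuclideanSpace ℂ (Fin n) → ℂ)
    {z : Fin m → ℂ} (hz : Differentiable ℂ (f z)) (col) :
    Continuous (fun w => rowVec f K z w col) := by
  cases col with
  | inl α => exact continuous_const
  | inr α => exact (hz.continuous.neg.mul continuous_const)

lemma rowVec_differentiable (f : (Fin m → ℂ) → EuclideanSpace ℂ (Fin n) → ℂ)
    {z : Fin m → ℂ} (hz : Differentiable ℂ (f z)) (col) :
    Differentiable ℂ (fun w => rowVec f K z w col) := by
  cases col with
  | inl α => exact differentiable_const _
  | inr α => exact (hz.neg.mul_const _)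

/-- The degree-`K` exceptional set. -/
def EkSet (f : (Fin m → ℂ) → EuclideanSpace ℂ (Fin n) → ℂ)
    (A : Set (Fin m → ℂ)) (B : Set (EuclideanSpace ℂ (Fin n))) (K : ℕ) :
    Set (EuclideanSpace ℂ (Fin n)) :=
  {w | w ∈ B ∧ ∃ c : ((Fin m → Fin (K + 1)) ⊕ (Fin m → Fin (K + 1))) → ℂ, c ≠ 0 ∧
    ∀ z ∈ A, (∑ col, rowVec f K z w col * c col) = 0}

lemma isClosed_EkSet (f : (Fin m → ℂ) → EuclideanSpace ℂ (Fin n) → ℂ)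
    (A : Set (Fin m → ℂ)) (B : Set (EuclideanSpace ℂ (Fin n))) (hBc : IsClosed B)
    (ha : ∀ a ∈ A, Differentiable ℂ (f a)) (K : ℕ) :
    IsClosed (EkSet f A B K) := by
  apply IsSeqClosed.isClosed
  intro x p hx hlim
  choose hxB c hc0 hceq using hx
  set u : ℕ → ((Fin m → Fin (K + 1)) ⊕ (Fin m → Fin (K + 1))) → ℂ :=
    fun j => (‖c j‖)⁻¹ • c j with hu
  have hunorm : ∀ j, ‖u j‖ = 1 := by
    intro j
    rw [hu]
    simp only [norm_smul, norm_inv, norm_norm]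
    rw [inv_mul_cancel₀ (norm_ne_zero_iff.2 (hc0 j))]
  have husph : ∀ j, u j ∈ Metric.sphere (0 : ((Fin m → Fin (K + 1)) ⊕ (Fin m → Fin (K + 1))) → ℂ) 1 := by
    intro j; simpa [mem_sphere_zero_iff_norm] using hunorm j
  obtain ⟨cl, hclmem, φ, hφmono, hφlim⟩ := (isCompact_sphere (0 : ((Fin m → Fin (K + 1)) ⊕ (Fin m → Fin (K + 1))) → ℂ) 1).tendsto_subseq husph
  refine ⟨hBc.mem_of_tendsto hlim (Filter.Eventually.of_forall hxB), cl, ?_, ?_⟩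
  · intro h0
    rw [h0] at hclmem
    simp at hclmem
  · intro z hz
    have hueq : ∀ j, (∑ col, rowVec f K z (x j) col * u j col) = 0 := by
      intro j
      have := hceq j z hz
      rw [hu]
      simp only [Pi.smul_apply, smul_eq_mul]
      calc (∑ col, rowVec f K z (x j) col * ((‖c j‖)⁻¹ * c j col))
          = (‖c j‖)⁻¹ * ∑ col, rowVec f K z (x j) col * c j col := by
            rw [Finset.mul_sum]; exact Finset.sum_congr rfl (fun col _ => by ring)
        _ = 0 := by rw [this, mul_zero]
    have hxφ : Filter.Tendsto (fun j => x (φ j)) Filter.atTop (nhds p) :=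
      hlim.comp hφmono.tendsto_atTop
    have hterm : Filter.Tendsto (fun j => ∑ col, rowVec f K z (x (φ j)) col * u (φ j) col)
        Filter.atTop (nhds (∑ col, rowVec f K z p col * cl col)) := by
      apply tendsto_finset_sum
      intro col _
      exact (((rowVec_continuous f (ha z hz) col).tendsto p).comp hxφ).mul
        (tendsto_pi_nhds.1 hφlim col)
    have : Filter.Tendsto (fun j => ∑ col, rowVec f K z (x (φ j)) col * u (φ j) col)
        Filter.atTop (nhds 0) := by
      simpa [hueq] using (tendsto_const_nhds :
        Filter.Tendsto (fun _ : ℕ => (0:ℂ)) Filter.atTop (nhds 0))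
    exact tendsto_nhds_unique hterm this

end rowvec

section covering

variable {m n : ℕ}

lemma mem_EkSet_of_rat (f : (Fin m → ℂ) → EuclideanSpace ℂ (Fin n) → ℂ)
    (A D : Set (Fin m → ℂ)) (hAD : A ⊆ D)
    (B : Set (EuclideanSpace ℂ (Fin n))) {w : EuclideanSpace ℂ (Fin n)} (hw : w ∈ B)
    (P Q : MvPolynomial (Fin m) ℂ) (hQ : Q ≠ 0)
    (heq : ∀ z ∈ D, f z w * MvPolynomial.eval z Q = MvPolynomial.eval z P) :
    w ∈ EkSet f A B (max P.totalDegree Q.totalDegree) := by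
  classical
  set K := max P.totalDegree Q.totalDegree with hK
  refine ⟨hw, Sum.elim (fun α => MvPolynomial.coeff (boxFinsupp α) P)
    (fun α => MvPolynomial.coeff (boxFinsupp α) Q), ?_, ?_⟩
  · obtain ⟨d, hd⟩ := MvPolynomial.ne_zero_iff.1 hQ
    have hdsupp : d ∈ Q.support := MvPolynomial.mem_support_iff.2 hd
    have hsum : (∑ i, d i) ≤ K := by
      have h1 := MvPolynomial.le_totalDegree hdsupp
      have h2 : (d.sum fun _ e => e) = ∑ i, d i := Finsupp.sum_fintype _ _ (fun i => rfl)
      omega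
    have hlt : ∀ i, d i < K + 1 := by
      intro i
      have : d i ≤ ∑ j, d j := Finset.single_le_sum (fun j _ => Nat.zero_le _) (Finset.mem_univ i)
      omega
    set α₀ : Fin m → Fin (K + 1) := fun i => ⟨d i, hlt i⟩ with hα₀
    have hbox : boxFinsupp α₀ = d := by ext i; simp [hα₀]
    intro hc
    have := congrFun hc (Sum.inr α₀)
    simp only [Sum.elim_inr, Pi.zero_apply, hbox] at this
    exact hd this
  · intro z hz
    rw [Fintype.sum_sum_type]
    have h1 : ∑ α : Fin m → Fin (K + 1),
        rowVec f K z w (Sum.inl α) * MvPolynomial.coeff (boxFinsupp α) P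
        = MvPolynomial.eval z P := by
      rw [eval_eq_box_sum P (le_max_left _ _) z]
      exact Finset.sum_congr rfl (fun α _ => by simp [rowVec, mul_comm])
    have h2 : ∑ α : Fin m → Fin (K + 1),
        rowVec f K z w (Sum.inr α) * MvPolynomial.coeff (boxFinsupp α) Q
        = -(f z w) * MvPolynomial.eval z Q := by
      rw [eval_eq_box_sum Q (le_max_right _ _) z, Finset.mul_sum]
      exact Finset.sum_congr rfl (fun α _ => by simp [rowVec]; ring)
    simp only [Sum.elim_inl, Sum.elim_inr]
    rw [h1, h2, ← heq z (hAD hz)]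
    ring

end covering

section baire

variable {m n : ℕ}

lemma exists_ball_subset_EkSet (f : (Fin m → ℂ) → EuclideanSpace ℂ (Fin n) → ℂ)
    (A : Set (Fin m → ℂ)) (ha : ∀ a ∈ A, Differentiable ℂ (f a))
    (w₀ : EuclideanSpace ℂ (Fin n)) (ρ : ℝ) (hρ : 0 < ρ)
    (B : Set (EuclideanSpace ℂ (Fin n))) (hB : B = Metric.closedBall w₀ ρ)
    (hcov : ∀ w ∈ B, ∃ K, w ∈ EkSet f A B K) :
    ∃ K : ℕ, ∃ w₂ : EuclideanSpace ℂ (Fin n), ∃ η : ℝ, 0 < η ∧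
      Metric.ball w₂ η ⊆ B ∧ Metric.ball w₂ η ⊆ EkSet f A B K := by
  have hBc : IsClosed B := by rw [hB]; exact Metric.isClosed_closedBall
  haveI : Nonempty ↥B := ⟨⟨w₀, by rw [hB]; exact Metric.mem_closedBall_self hρ.le⟩⟩
  haveI : CompleteSpace ↥B := hBc.completeSpace_coe
  set g : ℕ → Set ↥B := fun K => Subtype.val ⁻¹' EkSet f A B K with hg
  have hgc : ∀ K, IsClosed (g K) :=
    fun K => (isClosed_EkSet f A B hBc ha K).preimage continuous_subtype_val
  have hgu : (⋃ K, g K) = Set.univ := by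
    ext x
    simp only [Set.mem_iUnion, Set.mem_univ, iff_true, hg, Set.mem_preimage]
    exact hcov ↑x x.2
  obtain ⟨K, x, hx⟩ := nonempty_interior_of_iUnion_of_closed hgc hgu
  obtain ⟨ε, hε, hball⟩ := Metric.mem_nhds_iff.1 (mem_interior_iff_mem_nhds.1 hx)
  have hprop : ∀ y ∈ B, dist y (↑x : EuclideanSpace ℂ (Fin n)) < ε → y ∈ EkSet f A B K := by
    intro y hy hdy
    have : (⟨y, hy⟩ : ↥B) ∈ Metric.ball x ε := by
      simp only [Metric.mem_ball, Subtype.dist_eq]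
      exact hdy
    exact hball this
  set w₁ : EuclideanSpace ℂ (Fin n) := ↑x with hw₁
  have hw₁B : w₁ ∈ B := x.2
  have hw₁d : dist w₁ w₀ ≤ ρ := by
    rw [hB] at hw₁B; exact Metric.mem_closedBall.1 hw₁B
  set t : ℝ := min 1 (ε / (2 * ρ)) with ht
  have ht0 : 0 < t := lt_min zero_lt_one (div_pos hε (by positivity))
  have ht1 : t ≤ 1 := min_le_left _ _
  have htε : t ≤ ε / (2 * ρ) := min_le_right _ _
  set w₂ : EuclideanSpace ℂ (Fin n) := w₁ + t • (w₀ - w₁) with hw₂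
  set η : ℝ := t * ρ with hη
  have hη0 : 0 < η := mul_pos ht0 hρ
  have hd21 : dist w₂ w₁ ≤ t * ρ := by
    rw [dist_eq_norm]
    have h1 : w₂ - w₁ = t • (w₀ - w₁) := by rw [hw₂]; abel
    rw [h1, norm_smul]
    simp only [Real.norm_eq_abs, abs_of_pos ht0]
    have h2 : ‖w₀ - w₁‖ ≤ ρ := by rw [← dist_eq_norm, dist_comm]; exact hw₁d
    nlinarith
  have hd20 : dist w₂ w₀ ≤ (1 - t) * ρ := by
    rw [dist_eq_norm]
    have heq2 : w₂ - w₀ = (1 - t) • (w₁ - w₀) := by rw [hw₂]; module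
    rw [heq2, norm_smul]
    simp only [Real.norm_eq_abs, abs_of_nonneg (by linarith : (0:ℝ) ≤ 1 - t)]
    have : ‖w₁ - w₀‖ ≤ ρ := by rwa [← dist_eq_norm]
    nlinarith
  have hsub1 : Metric.ball w₂ η ⊆ B := by
    intro y hy
    rw [hB, Metric.mem_closedBall]
    calc dist y w₀ ≤ dist y w₂ + dist w₂ w₀ := dist_triangle _ _ _
      _ ≤ η + (1 - t) * ρ := add_le_add (le_of_lt (Metric.mem_ball.1 hy)) hd20
      _ = ρ := by rw [hη]; ring
  refine ⟨K, w₂, η, hη0, hsub1, ?_⟩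
  intro y hy
  apply hprop y (hsub1 hy)
  calc dist y w₁ ≤ dist y w₂ + dist w₂ w₁ := dist_triangle _ _ _
    _ < η + t * ρ := add_lt_add_of_lt_of_le (Metric.mem_ball.1 hy) hd21
    _ = 2 * t * ρ := by rw [hη]; ring
    _ ≤ 2 * (ε / (2 * ρ)) * ρ := by nlinarith
    _ = ε := by field_simp

end baire

section detexp

variable {m n : ℕ}

lemma differentiable_polysum {K : ℕ} (g : (Fin m → Fin (K + 1)) → ℂ) :
    Differentiable ℂ (fun ζ : Fin m → ℂ => ∑ α : Fin m → Fin (K + 1),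
      g α * ∏ i, ζ i ^ (α i : ℕ)) := by
  apply Differentiable.fun_sum
  intro α _
  apply Differentiable.const_mul
  apply differentiable_finset_prod
  intro i
  exact (((ContinuousLinearMap.proj i : ((Fin m → ℂ)) →L[ℂ] ℂ)).differentiable).pow _

lemma det_expand (f : (Fin m → ℂ) → EuclideanSpace ℂ (Fin n) → ℂ) {K r : ℕ}
    (ζs : Fin r → (Fin m → ℂ))
    (γe : Fin (r + 1) → ((Fin m → Fin (K + 1)) ⊕ (Fin m → Fin (K + 1))))
    (z : Fin m → ℂ) (w : EuclideanSpace ℂ (Fin n)) :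
    Matrix.det (Matrix.of fun (i j : Fin (r + 1)) => rowVec f K (Fin.snoc (α := fun _ => Fin m → ℂ) ζs z i) w (γe j))
      = ∑ j : Fin (r + 1), rowVec f K z w (γe j) *
          ((-1 : ℂ) ^ (r + (j : ℕ)) *
            Matrix.det (Matrix.of fun (i l : Fin r) =>
              rowVec f K (ζs i) w (γe (j.succAbove l)))) := by
  rw [Matrix.det_succ_row _ (Fin.last r)]
  refine Finset.sum_congr rfl (fun j _ => ?_)
  have h1 : (Matrix.of fun (i j : Fin (r + 1)) => rowVec f K (Fin.snoc (α := fun _ => Fin m → ℂ) ζs z i) w (γe j)).submatrix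
      (Fin.last r).succAbove j.succAbove
      = Matrix.of fun (i l : Fin r) => rowVec f K (ζs i) w (γe (j.succAbove l)) := by
    ext i l
    simp [Matrix.submatrix_apply, Fin.succAbove_last, Fin.snoc_castSucc]
  rw [h1]
  simp only [Matrix.of_apply, Fin.snoc_last, Fin.val_last]
  ring

lemma key_sum (f : (Fin m → ℂ) → EuclideanSpace ℂ (Fin n) → ℂ) {K r : ℕ}
    (ζs : Fin r → (Fin m → ℂ))
    (γe : Fin (r + 1) → ((Fin m → Fin (K + 1)) ⊕ (Fin m → Fin (K + 1))))
    (z : Fin m → ℂ) (w : EuclideanSpace ℂ (Fin n)) :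
    ∑ col, rowVec f K z w col * (∑ j : Fin (r + 1), if γe j = col then
        ((-1 : ℂ) ^ (r + (j : ℕ)) *
          Matrix.det (Matrix.of fun (i l : Fin r) =>
            rowVec f K (ζs i) w (γe (j.succAbove l)))) else 0)
      = Matrix.det (Matrix.of fun (i j : Fin (r + 1)) => rowVec f K (Fin.snoc (α := fun _ => Fin m → ℂ) ζs z i) w (γe j)) := by
  classical
  rw [det_expand f ζs γe z w]
  simp_rw [Finset.mul_sum, mul_ite, mul_zero]
  rw [Finset.sum_comm]
  refine Finset.sum_congr rfl (fun j _ => ?_)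
  rw [Finset.sum_ite_eq, if_pos (Finset.mem_univ _)]

lemma colCoef_j0 (f : (Fin m → ℂ) → EuclideanSpace ℂ (Fin n) → ℂ) {K r : ℕ}
    (ζs : Fin r → (Fin m → ℂ))
    (γs : Fin r → ((Fin m → Fin (K + 1)) ⊕ (Fin m → Fin (K + 1))))
    (j0 : (Fin m → Fin (K + 1)) ⊕ (Fin m → Fin (K + 1)))
    (hj0 : ∀ j, γs j ≠ j0) (w : EuclideanSpace ℂ (Fin n)) :
    (∑ j : Fin (r + 1), if Fin.snoc (α := fun _ => (Fin m → Fin (K + 1)) ⊕ (Fin m → Fin (K + 1))) γs j0 j = j0 then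
        ((-1 : ℂ) ^ (r + (j : ℕ)) *
          Matrix.det (Matrix.of fun (i l : Fin r) =>
            rowVec f K (ζs i) w (Fin.snoc (α := fun _ => (Fin m → Fin (K + 1)) ⊕ (Fin m → Fin (K + 1))) γs j0 (j.succAbove l)))) else 0)
      = Matrix.det (Matrix.of fun (i l : Fin r) => rowVec f K (ζs i) w (γs l)) := by
  classical
  rw [Finset.sum_eq_single_of_mem (Fin.last r) (Finset.mem_univ _)]
  · rw [if_pos (by simp [Fin.snoc_last])]
    have h1 : (Matrix.of fun (i l : Fin r) =>
        rowVec f K (ζs i) w (Fin.snoc (α := fun _ => (Fin m → Fin (K + 1)) ⊕ (Fin m → Fin (K + 1))) γs j0 ((Fin.last r).succAbove l)))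
        = Matrix.of fun (i l : Fin r) => rowVec f K (ζs i) w (γs l) := by
      ext i l
      simp [Fin.succAbove_last, Fin.snoc_castSucc]
    rw [h1]
    simp only [Fin.val_last]
    rw [Even.neg_one_pow ⟨r, rfl⟩, one_mul]
  · intro j _ hj
    rcases Fin.eq_castSucc_or_eq_last j with ⟨j', rfl⟩ | rfl
    · rw [if_neg (by simp [Fin.snoc_castSucc]; exact hj0 j')]
    · exact absurd rfl hj

end detexp

/-- **Theorem 2** (multivariable case, with `G = ℂ^n`): let `D ⊆ ℂ^m` be a domain,
`A ⊆ D` nonempty open, `B ⊆ ℂ^n` a closed (Euclidean) ball, and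
`X := (A × ℂ^n) ∪ (D × B)`. Suppose `f(a,·)` is entire for `a ∈ A`, `f(·,b)` is
holomorphic on `D` for `b ∈ B`, and each `f(·,b)` is rational on `D`. Then there exist a
domain `G'` with `B ⊆ G' ⊆ ℂ^n`, a relatively closed subset `F ⊆ G'` with empty interior,
and polynomials `P(z,w) = ∑_{|α|≤k} a_α(w) z^α`, `Q(z,w) = ∑_{|α|≤k} b_α(w) z^α` with
coefficients holomorphic on `G'`, such that `f·Q = P` on `(A × G') ∪ (D × B)` and
`Q(·,w)` is not identically zero for `w ∈ B∖F`. -/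
theorem rational_cross_multivariable (m n : ℕ)
    (D : Set (Fin m → ℂ)) (hDo : IsOpen D) (hDc : IsConnected D)
    (A : Set (Fin m → ℂ)) (hAo : IsOpen A) (hAne : A.Nonempty) (hAD : A ⊆ D)
    (w₀ : EuclideanSpace ℂ (Fin n)) (ρ : ℝ) (hρ : 0 < ρ)
    (B : Set (EuclideanSpace ℂ (Fin n))) (hB : B = Metric.closedBall w₀ ρ)
    (f : (Fin m → ℂ) → EuclideanSpace ℂ (Fin n) → ℂ)
    (ha : ∀ a ∈ A, Differentiable ℂ (f a))
    (hb : ∀ b ∈ B, DifferentiableOn ℂ (fun z => f z b) D)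
    (hrat : ∀ b ∈ B, ∃ P Q : MvPolynomial (Fin m) ℂ, Q ≠ 0 ∧
      ∀ z ∈ D, f z b * MvPolynomial.eval z Q = MvPolynomial.eval z P) :
    ∃ G' : Set (EuclideanSpace ℂ (Fin n)), B ⊆ G' ∧ IsOpen G' ∧ IsConnected G' ∧
    ∃ F : Set (EuclideanSpace ℂ (Fin n)), F ⊆ G' ∧
      (∃ C, IsClosed C ∧ F = G' ∩ C) ∧ interior F = ∅ ∧
    ∃ k : ℕ, ∃ a b : (Fin m → Fin (k + 1)) → EuclideanSpace ℂ (Fin n) → ℂ,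
      (∀ α, DifferentiableOn ℂ (a α) G') ∧
      (∀ α, DifferentiableOn ℂ (b α) G') ∧
      (∀ z w, (z, w) ∈ (A ×ˢ G') ∪ (D ×ˢ B) →
        f z w *
            (∑ α ∈ Finset.univ.filter (fun α : Fin m → Fin (k + 1) => ∑ i, (α i : ℕ) ≤ k),
              b α w * ∏ i, z i ^ (α i : ℕ)) =
          ∑ α ∈ Finset.univ.filter (fun α : Fin m → Fin (k + 1) => ∑ i, (α i : ℕ) ≤ k),
            a α w * ∏ i, z i ^ (α i : ℕ)) ∧
      (∀ w ∈ B \ F, ∃ z : Fin m → ℂ,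
        (∑ α ∈ Finset.univ.filter (fun α : Fin m → Fin (k + 1) => ∑ i, (α i : ℕ) ≤ k),
          b α w * ∏ i, z i ^ (α i : ℕ)) ≠ 0) := by
  classical
  have hcov : ∀ w ∈ B, ∃ K, w ∈ EkSet f A B K := by
    intro w hw
    obtain ⟨P, Q, hQ, heq⟩ := hrat w hw
    exact ⟨_, mem_EkSet_of_rat f A D hAD B hw P Q hQ heq⟩
  obtain ⟨K, w₂, η, hη0, hUB, hUE⟩ := exists_ball_subset_EkSet f A ha w₀ ρ hρ B hB hcov
  set U := Metric.ball w₂ η with hU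
  have hUo : IsOpen U := Metric.isOpen_ball
  have hUne : U.Nonempty := ⟨w₂, Metric.mem_ball_self hη0⟩
  set N := Fintype.card ((Fin m → Fin (K + 1)) ⊕ (Fin m → Fin (K + 1))) with hN
  set pred : ℕ → Prop := fun s => ∃ ζ : Fin s → (Fin m → ℂ),
    ∃ γ : Fin s → ((Fin m → Fin (K + 1)) ⊕ (Fin m → Fin (K + 1))),
      (∀ i, ζ i ∈ A) ∧ Function.Injective γ ∧ ∃ w ∈ U,
        Matrix.det (Matrix.of fun i j => rowVec f K (ζ i) w (γ j)) ≠ 0 with hpreddef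
  have hpred0 : pred 0 := by
    refine ⟨Fin.elim0, Fin.elim0, fun i => i.elim0, fun i => i.elim0, w₂,
      Metric.mem_ball_self hη0, ?_⟩
    simp [Matrix.det_fin_zero]
  have hpredN : ¬ pred N := by
    rintro ⟨ζ, γ, hζ, hγ, w', hw'U, hdet⟩
    obtain ⟨-, c, hc0, hceq⟩ := hUE hw'U
    have hbij : Function.Bijective γ :=
      (Fintype.bijective_iff_injective_and_card γ).2 ⟨hγ, by simp [hN]⟩
    have hmv : (Matrix.of fun i j => rowVec f K (ζ i) w' (γ j)).mulVec (c ∘ γ) = 0 := by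
      funext i
      simp only [Matrix.mulVec, dotProduct, Matrix.of_apply, Function.comp,
        Pi.zero_apply]
      calc ∑ j, rowVec f K (ζ i) w' (γ j) * c (γ j)
          = ∑ col, rowVec f K (ζ i) w' col * c col :=
            Fintype.sum_bijective γ hbij _ _ (fun j => rfl)
        _ = 0 := hceq (ζ i) (hζ i)
    have hv0 := Matrix.eq_zero_of_mulVec_eq_zero hdet hmv
    apply hc0
    funext col
    obtain ⟨j, rfl⟩ := hbij.2 col
    exact congrFun hv0 j
  set r := Nat.findGreatest pred N with hrdef
  have hrpred : pred r := Nat.findGreatest_spec (Nat.zero_le N) hpred0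
  have hrltN : r < N := by
    have hle : r ≤ N := Nat.findGreatest_le N
    rcases lt_or_eq_of_le hle with h | h
    · exact h
    · exact absurd (h ▸ hrpred) hpredN
  have hgr : ¬ pred (r + 1) := Nat.findGreatest_is_greatest (n := N) (by rw [← hrdef]; omega) (by omega)
  obtain ⟨ζs, γs, hζsA, hγsinj, wst, hwstU, hΔwst⟩ := hrpred
  obtain ⟨j0, hj0⟩ : ∃ j0, ∀ j, γs j ≠ j0 := by
    by_contra hcon
    push_neg at hcon
    have hsurj : Function.Surjective γs := fun col => hcon col
    have := Fintype.card_le_of_surjective γs hsurj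
    simp only [Fintype.card_fin] at this
    omega
  set γe : Fin (r + 1) → ((Fin m → Fin (K + 1)) ⊕ (Fin m → Fin (K + 1))) :=
    Fin.snoc γs j0 with hγedef
  have hγeinj : Function.Injective γe := by
    intro i j h
    rcases Fin.eq_castSucc_or_eq_last i with ⟨i', rfl⟩ | rfl <;>
      rcases Fin.eq_castSucc_or_eq_last j with ⟨j', rfl⟩ | rfl
    · simp only [hγedef, Fin.snoc_castSucc] at h
      exact congrArg Fin.castSucc (hγsinj h)
    · simp only [hγedef, Fin.snoc_castSucc, Fin.snoc_last] at h
      exact absurd h (hj0 i')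
    · simp only [hγedef, Fin.snoc_castSucc, Fin.snoc_last] at h
      exact absurd h.symm (hj0 j')
    · rfl
  have hrows : ∀ z ∈ A, ∀ i : Fin (r + 1),
      Fin.snoc (α := fun _ => Fin m → ℂ) ζs z i ∈ A := by
    intro z hz i
    rcases Fin.eq_castSucc_or_eq_last i with ⟨i', rfl⟩ | rfl
    · rw [Fin.snoc_castSucc]; exact hζsA i'
    · rw [Fin.snoc_last]; exact hz
  have hBzAll : ∀ z ∈ A, ∀ w, Matrix.det (Matrix.of fun (i j : Fin (r + 1)) =>
      rowVec f K (Fin.snoc (α := fun _ => Fin m → ℂ) ζs z i) w (γe j)) = 0 := by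
    intro z hz
    have hvanU : ∀ w ∈ U, Matrix.det (Matrix.of fun (i j : Fin (r + 1)) =>
        rowVec f K (Fin.snoc (α := fun _ => Fin m → ℂ) ζs z i) w (γe j)) = 0 := by
      intro w hw
      by_contra hne
      exact hgr ⟨Fin.snoc ζs z, γe, hrows z hz, hγeinj, w, hw, hne⟩
    have hdiff : Differentiable ℂ (fun w => Matrix.det (Matrix.of fun (i j : Fin (r + 1)) =>
        rowVec f K (Fin.snoc (α := fun _ => Fin m → ℂ) ζs z i) w (γe j))) :=
      differentiable_det _ (fun i j => rowVec_differentiable f (ha _ (hrows z hz i)) _)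
    intro w
    exact eqOn_zero_of_convex isOpen_univ convex_univ hUo hUne (Set.subset_univ U)
      hdiff.differentiableOn hvanU w (Set.mem_univ w)
  set cof : Fin (r + 1) → EuclideanSpace ℂ (Fin n) → ℂ := fun j w =>
    (-1 : ℂ) ^ (r + (j : ℕ)) * Matrix.det (Matrix.of fun (i l : Fin r) =>
      rowVec f K (ζs i) w (γe (j.succAbove l))) with hcofdef
  set colCoef : ((Fin m → Fin (K + 1)) ⊕ (Fin m → Fin (K + 1))) →
      EuclideanSpace ℂ (Fin n) → ℂ := fun col w =>
    ∑ j : Fin (r + 1), if γe j = col then cof j w else 0 with hccdef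
  have hkey : ∀ z ∈ A, ∀ w, ∑ col, rowVec f K z w col * colCoef col w = 0 := by
    intro z hz w
    simp only [hccdef, hcofdef]
    rw [key_sum f ζs γe z w]
    exact hBzAll z hz w
  have hcofdiff : ∀ j, Differentiable ℂ (cof j) := by
    intro j
    rw [hcofdef]
    exact (differentiable_det _ (fun i l =>
      rowVec_differentiable f (ha _ (hζsA i)) _)).const_mul _
  have hccdiff : ∀ col, Differentiable ℂ (colCoef col) := by
    intro col
    rw [hccdef]
    apply Differentiable.fun_sum
    intro j _
    by_cases h : γe j = col
    · simpa [h] using hcofdiff j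
    · simp [h]
  set Δ : EuclideanSpace ℂ (Fin n) → ℂ := fun w =>
    Matrix.det (Matrix.of fun (i l : Fin r) => rowVec f K (ζs i) w (γs l)) with hΔdef
  have hΔdiff : Differentiable ℂ Δ :=
    differentiable_det _ (fun i l => rowVec_differentiable f (ha _ (hζsA i)) _)
  have hccj0 : ∀ w, colCoef j0 w = Δ w := by
    intro w
    simp only [hccdef, hcofdef, hΔdef, hγedef]
    exact colCoef_j0 f ζs γs j0 hj0 w
  set F : Set (EuclideanSpace ℂ (Fin n)) := {w | Δ w = 0} with hFdef
  have hFC : IsClosed F := isClosed_eq hΔdiff.continuous continuous_const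
  have hFint : interior F = ∅ := by
    by_contra hne
    have hne' : (interior F).Nonempty := Set.nonempty_iff_ne_empty.2 hne
    have hvan : ∀ w ∈ Set.univ, Δ w = 0 := by
      apply eqOn_zero_of_convex isOpen_univ convex_univ isOpen_interior hne'
        (Set.subset_univ _) hΔdiff.differentiableOn
      intro x hx
      have hxF : x ∈ F := interior_subset hx
      exact hxF
    exact hΔwst (hvan wst (Set.mem_univ _))
  set ga : (Fin m → Fin (K + 1)) → EuclideanSpace ℂ (Fin n) → ℂ :=
    fun α => colCoef (Sum.inl α) with hgadef
  set gb : (Fin m → Fin (K + 1)) → EuclideanSpace ℂ (Fin n) → ℂ :=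
    fun α => colCoef (Sum.inr α) with hgbdef
  have hmainA : ∀ z ∈ A, ∀ w, f z w * (∑ α : Fin m → Fin (K + 1), gb α w * ∏ i, z i ^ (α i : ℕ))
      = ∑ α : Fin m → Fin (K + 1), ga α w * ∏ i, z i ^ (α i : ℕ) := by
    intro z hz w
    have h0 := hkey z hz w
    rw [Fintype.sum_sum_type] at h0
    have e1 : ∑ α : Fin m → Fin (K + 1), rowVec f K z w (Sum.inl α) * colCoef (Sum.inl α) w
        = ∑ α : Fin m → Fin (K + 1), ga α w * ∏ i, z i ^ (α i : ℕ) :=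
      Finset.sum_congr rfl (fun α _ => by simp [rowVec, hgadef, mul_comm])
    have e2 : ∑ α : Fin m → Fin (K + 1), rowVec f K z w (Sum.inr α) * colCoef (Sum.inr α) w
        = -(f z w) * ∑ α : Fin m → Fin (K + 1), gb α w * ∏ i, z i ^ (α i : ℕ) := by
      rw [Finset.mul_sum]
      refine Finset.sum_congr rfl (fun α _ => ?_)
      simp only [rowVec, Sum.elim_inr, hgbdef]
      ring
    rw [e1, e2] at h0
    linear_combination (-1 : ℂ) * h0
  refine ⟨Set.univ, Set.subset_univ B, isOpen_univ,
    ⟨⟨w₀, Set.mem_univ w₀⟩, convex_univ.isPreconnected⟩, F, Set.subset_univ F,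
    ⟨F, hFC, (Set.univ_inter F).symm⟩, hFint, m * K,
    (fun α' w => ∑ α : Fin m → Fin (K + 1), if embBox α = α' then ga α w else 0),
    (fun α' w => ∑ α : Fin m → Fin (K + 1), if embBox α = α' then gb α w else 0),
    ?_, ?_, ?_, ?_⟩
  · intro α'
    apply Differentiable.differentiableOn
    apply Differentiable.fun_sum
    intro α _
    by_cases h : embBox α = α'
    · simpa [h] using hccdiff (Sum.inl α)
    · simp only [h, if_false]
      exact differentiable_const 0
  · intro α'
    apply Differentiable.differentiableOn
    apply Differentiable.fun_sum
    intro α _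
    by_cases h : embBox α = α'
    · simpa [h] using hccdiff (Sum.inr α)
    · simp only [h, if_false]
      exact differentiable_const 0
  · intro z w hzw
    rw [sum_filter_ext (fun α => gb α w) z, sum_filter_ext (fun α => ga α w) z]
    rcases hzw with ⟨hzA, -⟩ | ⟨hzD, hwB⟩
    · exact hmainA z hzA w
    · have hdiffD : DifferentiableOn ℂ (fun ζ =>
          f ζ w * (∑ α : Fin m → Fin (K + 1), gb α w * ∏ i, ζ i ^ (α i : ℕ))
          - ∑ α : Fin m → Fin (K + 1), ga α w * ∏ i, ζ i ^ (α i : ℕ)) D :=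
        ((hb w hwB).mul (differentiable_polysum (fun α => gb α w)).differentiableOn).sub
          (differentiable_polysum (fun α => ga α w)).differentiableOn
      have hzeroA : ∀ x ∈ A, (fun ζ =>
          f ζ w * (∑ α : Fin m → Fin (K + 1), gb α w * ∏ i, ζ i ^ (α i : ℕ))
          - ∑ α : Fin m → Fin (K + 1), ga α w * ∏ i, ζ i ^ (α i : ℕ)) x = 0 := by
        intro x hx
        simp only
        rw [hmainA x hx w]
        ring
      have hz0 := eqOn_zero_of_preconnected' hDo hDc.isPreconnected hAo hAne hAD
        hdiffD hzeroA z hzD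
      linear_combination hz0
  · intro w hw
    obtain ⟨hwB, hwF⟩ := hw
    have hΔw : Δ w ≠ 0 := by
      intro h0
      exact hwF h0
    by_contra hcon
    push_neg at hcon
    have hSQ : ∀ z : Fin m → ℂ,
        ∑ α : Fin m → Fin (K + 1), gb α w * ∏ i, z i ^ (α i : ℕ) = 0 := by
      intro z
      have := hcon z
      rwa [sum_filter_ext (fun α => gb α w) z] at this
    have hgb0 : ∀ α, gb α w = 0 := coeffs_eq_zero_of_sum_eq_zero _ hSQ
    have hSP_A : ∀ z ∈ A,
        ∑ α : Fin m → Fin (K + 1), ga α w * ∏ i, z i ^ (α i : ℕ) = 0 := by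
      intro z hz
      rw [← hmainA z hz w, hSQ z, mul_zero]
    have hSP : ∀ z : Fin m → ℂ,
        ∑ α : Fin m → Fin (K + 1), ga α w * ∏ i, z i ^ (α i : ℕ) = 0 := by
      intro z
      exact eqOn_zero_of_convex isOpen_univ convex_univ hAo hAne (Set.subset_univ _)
        (differentiable_polysum (fun α => ga α w)).differentiableOn hSP_A z (Set.mem_univ z)
    have hga0 : ∀ α, ga α w = 0 := coeffs_eq_zero_of_sum_eq_zero _ hSP
    have hcc0 : colCoef j0 w = 0 := by
      cases j0 with
      | inl α => exact hga0 α
      | inr α => exact hgb0 α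
    rw [hccj0 w] at hcc0
    exact hΔw hcc0
end

section
/- Let Ω ⊆ ℂ^n be a domain and let F : ℂ^m × Ω → ℂ be holomorphic (on the open subset ℂ^m × Ω of ℂ^{m+n}). Suppose there exist an integer k₀ ≥ 0 and a nonempty open set U ⊆ Ω such that for every w ∈ U the function z ↦ F(z,w) is a polynomial of total degree at most k₀, i.e. F(z,w) = ∑_{|α| ≤ k₀} a_α(w) z^α for some complex numbers a_α(w). Then there exist holomorphic functions c_α : Ω → ℂ, one for each multi-index α ∈ ℕ^m with |α| ≤ k₀, such that F(z,w) = ∑_{|α| ≤ k₀} c_α(w)·z^α for every (z,w) ∈ ℂ^m × Ω. -/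
open Set Filter Metric



/-- Identity theorem in several (Banach) complex variables, proved by slicing
along complex lines and using the 1-D identity theorem. First, the ball version. -/
theorem eq_zero_on_ball_of_eventually_zero {E : Type*} [NormedAddCommGroup E]
    [NormedSpace ℂ E] {f : E → ℂ} {Ω : Set E} (hf : DifferentiableOn ℂ f Ω)
    {a : E} {r : ℝ} (hr : 0 < r) (hball : Metric.ball a r ⊆ Ω)
    (ha : f =ᶠ[nhds a] 0) : ∀ p ∈ Metric.ball a r, f p = 0 := by
  intro p hp
  set v : E := p - a with hv
  have hlin : Differentiable ℂ (fun t : ℂ => a + t • v) :=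
    (differentiable_id.smul_const v).const_add a
  set L : ℂ →ᵃ[ℝ] E :=
    { toFun := fun t => a + t • v
      linear := (LinearMap.toSpanSingleton ℂ E v).restrictScalars ℝ
      map_vadd' := by
        intro q w
        show a + (w + q) • v = w • v + (a + q • v)
        rw [add_smul]; abel }
  set D : Set ℂ := (fun t : ℂ => a + t • v) ⁻¹' Metric.ball a r with hD
  have hDopen : IsOpen D := isOpen_ball.preimage (hlin.continuous)
  have hDconv : Convex ℝ D := by
    have : D = L ⁻¹' Metric.ball a r := rfl
    rw [this]
    exact (convex_ball a r).affine_preimage L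
  have h0 : (0 : ℂ) ∈ D := by simp [hD, hr]
  have h1 : (1 : ℂ) ∈ D := by simpa [hD, hv] using hp
  have hg : DifferentiableOn ℂ (fun t : ℂ => f (a + t • v)) D := by
    apply DifferentiableOn.comp hf hlin.differentiableOn
    intro t ht
    exact hball ht
  have hgan : AnalyticOnNhd ℂ (fun t : ℂ => f (a + t • v)) D :=
    hg.analyticOnNhd hDopen
  have hg0 : (fun t : ℂ => f (a + t • v)) =ᶠ[nhds 0] 0 := by
    have htend : Filter.Tendsto (fun t : ℂ => a + t • v) (nhds 0) (nhds a) := by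
      have := hlin.continuous.tendsto (0 : ℂ)
      simpa using this
    exact htend.eventually ha
  have := hgan.eqOn_zero_of_preconnected_of_eventuallyEq_zero
    hDconv.isPreconnected h0 hg0 h1
  simpa [hv] using this

theorem eqOn_zero_of_eqOn_zero_open {E : Type*} [NormedAddCommGroup E]
    [NormedSpace ℂ E] {f : E → ℂ} {Ω : Set E} (hΩo : IsOpen Ω)
    (hΩc : IsPreconnected Ω) (hf : DifferentiableOn ℂ f Ω)
    {U : Set E} (hUo : IsOpen U) (hUne : U.Nonempty) (hUΩ : U ⊆ Ω)
    (hz : Set.EqOn f 0 U) : Set.EqOn f 0 Ω := by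
  set A : Set E := {x | f =ᶠ[nhds x] 0} with hA
  have hAopen : IsOpen A := isOpen_setOf_eventually_nhds
  have key : ∀ x ∈ Ω, x ∈ closure A → x ∈ A := by
    intro x hxΩ hxcl
    obtain ⟨r, hr, hballΩ⟩ := Metric.isOpen_iff.1 hΩo x hxΩ
    obtain ⟨y, hyA, hxy⟩ := Metric.mem_closure_iff.1 hxcl (r/2) (by positivity)
    have hball2 : Metric.ball y (r/2) ⊆ Ω := by
      intro q hq
      apply hballΩ
      rw [Metric.mem_ball] at hq ⊢
      calc dist q x ≤ dist q y + dist y x := dist_triangle _ _ _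
        _ < r/2 + r/2 := by rw [dist_comm y x]; exact add_lt_add hq hxy
        _ = r := by ring
    have hzero : ∀ p ∈ Metric.ball y (r/2), f p = 0 :=
      eq_zero_on_ball_of_eventually_zero hf (by positivity) hball2 hyA
    have hx : x ∈ Metric.ball y (r/2) := by
      rw [Metric.mem_ball]; exact hxy
    exact Filter.eventually_of_mem (isOpen_ball.mem_nhds hx) hzero
  obtain ⟨u₀, hu₀⟩ := hUne
  have hu₀A : u₀ ∈ A :=
    Filter.eventually_of_mem (hUo.mem_nhds hu₀) hz
  have hsub : Ω ⊆ A := by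
    apply hΩc.subset_left_of_subset_union hAopen isClosed_closure.isOpen_compl
      (disjoint_compl_right.mono_left subset_closure) ?_ ⟨u₀, hUΩ hu₀, hu₀A⟩
    intro x hx
    by_cases hcl : x ∈ closure A
    · exact Or.inl (key x hx hcl)
    · exact Or.inr hcl
  intro x hx
  exact (hsub hx).self_of_nhds


/-- Monomials with distinct exponent vectors are linearly independent over ℂ. -/
theorem mono_coeffs_zero {m k : ℕ} (S : Finset (Fin m → Fin (k + 1)))
    (v : {α // α ∈ S} → ℂ)
    (hv : ∀ z : Fin m → ℂ,
      ∑ α : {α // α ∈ S}, v α * ∏ i, z i ^ ((α : Fin m → Fin (k + 1)) i : ℕ) = 0) :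
    v = 0 := by
  classical
  set d : {α // α ∈ S} → (Fin m →₀ ℕ) :=
    fun α => Finsupp.equivFunOnFinite.symm fun i => ((α : Fin m → Fin (k + 1)) i : ℕ) with hd'
  have hd : Function.Injective d := by
    intro a b hab
    have h1 : (fun i => ((a : Fin m → Fin (k + 1)) i : ℕ))
        = fun i => ((b : Fin m → Fin (k + 1)) i : ℕ) :=
      Finsupp.equivFunOnFinite.symm.injective hab
    apply Subtype.ext
    funext i
    exact Fin.val_injective (congrFun h1 i)
  set p : MvPolynomial (Fin m) ℂ :=
    ∑ α : {α // α ∈ S}, MvPolynomial.monomial (d α) (v α) with hp'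
  have hdapp : ∀ (α : {α // α ∈ S}) (i : Fin m),
      d α i = ((α : Fin m → Fin (k + 1)) i : ℕ) := by
    intro α i; simp [hd']
  have hp : p = 0 := by
    apply MvPolynomial.funext
    intro z
    rw [hp', map_sum, map_zero]
    rw [← hv z]
    refine Finset.sum_congr rfl fun α _ => ?_
    rw [MvPolynomial.eval_monomial]
    congr 1
    rw [Finsupp.prod_fintype _ _ (fun i => pow_zero _)]
    exact Finset.prod_congr rfl fun i _ => by rw [hdapp]
  funext α
  have hc := congrArg (MvPolynomial.coeff (d α)) hp
  rw [hp', MvPolynomial.coeff_sum, MvPolynomial.coeff_zero] at hc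
  have : ∑ β : {α // α ∈ S}, ((MvPolynomial.monomial (d β)) (v β)).coeff (d α) = v α := by
    rw [Finset.sum_eq_single α]
    · rw [MvPolynomial.coeff_monomial, if_pos rfl]
    · intro b _ hbα
      rw [MvPolynomial.coeff_monomial, if_neg (fun h => hbα (hd h))]
    · intro h; exact absurd (Finset.mem_univ α) h
  rw [this] at hc
  simpa using hc




/-- There are finitely many points `z_j` and coefficients `M` such that the coefficient
vector of any polynomial supported on exponents in `S` can be recovered linearly
from its values at the `z_j`. -/
theorem exists_eval_points (m k : ℕ) (S : Finset (Fin m → Fin (k + 1))) :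
    ∃ (N : ℕ) (zc : Fin N → (Fin m → ℂ)) (M : {α // α ∈ S} → Fin N → ℂ),
      ∀ a : {α // α ∈ S} → ℂ, ∀ α : {α // α ∈ S},
        a α = ∑ j, M α j *
          (∑ β : {α // α ∈ S}, a β * ∏ i, (zc j) i ^ ((β : Fin m → Fin (k + 1)) i : ℕ)) := by
  classical
  set V := ({α // α ∈ S} → ℂ)
  set φ : (Fin m → ℂ) → V := fun z α => ∏ i, z i ^ ((α : Fin m → Fin (k + 1)) i : ℕ) with hφ
  set pair : V → V →ₗ[ℂ] ℂ := fun u => ∑ α, u α • LinearMap.proj α with hpair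
  have pair_apply : ∀ u w : V, pair u w = ∑ α, u α * w α := by
    intro u w
    simp only [hpair, LinearMap.sum_apply, LinearMap.smul_apply, smul_eq_mul]
    exact Finset.sum_congr rfl fun α _ => rfl
  have hspan : Submodule.span ℂ (Set.range φ) = ⊤ := by
    by_contra hne
    obtain ⟨f, hf0, hfmap⟩ := Submodule.exists_dual_map_eq_bot_of_lt_top
      (lt_top_iff_ne_top.mpr hne) inferInstance
    have hfz : ∀ z, f (φ z) = 0 := by
      intro z
      have hmem : f (φ z) ∈ (Submodule.span ℂ (Set.range φ)).map f :=
        ⟨φ z, Submodule.subset_span ⟨z, rfl⟩, rfl⟩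
      rw [hfmap] at hmem
      simpa using hmem
    have hvz : (fun α : {α // α ∈ S} => f (fun j => if α = j then 1 else 0)) = 0 := by
      apply mono_coeffs_zero S
      intro z
      have h1 := LinearMap.pi_apply_eq_sum_univ f (φ z)
      rw [hfz z] at h1
      rw [eq_comm] at h1
      calc ∑ α : {α // α ∈ S}, (f fun j => if α = j then 1 else 0) * φ z α
          = ∑ α : {α // α ∈ S}, φ z α • f fun j => if α = j then 1 else 0 :=
            Finset.sum_congr rfl fun α _ => mul_comm _ _
        _ = 0 := h1
    apply hf0
    apply LinearMap.ext
    intro u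
    rw [LinearMap.pi_apply_eq_sum_univ f u]
    have hz : ∀ α : {α // α ∈ S}, (f fun j => if α = j then 1 else 0) = 0 :=
      fun α => congrFun hvz α
    rw [LinearMap.zero_apply]
    apply Finset.sum_eq_zero
    intro α _
    rw [hz α, smul_zero]
  obtain ⟨s, hs_sub, hs_span, hs_li⟩ := exists_linearIndependent ℂ (Set.range φ)
  rw [hspan] at hs_span
  have hsfin : s.Finite := hs_li.setFinite
  haveI : Fintype s := hsfin.fintype
  let b : Module.Basis s ℂ V := Module.Basis.mk hs_li (by rw [Subtype.range_coe]; exact hs_span.ge)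
  set T : V →ₗ[ℂ] (s → ℂ) := LinearMap.pi (fun j => pair (j : V)) with hT
  have hTapp : ∀ (w : V) (j : s), T w j = pair (j : V) w := fun w j => rfl
  have hTinj : Function.Injective T := by
    rw [← LinearMap.ker_eq_bot, Submodule.eq_bot_iff]
    intro w hw
    rw [LinearMap.mem_ker] at hw
    have hker : ∀ u ∈ s, pair w u = 0 := by
      intro u hu
      have h3 := congrFun hw ⟨u, hu⟩
      rw [hTapp] at h3
      simp only [Pi.zero_apply] at h3
      rw [pair_apply] at h3 ⊢
      rw [← h3]
      exact Finset.sum_congr rfl fun α _ => mul_comm _ _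
    have hall : ∀ u, pair w u = 0 := by
      have hle : Submodule.span ℂ s ≤ LinearMap.ker (pair w) :=
        Submodule.span_le.mpr fun u hu => LinearMap.mem_ker.mpr (hker u hu)
      rw [hs_span] at hle
      intro u
      exact LinearMap.mem_ker.mp (hle Submodule.mem_top)
    funext α
    have h4 := hall (Pi.single α 1)
    rw [pair_apply] at h4
    exact (by simpa [Pi.single_apply, mul_ite] using h4 : w α = 0)
  have hdim : Module.finrank ℂ V = Module.finrank ℂ (s → ℂ) := by
    rw [Module.finrank_eq_card_basis b, Module.finrank_pi]
  have hTsurj : Function.Surjective T :=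
    (LinearMap.injective_iff_surjective_of_finrank_eq_finrank hdim).mp hTinj
  set E : V ≃ₗ[ℂ] (s → ℂ) := LinearEquiv.ofBijective T ⟨hTinj, hTsurj⟩ with hE
  have hEapp : ∀ w : V, E w = T w := fun w => rfl
  have hchoose : ∀ j : s, ∃ z, φ z = (j : V) := fun j => hs_sub j.2
  choose zc hzc using hchoose
  obtain ⟨e⟩ : Nonempty (Fin (Fintype.card s) ≃ s) := ⟨(Fintype.equivFin s).symm⟩
  refine ⟨Fintype.card s, fun j => zc (e j),
    fun α j => E.symm (fun j' => if e j = j' then 1 else 0) α, ?_⟩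
  intro a α
  set vals : s → ℂ := fun j =>
    ∑ β : {α // α ∈ S}, a β * ∏ i, (zc j) i ^ ((β : Fin m → Fin (k + 1)) i : ℕ) with hvals
  have hEa : E a = vals := by
    funext j
    rw [hEapp, hTapp, pair_apply, hvals]
    refine Finset.sum_congr rfl fun β _ => ?_
    rw [mul_comm]
    congr 1
    have h5 := congrFun (hzc j) β
    rw [hφ] at h5
    exact h5.symm
  have ha : a = E.symm vals := by rw [← hEa, LinearEquiv.symm_apply_apply]
  conv_lhs => rw [ha]
  rw [show (E.symm vals α : ℂ) = ∑ i : s, vals i •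
      ((LinearMap.proj α).comp (E.symm : (s → ℂ) →ₗ[ℂ] V))
        (fun j => if i = j then 1 else 0) from
    LinearMap.pi_apply_eq_sum_univ ((LinearMap.proj α).comp (E.symm : (s → ℂ) →ₗ[ℂ] V)) vals]
  rw [← Equiv.sum_comp e (fun i : s => vals i •
      ((LinearMap.proj α).comp (E.symm : (s → ℂ) →ₗ[ℂ] V))
        (fun j => if i = j then 1 else 0))]
  exact Finset.sum_congr rfl fun j _ => mul_comm _ _


theorem diff_finset_prod {ι E : Type*} [NormedAddCommGroup E] [NormedSpace ℂ E]
    (g : ι → E → ℂ) (hg : ∀ i, Differentiable ℂ (g i)) (s : Finset ι) :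
    Differentiable ℂ (fun x => ∏ i ∈ s, g i x) := by
  classical
  induction s using Finset.induction_on with
  | empty => simp [differentiable_const (1 : ℂ)]
  | @insert a s ha ih =>
    simp only [Finset.prod_insert ha]
    exact (hg a).mul ih


/-- If `F` is holomorphic on `ℂ^m × Ω` (with `Ω ⊆ ℂ^n` a domain) and for every `w` in
some nonempty open `U ⊆ Ω` the function `z ↦ F(z,w)` is a polynomial of total degree at
most `k₀`, then `F(z,w) = ∑_{|α| ≤ k₀} c_α(w) z^α` on all of `ℂ^m × Ω` with coefficients
`c_α` holomorphic on `Ω`. -/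
theorem polynomial_in_first_variable (m n : ℕ)
    (Ω : Set (Fin n → ℂ)) (hΩo : IsOpen Ω) (hΩc : IsConnected Ω)
    (F : (Fin m → ℂ) × (Fin n → ℂ) → ℂ)
    (hF : DifferentiableOn ℂ F ((Set.univ : Set (Fin m → ℂ)) ×ˢ Ω))
    (k₀ : ℕ) (U : Set (Fin n → ℂ)) (hUo : IsOpen U) (hUne : U.Nonempty) (hUΩ : U ⊆ Ω)
    (hpoly : ∀ w ∈ U, ∃ a : (Fin m → Fin (k₀ + 1)) → ℂ, ∀ z : Fin m → ℂ,
      F (z, w) =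
        ∑ α ∈ Finset.univ.filter (fun α : Fin m → Fin (k₀ + 1) => ∑ i, (α i : ℕ) ≤ k₀),
          a α * ∏ i, z i ^ (α i : ℕ)) :
    ∃ c : (Fin m → Fin (k₀ + 1)) → (Fin n → ℂ) → ℂ,
      (∀ α, DifferentiableOn ℂ (c α) Ω) ∧
      ∀ z : Fin m → ℂ, ∀ w ∈ Ω,
        F (z, w) =
          ∑ α ∈ Finset.univ.filter (fun α : Fin m → Fin (k₀ + 1) => ∑ i, (α i : ℕ) ≤ k₀),
            c α w * ∏ i, z i ^ (α i : ℕ) := by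
  classical
  set S : Finset (Fin m → Fin (k₀ + 1)) :=
    Finset.univ.filter (fun α : Fin m → Fin (k₀ + 1) => ∑ i, (α i : ℕ) ≤ k₀) with hS
  obtain ⟨N, zc, M, hM⟩ := exists_eval_points m k₀ S
  set c : (Fin m → Fin (k₀ + 1)) → (Fin n → ℂ) → ℂ := fun α w =>
    if h : α ∈ S then ∑ j, M ⟨α, h⟩ j * F (zc j, w) else 0 with hc
  have hslice : ∀ z0 : Fin m → ℂ, DifferentiableOn ℂ (fun w => F (z0, w)) Ω := by
    intro z0
    have hg : Differentiable ℂ (fun w : Fin n → ℂ => (z0, w)) :=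
      (differentiable_const z0).prodMk differentiable_id
    exact hF.comp hg.differentiableOn (fun w hw => Set.mem_prod.mpr ⟨Set.mem_univ _, hw⟩)
  have hcdiff : ∀ α, DifferentiableOn ℂ (c α) Ω := by
    intro α
    by_cases h : α ∈ S
    · have hceq : (c α) = fun w => ∑ j, M ⟨α, h⟩ j * F (zc j, w) := by
        funext w; simp only [hc, dif_pos h]
      rw [hceq]
      exact DifferentiableOn.fun_sum fun j _ => (hslice (zc j)).const_mul _
    · have hceq : (c α) = fun _ => 0 := by
        funext w; simp only [hc, dif_neg h]
      rw [hceq]; exact differentiableOn_const 0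
  have hcU : ∀ w ∈ U, ∀ z, F (z, w) = ∑ α ∈ S, c α w * ∏ i, z i ^ (α i : ℕ) := by
    intro w hw
    obtain ⟨a, ha⟩ := hpoly w hw
    have hval : ∀ jz : Fin m → ℂ,
        (∑ β : {α // α ∈ S}, a β.1 * ∏ i, jz i ^ ((β : Fin m → Fin (k₀+1)) i : ℕ))
          = F (jz, w) := by
      intro jz
      rw [Finset.sum_coe_sort S (fun α => a α * ∏ i, jz i ^ (α i : ℕ))]
      exact (ha jz).symm
    have hca : ∀ (α) (h : α ∈ S), c α w = a α := by
      intro α h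
      have hMa := hM (fun β => a β.1) ⟨α, h⟩
      simp only [hc, dif_pos h]
      rw [hMa]
      exact Finset.sum_congr rfl fun j _ => by rw [hval (zc j)]
    intro z
    rw [ha z]
    exact Finset.sum_congr rfl fun α hα => by rw [hca α hα]
  set G : (Fin m → ℂ) × (Fin n → ℂ) → ℂ :=
    fun p => F p - ∑ α ∈ S, c α p.2 * ∏ i, p.1 i ^ (α i : ℕ) with hG
  have hGdiff : DifferentiableOn ℂ G ((Set.univ : Set (Fin m → ℂ)) ×ˢ Ω) := by
    apply hF.sub
    apply DifferentiableOn.fun_sum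
    intro α _
    apply DifferentiableOn.mul
    · exact (hcdiff α).comp differentiable_snd.differentiableOn (fun p hp => hp.2)
    · apply Differentiable.differentiableOn
      apply diff_finset_prod (g := fun (i : Fin m) (p : (Fin m → ℂ) × (Fin n → ℂ)) =>
        p.1 i ^ (α i : ℕ))
      intro i
      exact (((ContinuousLinearMap.proj (R := ℂ) (φ := fun _ : Fin m => ℂ)
        i).differentiable).comp differentiable_fst).pow _
  have hGU : Set.EqOn G 0 ((Set.univ : Set (Fin m → ℂ)) ×ˢ U) := by
    intro p hp
    simp only [hG, Pi.zero_apply]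
    rw [sub_eq_zero]
    exact hcU p.2 hp.2 p.1
  have hEq : Set.EqOn G 0 ((Set.univ : Set (Fin m → ℂ)) ×ˢ Ω) := by
    obtain ⟨u₀, hu₀⟩ := hUne
    exact eqOn_zero_of_eqOn_zero_open (isOpen_univ.prod hΩo)
      (isPreconnected_univ.prod hΩc.isPreconnected) hGdiff
      (isOpen_univ.prod hUo)
      ⟨(0, u₀), Set.mem_prod.mpr ⟨Set.mem_univ _, hu₀⟩⟩
      (Set.prod_mono_right hUΩ) hGU
  refine ⟨c, hcdiff, ?_⟩
  intro z w hw
  have hzw := hEq (Set.mem_prod.mpr ⟨Set.mem_univ _, hw⟩ : (z, w) ∈ _)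
  simp only [hG, Pi.zero_apply] at hzw
  exact sub_eq_zero.mp hzw
end

section
/- Let D ⊆ ℂ^m and G ⊆ ℂ^n be domains, let F : D × G → ℂ be holomorphic (on the open subset D × G of ℂ^{m+n}), and let B ⊆ G be a closed ball. Define B' := {w ∈ B : there exists z ∈ D with F(z,w) ≠ 0}. Then B' is open in the subspace topology of B, and either B' is empty or B' is dense in B. -/
/-- Let `F` be holomorphic on `D × G` and `B ⊆ G` a closed (Euclidean) ball. Then
`B' := {w ∈ B : F(·,w) ≢ 0 on D}` is open in the subspace topology of `B`, and either
`B'` is empty or `B'` is dense in `B`. -/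
theorem not_identically_zero_set_open_dense (m n : ℕ)
    (D : Set (Fin m → ℂ)) (hDo : IsOpen D) (hDc : IsConnected D)
    (G : Set (EuclideanSpace ℂ (Fin n))) (hGo : IsOpen G) (hGc : IsConnected G)
    (F : (Fin m → ℂ) × EuclideanSpace ℂ (Fin n) → ℂ)
    (hF : DifferentiableOn ℂ F (D ×ˢ G))
    (w₀ : EuclideanSpace ℂ (Fin n)) (ρ : ℝ) (hρ : 0 < ρ)
    (B : Set (EuclideanSpace ℂ (Fin n))) (hB : B = Metric.closedBall w₀ ρ) (hBG : B ⊆ G) :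
    (∃ U, IsOpen U ∧ {w ∈ B | ∃ z ∈ D, F (z, w) ≠ 0} = B ∩ U) ∧
      ({w ∈ B | ∃ z ∈ D, F (z, w) ≠ 0} = ∅ ∨
        B ⊆ closure {w ∈ B | ∃ z ∈ D, F (z, w) ≠ 0}) := by
  constructor
  · refine ⟨⋃ z ∈ D, (G ∩ (fun w => F (z, w)) ⁻¹' {0}ᶜ), ?_, ?_⟩
    · refine isOpen_biUnion fun z hz => ?_
      refine ContinuousOn.isOpen_inter_preimage ?_ hGo (isOpen_compl_singleton)
      exact hF.continuousOn.comp (Continuous.continuousOn (by continuity))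
        (fun w hw => ⟨hz, hw⟩)
    · ext w
      simp only [Set.mem_setOf_eq, Set.mem_inter_iff, Set.mem_iUnion,
        Set.mem_preimage, Set.mem_compl_iff, Set.mem_singleton_iff]
      constructor
      · rintro ⟨hwB, z, hz, hFz⟩
        exact ⟨hwB, z, hz, hBG hwB, hFz⟩
      · rintro ⟨hwB, z, hz, _, hFz⟩
        exact ⟨hwB, z, hz, hFz⟩
  · by_cases hne : {w ∈ B | ∃ z ∈ D, F (z, w) ≠ 0} = ∅
    · exact Or.inl hne
    right
    obtain ⟨w₁, hw₁B, z₁, hz₁D, hF1⟩ := Set.nonempty_iff_ne_empty.2 hne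
    intro w hw
    rw [Metric.mem_closure_iff]
    intro ε hε
    set v : EuclideanSpace ℂ (Fin n) := w₁ - w with hv
    set φ : ℂ → (Fin m → ℂ) × EuclideanSpace ℂ (Fin n) := fun t => (z₁, w + t • v) with hφ
    set h : ℂ → ℂ := fun t => F (φ t) with hh
    have hφdiff : Differentiable ℂ φ :=
      Differentiable.prodMk (differentiable_const _) ((differentiable_const w).add (differentiable_id.smul_const v))
    set S : Set ℂ := φ ⁻¹' (D ×ˢ G) with hS
    have hSopen : IsOpen S := (hDo.prod hGo).preimage hφdiff.continuous
    have hhd : DifferentiableOn ℂ h S := hF.comp hφdiff.differentiableOn (fun t ht => ht)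
    -- segment points lie in B
    have hseg : ∀ t : ℝ, t ∈ Set.Icc (0:ℝ) 1 → w + (t : ℂ) • v ∈ B := by
      intro t ht
      have hc : Convex ℝ B := hB ▸ convex_closedBall w₀ ρ
      have : (1 - t) • w + t • w₁ ∈ B :=
        hc hw hw₁B (by linarith [ht.2]) ht.1 (by ring)
      have he : w + (t : ℂ) • v = (1 - t) • w + t • w₁ := by
        rw [show ((t : ℂ)) • v = t • v from Complex.coe_smul t v, hv]
        module
      rwa [he]
    have hsegS : ∀ t : ℝ, t ∈ Set.Icc (0:ℝ) 1 → ((t : ℂ)) ∈ S := by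
      intro t ht
      exact ⟨hz₁D, hBG (hseg t ht)⟩
    -- the real segment [0,1] in ℂ
    set T : Set ℂ := (fun t : ℝ => (t : ℂ)) '' Set.Icc 0 1 with hT
    have hTconn : IsPreconnected T :=
      (isPreconnected_Icc).image _ Complex.continuous_ofReal.continuousOn
    have hTS : T ⊆ S := by rintro x ⟨t, ht, rfl⟩; exact hsegS t ht
    have h1T : (1 : ℂ) ∈ T := ⟨1, ⟨zero_le_one, le_refl 1⟩, by norm_num⟩
    have h0T : (0 : ℂ) ∈ T := ⟨0, ⟨le_refl 0, zero_le_one⟩, by norm_num⟩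
    set U₀ : Set ℂ := connectedComponentIn S 1 with hU₀
    have hTU₀ : T ⊆ U₀ := hTconn.subset_connectedComponentIn h1T hTS
    have hU₀open : IsOpen U₀ := hSopen.connectedComponentIn
    have hU₀S : U₀ ⊆ S := connectedComponentIn_subset S 1
    have hana : AnalyticOnNhd ℂ h U₀ := (hhd.mono hU₀S).analyticOnNhd hU₀open
    have h1 : h 1 ≠ 0 := by
      have he : w + (1 : ℂ) • v = w₁ := by rw [hv]; module
      show F (z₁, w + (1 : ℂ) • v) ≠ 0
      rw [he]; exact hF1
    have hev : ∀ᶠ t in nhdsWithin (0:ℂ) {(0:ℂ)}ᶜ, h t ≠ 0 := by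
      by_contra hcon
      have hfreq : ∃ᶠ t in nhdsWithin (0:ℂ) {(0:ℂ)}ᶜ, h t = 0 := by
        rw [Filter.not_eventually] at hcon
        exact hcon.mono fun t ht => not_not.mp ht
      have := hana.eqOn_zero_of_preconnected_of_frequently_eq_zero
        isPreconnected_connectedComponentIn (hTU₀ h0T) hfreq
      exact h1 (this (hTU₀ h1T))
    obtain ⟨s, hsmem, hs⟩ := Filter.eventually_iff_exists_mem.mp hev
    obtain ⟨δ, hδpos, hδ⟩ := Metric.mem_nhdsWithin_iff.mp hsmem
    set t0 : ℝ := min (δ / 2) (min 1 (ε / (‖v‖ + 1))) with ht0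
    have hvpos : (0:ℝ) < ‖v‖ + 1 := by positivity
    have ht0pos : 0 < t0 := by
      apply lt_min (by linarith) (lt_min one_pos (by positivity))
    have ht0le1 : t0 ≤ 1 := le_trans (min_le_right _ _) (min_le_left _ _)
    have ht0δ : t0 < δ := lt_of_le_of_lt (min_le_left _ _) (by linarith)
    have ht0ε : t0 * ‖v‖ < ε := by
      have h1' : t0 ≤ ε / (‖v‖ + 1) := le_trans (min_le_right _ _) (min_le_right _ _)
      have h2' : t0 * (‖v‖ + 1) ≤ ε := by
        rw [← le_div_iff₀ hvpos]; exact h1'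
      nlinarith [norm_nonneg v]
    have htS : ((t0 : ℂ)) ∈ s := by
      apply hδ
      constructor
      · rw [Metric.mem_ball]
        simp only [dist_zero_right, Complex.norm_real]
        rw [Real.norm_eq_abs, abs_of_pos ht0pos]; exact ht0δ
      · simp only [Set.mem_compl_iff, Set.mem_singleton_iff]
        exact_mod_cast ne_of_gt ht0pos
    have hbB : w + ((t0:ℝ) : ℂ) • v ∈ B := hseg t0 ⟨le_of_lt ht0pos, ht0le1⟩
    refine ⟨w + ((t0:ℝ) : ℂ) • v, ⟨hbB, z₁, hz₁D, hs _ htS⟩, ?_⟩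
    rw [dist_self_add_right, norm_smul, Complex.norm_real, Real.norm_eq_abs,
      abs_of_pos ht0pos]
    exact ht0ε
end
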